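/- arXiv:2009.09141 — 12 statements merged into one kernel-verified Lean document; each statement's English description precedes it below -/
import Mathlib

section
/- Let (S, μ) be a measure space, D ⊆ S a measurable set, and K : S × S → ℂ a kernel such that for every k ≥ 1 and all points x_1, …, x_k ∈ S the matrix (K(x_i, x_j))_{1 ≤ i, j ≤ k} is Hermitian positive semidefinite (so in particular K(x,x) is real and nonnegative and all these determinants are real and nonnegative). Assume x ↦ K(x,x) is integrable on D. Then for every k ≥ 1, ∫_{D^k} det((K(x_i, x_j))_{1 ≤ i,j ≤ k}) dμ^{⊗k}(x_1, …, x_k) ≤ (∫_D K(x,x) dμ(x))^k. -/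
open MeasureTheory ComplexOrder

section Aux

open Matrix Finset


lemma diag_nn {n : Type*} [Fintype n] [DecidableEq n] {M : Matrix n n ℂ} (hM : M.PosSemidef)
    (i : n) : 0 ≤ M i i := by
  exact hM.diag_nonneg

lemma tr_eig {n : Type*} [Fintype n] [DecidableEq n] {M : Matrix n n ℂ} (hM : M.IsHermitian) :
    M.trace = ∑ i, (hM.eigenvalues i : ℂ) := by
  exact hM.trace_eq_sum_eigenvalues

lemma amgm {k : ℕ} (hk : 1 ≤ k) (μ : Fin k → ℝ) (h0 : ∀ i, 0 ≤ μ i)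
    (hsum : ∑ i, μ i = k) : ∏ i, μ i ≤ 1 := by
  have hk' : (0:ℝ) < k := by exact_mod_cast hk
  have h := Real.geom_mean_le_arith_mean_weighted Finset.univ (fun _ => 1 / k) μ
    (fun i _ => by positivity) (by simp [Finset.sum_const, Finset.card_univ]; field_simp)
    (fun i _ => h0 i)
  have h2 : (∏ i, μ i ^ (1 / (k:ℝ))) ^ k ≤ 1 ^ k := by
    apply pow_le_pow_left₀ (Finset.prod_nonneg fun i _ => Real.rpow_nonneg (h0 i) _)
    calc ∏ i, μ i ^ (1 / (k:ℝ)) ≤ ∑ i, (1/(k:ℝ)) * μ i := h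
      _ = 1 := by rw [← Finset.mul_sum, hsum]; field_simp
  calc ∏ i, μ i = (∏ i, μ i ^ (1 / (k:ℝ))) ^ k := by
        rw [← Finset.prod_pow]
        refine Finset.prod_congr rfl fun i _ => ?_
        rw [← Real.rpow_natCast (μ i ^ (1/(k:ℝ))), ← Real.rpow_mul (h0 i)]
        field_simp
        simp
    _ ≤ 1 := by simpa using h2

lemma hadamard {k : ℕ} (hk : 1 ≤ k) {M : Matrix (Fin k) (Fin k) ℂ} (hM : M.PosSemidef) :
    (M.det).re ≤ ∏ i, (M i i).re := by
  set d : Fin k → ℝ := fun i => (M i i).re with hd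
  have hd0 : ∀ i, 0 ≤ d i := fun i => (Complex.le_def.mp (diag_nn hM i)).1
  have hdiag : ∀ i, M i i = (d i : ℂ) := by
    intro i
    have h := diag_nn hM i
    rw [Complex.le_def] at h
    exact Complex.ext rfl h.2.symm
  by_cases hpos : ∀ i, 0 < d i
  · -- normalize
    set c : Fin k → ℝ := fun i => (Real.sqrt (d i))⁻¹ with hc
    have hc0 : ∀ i, 0 < c i := fun i => inv_pos.mpr (Real.sqrt_pos.mpr (hpos i))
    set C : Matrix (Fin k) (Fin k) ℂ := diagonal (fun i => (c i : ℂ)) with hC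
    have hCH : Cᴴ = C := by
      have hst : (star fun i => ((c i : ℂ))) = fun i => ((c i : ℂ)) := by
        funext i
        exact Complex.conj_ofReal _
      rw [hC, diagonal_conjTranspose, hst]
    set N : Matrix (Fin k) (Fin k) ℂ := C * M * Cᴴ with hN
    have hNpsd : N.PosSemidef := hM.mul_mul_conjTranspose_same C
    have hreal : ∀ i, c i * d i * c i = 1 := by
      intro i
      rw [hc]
      have hs : Real.sqrt (d i) * Real.sqrt (d i) = d i := Real.mul_self_sqrt (hd0 i)
      have hsne : Real.sqrt (d i) ≠ 0 := (Real.sqrt_pos.mpr (hpos i)).ne'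
      field_simp
      exact (Real.sq_sqrt (hd0 i)).symm
    have hNdiag : ∀ i, N i i = 1 := by
      intro i
      rw [hN, hCH, hC]
      simp only [mul_diagonal, diagonal_mul]
      rw [hdiag i]
      push_cast [← Complex.ofReal_mul]
      exact_mod_cast congrArg (Complex.ofReal) (hreal i)
    have htr : N.trace = (k : ℂ) := by
      rw [Matrix.trace]
      simp only [Matrix.diag_apply, hNdiag]
      simp
    set ν : Fin k → ℝ := hNpsd.1.eigenvalues with hν
    have hν0 : ∀ i, 0 ≤ ν i := hNpsd.eigenvalues_nonneg
    have hνsum : ∑ i, ν i = k := by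
      have h := tr_eig hNpsd.1
      rw [htr] at h
      exact_mod_cast h.symm
    have hdetN : (N.det).re = ∏ i, ν i := by
      have h := hNpsd.1.det_eq_prod_eigenvalues
      have h2 : N.det = ((∏ i, ν i : ℝ) : ℂ) := by
        rw [h, Complex.ofReal_prod]
        rfl
      rw [h2, Complex.ofReal_re]
    have hdetNle : (N.det).re ≤ 1 := hdetN ▸ amgm hk ν hν0 hνsum
    set P : ℝ := ∏ i, c i with hP
    have hP0 : 0 < P := Finset.prod_pos fun i _ => hc0 i
    have hdetC : C.det = (P : ℂ) := by
      rw [hC, det_diagonal, hP]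
      push_cast
      rfl
    have hrel : (N.det).re = (P * P) * (M.det).re := by
      have : (↑P * M.det * ↑P : ℂ) = ((P * P : ℝ) : ℂ) * M.det := by
        push_cast
        ring
      rw [hN, hCH, det_mul, det_mul, hdetC, this]
      simp [Complex.mul_re]
    have hPd : (P * P) * ∏ i, d i = 1 := by
      rw [hP, ← Finset.prod_mul_distrib, ← Finset.prod_mul_distrib]
      rw [Finset.prod_eq_one]
      intro i _
      rw [← hreal i]; ring
    have h1 : (P * P) * (M.det).re ≤ 1 := hrel ▸ hdetNle
    have h2 := mul_le_mul_of_nonneg_left h1 (Finset.prod_nonneg (s := Finset.univ) fun i _ => hd0 i)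
    calc (M.det).re = (∏ i, d i) * ((P * P) * (M.det).re) := by
          rw [← mul_assoc, mul_comm (∏ i, d i) (P*P), hPd, one_mul]
      _ ≤ (∏ i, d i) * 1 := h2
      _ = ∏ i, d i := mul_one _
  · push_neg at hpos
    obtain ⟨i, hi⟩ := hpos
    have hdi : d i = 0 := le_antisymm hi (hd0 i)
    have hMii : M i i = 0 := by rw [hdiag i, hdi, Complex.ofReal_zero]
    have hcol : M *ᵥ Pi.single i 1 = 0 := by
      apply (hM.dotProduct_mulVec_zero_iff (Pi.single i 1)).mp
      simpa [mulVec_single, dotProduct, Pi.single_apply, apply_ite] using hMii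
    have hdet : M.det = 0 := by
      apply Matrix.det_eq_zero_of_column_eq_zero i
      intro j
      have := congrFun hcol j
      simpa [mulVec_single, mulVec, dotProduct, Pi.single_apply, apply_ite] using this
    rw [hdet]
    simpa using Finset.prod_nonneg fun j _ => hd0 j

lemma det_re_nn {k : ℕ} {M : Matrix (Fin k) (Fin k) ℂ} (hM : M.PosSemidef) :
    0 ≤ (M.det).re := by
  have h := hM.1.det_eq_prod_eigenvalues
  have h2 : M.det = ((∏ i, hM.1.eigenvalues i : ℝ) : ℂ) := by
    rw [h, Complex.ofReal_prod]
    rfl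
  rw [h2, Complex.ofReal_re]
  exact Finset.prod_nonneg fun i _ => hM.eigenvalues_nonneg i

lemma pi_restrict {S : Type*} [MeasurableSpace S] (μ : Measure S) [SigmaFinite μ]
    (D : Set S) (hD : MeasurableSet D) (k : ℕ) :
    (Measure.pi fun _ : Fin k => μ).restrict (Set.univ.pi fun _ => D)
      = Measure.pi (fun _ : Fin k => μ.restrict D) := by
  refine (Measure.pi_eq fun s hs => ?_).symm
  rw [Measure.restrict_apply (MeasurableSet.univ_pi hs)]
  have hins : (Set.univ.pi s) ∩ (Set.univ.pi fun _ => D)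
      = Set.univ.pi (fun i => s i ∩ D) := by
    rw [← Set.pi_inter_distrib]
  rw [hins, Measure.pi_pi]
  exact Finset.prod_congr rfl fun i _ => (Measure.restrict_apply (hs i)).symm


end Aux

open Matrix Finset in
theorem stmt_0 {S : Type*} [MeasurableSpace S] (μ : Measure S) [SigmaFinite μ]
    (D : Set S) (hD : MeasurableSet D) (K : S → S → ℂ)
    (hpsd : ∀ (k : ℕ), 1 ≤ k → ∀ x : Fin k → S,
      (Matrix.of fun i j => K (x i) (x j)).PosSemidef)
    (hint : IntegrableOn (fun x => (K x x).re) D μ) :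
    ∀ (k : ℕ), 1 ≤ k →
      (∫ x in Set.univ.pi (fun _ : Fin k => D),
          (Matrix.det (Matrix.of fun i j => K (x i) (x j))).re
          ∂(Measure.pi fun _ : Fin k => μ))
        ≤ (∫ x in D, (K x x).re ∂μ) ^ k := by
  intro k hk
  rw [show (∫ x in Set.univ.pi (fun _ : Fin k => D),
          (Matrix.det (Matrix.of fun i j => K (x i) (x j))).re
          ∂(Measure.pi fun _ : Fin k => μ))
      = ∫ x, (Matrix.det (Matrix.of fun i j => K (x i) (x j))).re
          ∂(Measure.pi fun _ : Fin k => μ.restrict D) from by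
    rw [← pi_restrict μ D hD k]]
  letI : MeasureSpace S := ⟨μ.restrict D⟩
  haveI : SigmaFinite (volume : Measure S) := Restrict.sigmaFinite μ D
  have hvol : (Measure.pi fun _ : Fin k => μ.restrict D)
      = (volume : Measure (Fin k → S)) := rfl
  have hgint : Integrable (fun x : Fin k → S => ∏ i, (K (x i) (x i)).re) := by
    exact Integrable.fintype_prod (f := fun _ : Fin k => fun x => (K x x).re)
      (fun i => hint)
  have hle : ∫ x, (Matrix.det (Matrix.of fun i j => K (x i) (x j))).re
        ∂(Measure.pi fun _ : Fin k => μ.restrict D)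
      ≤ ∫ x : Fin k → S, ∏ i, (K (x i) (x i)).re := by
    rw [hvol]
    refine integral_mono_of_nonneg (ae_of_all _ fun x => det_re_nn (hpsd k hk x)) hgint
      (ae_of_all _ fun x => ?_)
    have := hadamard hk (hpsd k hk x)
    simpa [Matrix.of_apply] using this
  refine hle.trans ?_
  rw [← hvol, MeasureTheory.integral_fintype_prod_eq_pow (ι := Fin k) (fun x => (K x x).re),
    Fintype.card_fin]
end

section
/- Let (S, μ) be a measure space and let φ_1, …, φ_n : S → ℂ be measurable functions that are orthonormal, i.e. ∫_S φ_i(x) · conj(φ_j(x)) dμ(x) = δ_{ij} for all 1 ≤ i, j ≤ n. Define the kernel K(x,y) = Σ_{i=1}^n φ_i(x) · conj(φ_i(y)). Then ∫_{S^n} det((K(x_i, x_j))_{1 ≤ i,j ≤ n}) dμ^{⊗n}(x_1, …, x_n) = n!. -/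
open MeasureTheory

theorem stmt_1 {S : Type*} [MeasurableSpace S] (μ : Measure S) [SigmaFinite μ]
    (n : ℕ) (φ : Fin n → S → ℂ) (hmeas : ∀ i, Measurable (φ i))
    (horth : ∀ i j, ∫ x, φ i x * (starRingEnd ℂ) (φ j x) ∂μ = if i = j then 1 else 0) :
    ∫ x : Fin n → S,
        Matrix.det (Matrix.of fun i j : Fin n =>
          ∑ k : Fin n, φ k (x i) * (starRingEnd ℂ) (φ k (x j)))
        ∂(Measure.pi fun _ : Fin n => μ) = (n.factorial : ℂ) := by
  letI : MeasureSpace S := ⟨μ⟩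
  -- integrability of the pairwise products
  have hm : ∀ i j, Measurable (fun x => φ i x * (starRingEnd ℂ) (φ j x)) :=
    fun i j => (hmeas i).mul ((Complex.continuous_conj.measurable).comp (hmeas j))
  have hsq : ∀ i, Integrable (fun x => ‖φ i x‖ ^ 2) μ := by
    intro i
    have h1 : Integrable (fun x => φ i x * (starRingEnd ℂ) (φ i x)) μ := by
      by_contra h
      have := horth i i
      rw [integral_undef h] at this
      simp at this
    refine h1.norm.congr (Filter.Eventually.of_forall fun x => ?_)
    simp [map_mul, Complex.norm_conj, sq]
  have hint : ∀ i j, Integrable (fun x => φ i x * (starRingEnd ℂ) (φ j x)) μ := by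
    intro i j
    refine Integrable.mono' (((hsq i).add (hsq j)).div_const 2)
      (hm i j).aestronglyMeasurable (Filter.Eventually.of_forall fun x => ?_)
    have : ‖φ i x * (starRingEnd ℂ) (φ j x)‖ = ‖φ i x‖ * ‖φ j x‖ := by
      simp [map_mul, Complex.norm_conj]
    rw [this]
    simp only [Pi.add_apply]
    nlinarith [sq_nonneg (‖φ i x‖ - ‖φ j x‖), norm_nonneg (φ i x), norm_nonneg (φ j x)]
  -- expand the determinant as a double sum over permutations
  have hdet : ∀ x : Fin n → S,
      Matrix.det (Matrix.of fun i j : Fin n =>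
          ∑ k : Fin n, φ k (x i) * (starRingEnd ℂ) (φ k (x j)))
      = ∑ σ : Equiv.Perm (Fin n), ∑ τ : Equiv.Perm (Fin n),
          ((Equiv.Perm.sign σ : ℤ) : ℂ) * ((Equiv.Perm.sign τ : ℤ) : ℂ) *
            ∏ j : Fin n, (φ (σ⁻¹ j) (x j) * (starRingEnd ℂ) (φ (τ j) (x j))) := by
    intro x
    have hAB : (Matrix.of fun i j : Fin n =>
          ∑ k : Fin n, φ k (x i) * (starRingEnd ℂ) (φ k (x j)))
        = (Matrix.of fun i k : Fin n => φ k (x i)) *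
          (Matrix.of fun k j : Fin n => (starRingEnd ℂ) (φ k (x j))) := by
      ext i j; simp [Matrix.mul_apply]
    rw [hAB, Matrix.det_mul, Matrix.det_apply, Matrix.det_apply, Finset.sum_mul_sum]
    refine Finset.sum_congr rfl fun σ _ => Finset.sum_congr rfl fun τ _ => ?_
    simp only [Matrix.of_apply, Units.smul_def, zsmul_eq_mul]
    have h1 : ∏ i : Fin n, φ i (x (σ i)) = ∏ j : Fin n, φ (σ⁻¹ j) (x j) := by
      rw [← Equiv.prod_comp σ⁻¹ (fun i => φ i (x (σ i)))]
      simp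
    rw [Finset.prod_mul_distrib, h1]
    ring
  -- integrability of each summand over the product measure
  have hIprod : ∀ σ τ : Equiv.Perm (Fin n),
      Integrable (fun x : Fin n → S =>
        ∏ j : Fin n, (φ (σ⁻¹ j) (x j) * (starRingEnd ℂ) (φ (τ j) (x j))))
        (Measure.pi fun _ : Fin n => μ) := by
    intro σ τ
    exact Integrable.fintype_prod (f := fun j s => φ (σ⁻¹ j) s * (starRingEnd ℂ) (φ (τ j) s))
      (fun j => hint _ _)
  simp_rw [hdet]
  rw [integral_finset_sum _ (fun σ _ => integrable_finset_sum _
    (fun τ _ => ((hIprod σ τ).const_mul _)))]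
  rw [Finset.sum_congr rfl fun σ _ => integral_finset_sum _
    (fun τ _ => ((hIprod σ τ).const_mul _))]
  have key : ∀ σ τ : Equiv.Perm (Fin n),
      ∫ x : Fin n → S,
          ((Equiv.Perm.sign σ : ℤ) : ℂ) * ((Equiv.Perm.sign τ : ℤ) : ℂ) *
            ∏ j : Fin n, (φ (σ⁻¹ j) (x j) * (starRingEnd ℂ) (φ (τ j) (x j)))
          ∂(Measure.pi fun _ : Fin n => μ)
      = ((Equiv.Perm.sign σ : ℤ) : ℂ) * ((Equiv.Perm.sign τ : ℤ) : ℂ) *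
          (if τ = σ⁻¹ then 1 else 0) := by
    intro σ τ
    rw [integral_const_mul]
    congr 1
    have := integral_fintype_prod_eq_prod (𝕜 := ℂ) (ι := Fin n) (μ := fun _ => (volume : Measure S))
      (f := fun j s => φ (σ⁻¹ j) s * (starRingEnd ℂ) (φ (τ j) s))
    rw [show (Measure.pi fun _ : Fin n => μ) = (volume : Measure (Fin n → S)) from rfl]
    erw [this]
    rw [show (volume : Measure S) = μ from rfl]
    simp_rw [horth]
    by_cases h : τ = σ⁻¹
    · subst h
      simp
    · rw [if_neg h]
      obtain ⟨j, hj⟩ : ∃ j, τ j ≠ σ⁻¹ j := by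
        by_contra hc
        push_neg at hc
        exact h (Equiv.ext hc)
      refine Finset.prod_eq_zero (Finset.mem_univ j) ?_
      rw [if_neg (fun he => hj he.symm)]
  simp_rw [key]
  have : ∀ σ : Equiv.Perm (Fin n),
      ∑ τ : Equiv.Perm (Fin n),
        ((Equiv.Perm.sign σ : ℤ) : ℂ) * ((Equiv.Perm.sign τ : ℤ) : ℂ) *
          (if τ = σ⁻¹ then 1 else 0) = 1 := by
    intro σ
    rw [Finset.sum_eq_single σ⁻¹]
    · rw [if_pos rfl, Equiv.Perm.sign_inv, mul_one]
      rcases Int.units_eq_one_or (Equiv.Perm.sign σ) with h | h <;> simp [h]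
    · intro τ _ hτ; rw [if_neg hτ, mul_zero]
    · intro h; exact absurd (Finset.mem_univ _) h
  simp_rw [this]
  simp [Fintype.card_perm]
end

section
/- Let (S, μ) be a measure space and let φ_1, …, φ_n : S → ℂ be measurable functions that are orthonormal, i.e. ∫_S φ_i(x) · conj(φ_j(x)) dμ(x) = δ_{ij} for all 1 ≤ i, j ≤ n. Define the kernel K(x,y) = Σ_{i=1}^n φ_i(x) · conj(φ_i(y)). Then for every fixed (x_1, …, x_{n-1}) ∈ S^{n-1}, ∫_S det((K(x_i, x_j))_{1 ≤ i,j ≤ n}) dμ(x_n) = det((K(x_i, x_j))_{1 ≤ i,j ≤ n-1}). -/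
open MeasureTheory
open scoped ENNReal

theorem stmt_2 {S : Type*} [MeasurableSpace S] (μ : Measure S) [SigmaFinite μ]
    (n : ℕ) (φ : Fin (n + 1) → S → ℂ) (hmeas : ∀ i, Measurable (φ i))
    (horth : ∀ i j, ∫ x, φ i x * (starRingEnd ℂ) (φ j x) ∂μ = if i = j then 1 else 0)
    (K : S → S → ℂ)
    (hK : ∀ x y, K x y = ∑ k : Fin (n + 1), φ k x * (starRingEnd ℂ) (φ k y))
    (x : Fin n → S) :
    ∫ t, Matrix.det (Matrix.of fun i j : Fin (n + 1) =>
        K ((Fin.snoc x t : Fin (n + 1) → S) i) ((Fin.snoc x t : Fin (n + 1) → S) j)) ∂μ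
      = Matrix.det (Matrix.of fun i j : Fin n => K (x i) (x j)) := by
  classical
  have hL2 : ∀ i, MemLp (φ i) 2 μ := by
    intro i
    have h1 : Integrable (fun t => φ i t * (starRingEnd ℂ) (φ i t)) μ := by
      by_contra h
      have := horth i i
      rw [integral_undef h, if_pos rfl] at this
      exact zero_ne_one this
    have h2 : Integrable (fun t => ‖φ i t‖ ^ 2) μ := by
      simpa [Complex.mul_conj, Complex.normSq_eq_norm_sq,
        ← Complex.ofReal_pow, Complex.ofReal_re] using h1.re
    exact (memLp_two_iff_integrable_sq_norm (hmeas i).aestronglyMeasurable).mpr h2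
  have hconjmeas : ∀ i, Measurable (fun t => (starRingEnd ℂ) (φ i t)) := fun i =>
    (Complex.conjLIE : ℂ ≃ₗᵢ[ℝ] ℂ).continuous.measurable.comp (hmeas i)
  have hconjL2 : ∀ i, MemLp (fun t => (starRingEnd ℂ) (φ i t)) 2 μ := by
    intro i
    refine MemLp.of_le_mul (c := 1) (hL2 i) (hconjmeas i).aestronglyMeasurable ?_
    filter_upwards with t
    rw [one_mul]
    exact le_of_eq (RCLike.norm_conj _)
  have hmul : ∀ k l, Integrable (fun t => φ k t * (starRingEnd ℂ) (φ l t)) μ := by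
    intro k l
    have h12 : (1 : ℝ≥0∞) / 1 = 1 / 2 + 1 / 2 := by
      rw [ENNReal.div_add_div_same, one_div_one]
      norm_num
      rw [ENNReal.div_self] <;> norm_num
    have := (hL2 k).smul (hconjL2 l) (r := 1) (hpqr := ⟨by simpa only [one_div] using h12.symm⟩)
    rw [memLp_one_iff_integrable] at this
    refine this.congr ?_
    filter_upwards with t
    simp [mul_comm]
  rcases n with _ | m
  · -- n = 0
    simp only [Matrix.det_fin_zero]
    have h1 : ∀ t : S, (Matrix.of fun i j : Fin 1 =>
        K ((Fin.snoc x t : Fin 1 → S) i) ((Fin.snoc x t : Fin 1 → S) j)).det = K t t := by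
      intro t
      rw [Matrix.det_fin_one]
      simp [Fin.snoc]
    simp only [h1]
    have h2 : ∀ t : S, K t t = φ 0 t * (starRingEnd ℂ) (φ 0 t) := by
      intro t; rw [hK]; simp
    simp only [h2]
    rw [horth 0 0, if_pos rfl]
  set Kmat : Matrix (Fin (m + 1)) (Fin (m + 1)) ℂ := Matrix.of fun i j => K (x i) (x j) with hKmat
  set E : Fin (m + 1) → Fin (m + 1) → ℂ := fun i j => (Kmat.submatrix i.succAbove j.succAbove).det with hE
  have hdet : ∀ t : S,
      (Matrix.of fun i j : Fin (m + 2) =>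
        K ((Fin.snoc x t : Fin (m + 2) → S) i) ((Fin.snoc x t : Fin (m + 2) → S) j)).det
      = K t t * Kmat.det
        + ∑ j : Fin (m + 1), ∑ i : Fin (m + 1),
            ((-1 : ℂ) ^ ((j : ℕ) + 1 + (i : ℕ)) * E i j) * (K t (x j) * K (x i) t) := by
    intro t
    set N : Matrix (Fin (m + 2)) (Fin (m + 2)) ℂ :=
      Matrix.of fun i j => K ((Fin.cons t x : Fin (m + 2) → S) i) ((Fin.cons t x : Fin (m + 2) → S) j) with hN
    have hcons : ∀ i : Fin (m + 2), (Fin.cons t x : Fin (m + 2) → S) (finRotate (m + 2) i) = (Fin.snoc x t : Fin (m + 2) → S) i := by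
      intro i
      refine Fin.lastCases ?_ (fun j => ?_) i
      · simp [finRotate_last]
      · have : finRotate (m + 2) (Fin.castSucc j) = j.succ := by
          rw [finRotate_succ_apply, Fin.coeSucc_eq_succ]
        simp [this]
    have hre : (Matrix.of fun i j : Fin (m + 2) =>
        K ((Fin.snoc x t : Fin (m + 2) → S) i) ((Fin.snoc x t : Fin (m + 2) → S) j))
        = N.submatrix (finRotate (m + 2)) (finRotate (m + 2)) := by
      ext i j
      rw [Matrix.submatrix_apply, hN]
      simp only [Matrix.of_apply]
      rw [hcons, hcons]
    rw [hre, Matrix.det_submatrix_equiv_self, Matrix.det_succ_row_zero, Fin.sum_univ_succ]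
    congr 1
    · have h1 : N.submatrix Fin.succ (Fin.succAbove 0) = Kmat := by
        ext i j
        simp [hN, Fin.succAbove_zero, hKmat]
      have h0 : N 0 0 = K t t := by simp [hN]
      simp only [Fin.val_zero, pow_zero, one_mul, h0, h1]
    · refine Finset.sum_congr rfl fun j _ => ?_
      have h2 : (N.submatrix Fin.succ (Fin.succ j).succAbove).det
          = ∑ i : Fin (m + 1), ((-1 : ℂ) ^ (i : ℕ) * K (x i) t) * E i j := by
        rw [Matrix.det_succ_column_zero]
        refine Finset.sum_congr rfl fun i _ => ?_
        have h3 : ((N.submatrix Fin.succ (Fin.succ j).succAbove).submatrix i.succAbove Fin.succ)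
            = Kmat.submatrix i.succAbove j.succAbove := by
          ext a b
          simp [hN, hKmat, Fin.succ_succAbove_succ]
        have h4 : (N.submatrix Fin.succ (Fin.succ j).succAbove) i 0 = K (x i) t := by
          simp [hN, Fin.succ_succAbove_zero]
        rw [h3, h4]
      have h5 : N 0 (Fin.succ j) = K t (x j) := by simp [hN]
      rw [h2, h5, Finset.mul_sum]
      refine Finset.sum_congr rfl fun i _ => ?_
      simp only [Fin.val_succ]
      ring
  -- integrability of the pieces
  have hKtt : Integrable (fun t => K t t) μ := by
    have heq : (fun t => K t t)
        = fun t => ∑ k : Fin (m + 2), φ k t * (starRingEnd ℂ) (φ k t) :=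
      funext fun t => hK t t
    rw [heq]
    exact integrable_finset_sum _ fun k _ => hmul k k
  have hgeq : ∀ i j : Fin (m + 1), (fun t => K t (x j) * K (x i) t)
      = fun t => ∑ k : Fin (m + 2), ∑ l : Fin (m + 2),
          ((starRingEnd ℂ) (φ k (x j)) * φ l (x i)) * (φ k t * (starRingEnd ℂ) (φ l t)) := by
    intro i j
    funext t
    rw [hK, hK, Finset.sum_mul_sum]
    exact Finset.sum_congr rfl fun k _ => Finset.sum_congr rfl fun l _ => by ring
  have hg : ∀ i j : Fin (m + 1), Integrable (fun t => K t (x j) * K (x i) t) μ := by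
    intro i j
    rw [hgeq i j]
    exact integrable_finset_sum _ fun k _ =>
      integrable_finset_sum _ fun l _ => (hmul k l).const_mul _
  -- values of the integrals
  have hint1 : ∫ t, K t t ∂μ = ((m : ℂ) + 2) := by
    have heq : (fun t => K t t)
        = fun t => ∑ k : Fin (m + 2), φ k t * (starRingEnd ℂ) (φ k t) :=
      funext fun t => hK t t
    rw [heq, integral_finset_sum _ fun k _ => hmul k k]
    simp [horth]
    ring
  have hint2 : ∀ i j : Fin (m + 1), ∫ t, K t (x j) * K (x i) t ∂μ = K (x i) (x j) := by
    intro i j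
    rw [hgeq i j,
      integral_finset_sum _ fun k _ =>
        integrable_finset_sum _ fun l _ => (hmul k l).const_mul _]
    have h6 : ∀ k : Fin (m + 2),
        ∫ t, ∑ l : Fin (m + 2),
          ((starRingEnd ℂ) (φ k (x j)) * φ l (x i)) * (φ k t * (starRingEnd ℂ) (φ l t)) ∂μ
        = (starRingEnd ℂ) (φ k (x j)) * φ k (x i) := by
      intro k
      rw [integral_finset_sum _ fun l _ => (hmul k l).const_mul _]
      have h7 : ∀ l : Fin (m + 2),
          ∫ t, ((starRingEnd ℂ) (φ k (x j)) * φ l (x i)) * (φ k t * (starRingEnd ℂ) (φ l t)) ∂μ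
          = ((starRingEnd ℂ) (φ k (x j)) * φ l (x i)) * (if k = l then 1 else 0) := by
        intro l
        rw [integral_const_mul, horth k l]
      simp only [h7]
      simp [Finset.sum_ite_eq, mul_comm]
    simp only [h6]
    rw [hK]
    exact Finset.sum_congr rfl fun k _ => by ring
  -- put it together
  have hsum_int : ∫ t, (K t t * Kmat.det
      + ∑ j : Fin (m + 1), ∑ i : Fin (m + 1),
          ((-1 : ℂ) ^ ((j : ℕ) + 1 + (i : ℕ)) * E i j) * (K t (x j) * K (x i) t)) ∂μ
      = ((m : ℂ) + 2) * Kmat.det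
        + ∑ j : Fin (m + 1), ∑ i : Fin (m + 1),
            ((-1 : ℂ) ^ ((j : ℕ) + 1 + (i : ℕ)) * E i j) * K (x i) (x j) := by
    rw [integral_add (hKtt.mul_const _)
        (integrable_finset_sum _ fun j _ =>
          integrable_finset_sum _ fun i _ => (hg i j).const_mul _),
      integral_mul_const, hint1,
      integral_finset_sum _ fun j _ =>
        integrable_finset_sum _ fun i _ => (hg i j).const_mul _]
    congr 1
    refine Finset.sum_congr rfl fun j _ => ?_
    rw [integral_finset_sum _ fun i _ => (hg i j).const_mul _]
    refine Finset.sum_congr rfl fun i _ => ?_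
    rw [integral_const_mul, hint2 i j]
  have hfinal : ∑ j : Fin (m + 1), ∑ i : Fin (m + 1),
      ((-1 : ℂ) ^ ((j : ℕ) + 1 + (i : ℕ)) * E i j) * K (x i) (x j)
      = -((m : ℂ) + 1) * Kmat.det := by
    have hcol : ∀ j : Fin (m + 1), ∑ i : Fin (m + 1),
        ((-1 : ℂ) ^ ((j : ℕ) + 1 + (i : ℕ)) * E i j) * K (x i) (x j) = -Kmat.det := by
      intro j
      rw [Matrix.det_succ_column Kmat j, ← Finset.sum_neg_distrib]
      refine Finset.sum_congr rfl fun i _ => ?_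
      have hexp : (j : ℕ) + 1 + (i : ℕ) = (i : ℕ) + (j : ℕ) + 1 := by ring
      have hKij : Kmat i j = K (x i) (x j) := rfl
      rw [hexp, pow_succ, hKij]
      ring
    simp only [hcol]
    simp [Finset.sum_const, Finset.card_univ]
    ring
  calc ∫ t, (Matrix.of fun i j : Fin (m + 2) =>
        K ((Fin.snoc x t : Fin (m + 2) → S) i) ((Fin.snoc x t : Fin (m + 2) → S) j)).det ∂μ
      = ∫ t, (K t t * Kmat.det
        + ∑ j : Fin (m + 1), ∑ i : Fin (m + 1),
            ((-1 : ℂ) ^ ((j : ℕ) + 1 + (i : ℕ)) * E i j) * (K t (x j) * K (x i) t)) ∂μ := by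
        exact integral_congr_ae (Filter.Eventually.of_forall fun t => hdet t)
    _ = ((m : ℂ) + 2) * Kmat.det
        + ∑ j : Fin (m + 1), ∑ i : Fin (m + 1),
            ((-1 : ℂ) ^ ((j : ℕ) + 1 + (i : ℕ)) * E i j) * K (x i) (x j) := hsum_int
    _ = ((m : ℂ) + 2) * Kmat.det + -((m : ℂ) + 1) * Kmat.det := by rw [hfinal]
    _ = Kmat.det := by ring
end

section
/- Let S be a set, let (Ω, ℱ, P) be a probability space, and for each x ∈ S let A_x ∈ ℱ be a measurable event (interpreted as the event that the point x belongs to a random subset X of S). Let K : S × S → ℂ and suppose that for every k ≥ 1 and all distinct x_1, …, x_k ∈ S, P(A_{x_1} ∩ ⋯ ∩ A_{x_k}) = det((K(x_i, x_j))_{1 ≤ i,j ≤ k}). Then for all m ≥ 1, all 0 ≤ k ≤ m, and all distinct x_1, …, x_m ∈ S, P(A_{x_1} ∩ ⋯ ∩ A_{x_k} ∩ A_{x_{k+1}}^c ∩ ⋯ ∩ A_{x_m}^c) = det((K̃(i,j))_{1 ≤ i,j ≤ m}), where K̃(i,j) = K(x_i, x_j) if i ≤ k and K̃(i,j) = δ_{ij}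 − K(x_i, x_j) if i ≥ k+1. -/
open MeasureTheory

private lemma stmt3_aux {S : Type*} {Ω : Type*} [MeasurableSpace Ω]
    (P : Measure Ω) [IsProbabilityMeasure P]
    (A : S → Set Ω) (hA : ∀ s, MeasurableSet (A s)) (K : S → S → ℂ)
    (hdet : ∀ (k : ℕ), 1 ≤ k → ∀ x : Fin k → S, Function.Injective x →
      ((P (⋂ i, A (x i))).toReal : ℂ)
        = Matrix.det (Matrix.of fun i j : Fin k => K (x i) (x j))) :
    ∀ (n m k : ℕ), 2 * m - k = n → k ≤ m → ∀ x : Fin m → S, Function.Injective x →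
      ((P (⋂ i : Fin m, if (i : ℕ) < k then A (x i) else (A (x i))ᶜ)).toReal : ℂ)
        = Matrix.det (Matrix.of fun i j : Fin m =>
            if (i : ℕ) < k then K (x i) (x j)
            else (if i = j then 1 else 0) - K (x i) (x j)) := by
  intro n
  induction n using Nat.strong_induction_on with
  | _ n ih =>
    intro m k hn hk x hx
    rcases Nat.eq_or_lt_of_le hk with heq | hlt
    · -- case k = m : all events are inclusions
      subst heq
      simp only [Fin.is_lt, if_true]
      rcases Nat.eq_zero_or_pos k with rfl | hk1
      · simp [Set.iInter_of_empty, Matrix.det_fin_zero]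
      · exact hdet k hk1 x hx
    · -- case k < m
      obtain ⟨m', rfl⟩ : ∃ m', m = m' + 1 := ⟨m - 1, by omega⟩
      have hklt : k < m' + 1 := hlt
      set p : Fin (m' + 1) := ⟨k, hklt⟩ with hp
      set y : Fin m' → S := x ∘ p.succAbove with hy
      have hyinj : Function.Injective y := hx.comp Fin.succAbove_right_injective
      have hσval : ∀ j : Fin m',
          ((p.succAbove j : Fin (m' + 1)) : ℕ) = if (j : ℕ) < k then (j : ℕ) else (j : ℕ) + 1 := by
        intro j
        rcases lt_or_ge (j : ℕ) k with h | h
        · rw [Fin.succAbove_of_castSucc_lt _ _ (by simpa [Fin.lt_def] using h)]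
          simp [h]
        · rw [Fin.succAbove_of_le_castSucc _ _ (by simpa [Fin.le_def] using h)]
          simp [Nat.not_lt.mpr h]
      have hσlt : ∀ j : Fin m', (((p.succAbove j : Fin (m' + 1)) : ℕ) < k ↔ (j : ℕ) < k) := by
        intro j; rw [hσval]; split <;> omega
      have hσlt' : ∀ j : Fin m', (((p.succAbove j : Fin (m' + 1)) : ℕ) < k + 1 ↔ (j : ℕ) < k) := by
        intro j; rw [hσval]; split <;> omega
      -- split an iInter at p
      have hsplit : ∀ C : Fin (m' + 1) → Set Ω, (⋂ i, C i) = C p ∩ ⋂ j, C (p.succAbove j) := by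
        intro C; ext ω
        simp only [Set.mem_iInter, Set.mem_inter_iff]
        exact Fin.forall_iff_succAbove p
      set F : Set Ω := ⋂ j : Fin m', (if (j : ℕ) < k then A (y j) else (A (y j))ᶜ) with hF
      have hTsplit :
          (⋂ i : Fin (m' + 1), if (i : ℕ) < k then A (x i) else (A (x i))ᶜ)
            = (A (x p))ᶜ ∩ F := by
        rw [hsplit]
        congr 1
        · simp [hp]
        · apply Set.iInter_congr; intro j
          rw [if_congr (hσlt j) rfl rfl]; rfl
      have hT'split :
          (⋂ i : Fin (m' + 1), if (i : ℕ) < k + 1 then A (x i) else (A (x i))ᶜ)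
            = A (x p) ∩ F := by
        rw [hsplit]
        congr 1
        · simp [hp]
        · apply Set.iInter_congr; intro j
          rw [if_congr (hσlt' j) rfl rfl]; rfl
      -- probability identity
      have hadd : P (F ∩ A (x p)) + P (F ∩ (A (x p))ᶜ) = P F := by
        rw [← Set.diff_eq]
        exact measure_inter_add_diff _ (hA _)
      have hfin : ∀ s : Set Ω, P s ≠ ⊤ := fun s => measure_ne_top P s
      have hPreal : (P (F ∩ (A (x p))ᶜ)).toReal = (P F).toReal - (P (F ∩ A (x p))).toReal := by
        have := congrArg ENNReal.toReal hadd
        rw [ENNReal.toReal_add (hfin _) (hfin _)] at this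
        linarith
      -- induction hypotheses
      have ihF : ((P F).toReal : ℂ)
          = Matrix.det (Matrix.of fun i j : Fin m' =>
              if (i : ℕ) < k then K (y i) (y j)
              else (if i = j then 1 else 0) - K (y i) (y j)) :=
        ih (2 * m' - k) (by omega) m' k rfl (by omega) y hyinj
      have ihT' : ((P (⋂ i : Fin (m' + 1), if (i : ℕ) < k + 1 then A (x i) else (A (x i))ᶜ)).toReal : ℂ)
          = Matrix.det (Matrix.of fun i j : Fin (m' + 1) =>
              if (i : ℕ) < k + 1 then K (x i) (x j)
              else (if i = j then 1 else 0) - K (x i) (x j)) :=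
        ih (2 * (m' + 1) - (k + 1)) (by omega) (m' + 1) (k + 1) rfl (by omega) x hx
      set M' : Matrix (Fin (m' + 1)) (Fin (m' + 1)) ℂ :=
        Matrix.of fun i j : Fin (m' + 1) =>
          if (i : ℕ) < k + 1 then K (x i) (x j)
          else (if i = j then 1 else 0) - K (x i) (x j) with hM'
      set e : Fin (m' + 1) → ℂ := fun j => if p = j then 1 else 0 with he
      set v : Fin (m' + 1) → ℂ := fun j => K (x p) (x j) with hv
      -- target matrix as row update of M'
      have hMeq : (Matrix.of fun i j : Fin (m' + 1) =>
            if (i : ℕ) < k then K (x i) (x j)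
            else (if i = j then 1 else 0) - K (x i) (x j))
          = M'.updateRow p (fun j => e j - v j) := by
        ext i j
        by_cases hi : i = p
        · subst hi
          rw [Matrix.updateRow_self]
          simp [hp, he, hv]
        · rw [Matrix.updateRow_ne hi]
          have hik : (i : ℕ) ≠ k := fun h => hi (Fin.ext h)
          have : ((i : ℕ) < k) ↔ ((i : ℕ) < k + 1) := by omega
          simp only [hM', Matrix.of_apply]
          by_cases h2 : (i : ℕ) < k
          · rw [if_pos h2, if_pos (this.mp h2)]
          · rw [if_neg h2, if_neg (fun h => h2 (this.mpr h))]
      -- determinant of row update with e equals minor determinant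
      have hrowv : M'.updateRow p v = M' := by
        have : v = M' p := by
          funext j; simp [hM', hv, hp]
        rw [this, Matrix.updateRow_eq_self]
      have hdetE : (M'.updateRow p e).det
          = Matrix.det (Matrix.of fun i j : Fin m' =>
              if (i : ℕ) < k then K (y i) (y j)
              else (if i = j then 1 else 0) - K (y i) (y j)) := by
        rw [Matrix.det_succ_row _ p]
        rw [Finset.sum_eq_single p]
        · rw [Matrix.updateRow_self]
          simp only [he, if_pos rfl]
          have hsub : ((M'.updateRow p e).submatrix p.succAbove p.succAbove)
              = Matrix.of fun i j : Fin m' =>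
                if (i : ℕ) < k then K (y i) (y j)
                else (if i = j then 1 else 0) - K (y i) (y j) := by
            ext i j
            rw [Matrix.submatrix_apply, Matrix.updateRow_ne (Fin.succAbove_ne p i)]
            simp only [hM', Matrix.of_apply]
            rw [if_congr (hσlt' i) rfl
              (by rw [if_congr Fin.succAbove_right_inj rfl rfl])]
            simp only [hy, Function.comp]
          rw [hsub]
          have : ((-1 : ℂ)) ^ ((p : ℕ) + (p : ℕ)) = 1 := by
            rw [← two_mul, pow_mul]; norm_num
          rw [this, one_mul, one_mul]
        · intro j _ hj
          rw [Matrix.updateRow_self]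
          simp [he, (Ne.symm hj)]
        · intro h; exact absurd (Finset.mem_univ p) h
      -- put it together
      rw [hTsplit, Set.inter_comm, hPreal]
      push_cast
      rw [hT'split] at ihT'
      rw [Set.inter_comm] at ihT'
      rw [ihF, ihT', hMeq]
      have hsubadd : (fun j => e j - v j) = e + (-1 : ℂ) • v := by
        funext j; simp [sub_eq_add_neg]
      rw [hsubadd, Matrix.det_updateRow_add, Matrix.det_updateRow_smul, hrowv, hdetE]
      ring

theorem stmt_3 {S : Type*} {Ω : Type*} [MeasurableSpace Ω]
    (P : Measure Ω) [IsProbabilityMeasure P]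
    (A : S → Set Ω) (hA : ∀ s, MeasurableSet (A s)) (K : S → S → ℂ)
    (hdet : ∀ (k : ℕ), 1 ≤ k → ∀ x : Fin k → S, Function.Injective x →
      ((P (⋂ i, A (x i))).toReal : ℂ)
        = Matrix.det (Matrix.of fun i j : Fin k => K (x i) (x j))) :
    ∀ (m k : ℕ), 1 ≤ m → k ≤ m → ∀ x : Fin m → S, Function.Injective x →
      ((P (⋂ i : Fin m, if (i : ℕ) < k then A (x i) else (A (x i))ᶜ)).toReal : ℂ)
        = Matrix.det (Matrix.of fun i j : Fin m =>
            if (i : ℕ) < k then K (x i) (x j)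
            else (if i = j then 1 else 0) - K (x i) (x j)) := by
  intro m k _ hk x hx
  exact stmt3_aux P A hA K hdet (2 * m - k) m k rfl hk x hx
end

section
/- Let S be a set, let (Ω, ℱ, P) be a probability space, and for each x ∈ S let A_x ∈ ℱ be a measurable event (the event that x belongs to a random subset X of S). Let K : S × S → ℂ and suppose that for every k ≥ 1 and all distinct x_1, …, x_k ∈ S, P(A_{x_1} ∩ ⋯ ∩ A_{x_k}) = det((K(x_i, x_j))_{1 ≤ i,j ≤ k}). Then for all k ≥ 1 and all distinct x_1, …, x_k ∈ S, P(A_{x_1}^c ∩ ⋯ ∩ A_{x_k}^c) = det(I_k − (K(x_i, x_j))_{1 ≤ i,j ≤ k}), where I_k is the k × k identity matrix. -/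
open MeasureTheory

section Aux
open Finset

lemma det_one_sub_eq_sum (k : ℕ) (M : Matrix (Fin k) (Fin k) ℂ) :
    ((1 : Matrix (Fin k) (Fin k) ℂ) - M).det
      = ∑ s : Finset (Fin k), (-1 : ℂ) ^ s.card *
          (M.submatrix (Subtype.val : {i // i ∈ s} → Fin k) Subtype.val).det := by
  classical
  have h1 : (1 : Matrix (Fin k) (Fin k) ℂ) - M = (-M) + 1 := by
    rw [sub_eq_neg_add]
  rw [h1]
  have h3 : ((-M) + 1 : Matrix (Fin k) (Fin k) ℂ).det
      = ∑ s : Finset (Fin k),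
          Matrix.det (s.piecewise (-M) (1 : Matrix (Fin k) (Fin k) ℂ)) :=
    (Matrix.detRowAlternating (n := Fin k) (R := ℂ)).toMultilinearMap.map_add_univ
      (-M) (1 : Matrix (Fin k) (Fin k) ℂ)
  rw [h3]
  refine Finset.sum_congr rfl fun s _ => ?_
  have hsub : Matrix.submatrix (s.piecewise (-M) (1 : Matrix (Fin k) (Fin k) ℂ))
        (Equiv.sumCompl (· ∈ s)) (Equiv.sumCompl (· ∈ s))
      = Matrix.fromBlocks ((-M).submatrix Subtype.val Subtype.val)
          ((-M).submatrix Subtype.val Subtype.val) 0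
          (1 : Matrix {i // i ∉ s} {i // i ∉ s} ℂ) := by
    ext i j
    cases i with
    | inl a =>
      cases j with
      | inl b => simp [Finset.piecewise, a.2, Matrix.submatrix]
      | inr b => simp [Finset.piecewise, a.2, Matrix.submatrix]
    | inr a =>
      cases j with
      | inl b =>
        have hab : (a : Fin k) ≠ (b : Fin k) := fun h => a.2 (h ▸ b.2)
        simp [Finset.piecewise, a.2, Matrix.submatrix, Matrix.one_apply, hab]
      | inr b =>
        rcases eq_or_ne a b with rfl | hab
        · simp [Finset.piecewise, a.2, Matrix.submatrix]
        · have hab' : (a : Fin k) ≠ (b : Fin k) := fun h => hab (Subtype.ext h)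
          simp [Finset.piecewise, a.2, Matrix.submatrix, Matrix.one_apply, hab, hab']
  have h4 : Matrix.det (s.piecewise (-M) (1 : Matrix (Fin k) (Fin k) ℂ))
      = ((-M).submatrix (Subtype.val : {i // i ∈ s} → Fin k) Subtype.val).det := by
    have := Matrix.det_submatrix_equiv_self (Equiv.sumCompl (· ∈ s))
      (s.piecewise (-M) (1 : Matrix (Fin k) (Fin k) ℂ))
    rw [hsub, Matrix.det_fromBlocks_zero₂₁, Matrix.det_one, mul_one] at this
    exact this.symm
  have hneg : ((-M).submatrix (Subtype.val : {i // i ∈ s} → Fin k)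
        (Subtype.val : {i // i ∈ s} → Fin k))
      = -(M.submatrix (Subtype.val : {i // i ∈ s} → Fin k)
        (Subtype.val : {i // i ∈ s} → Fin k)) := rfl
  refine h4.trans ?_
  rw [hneg, Matrix.det_neg, Fintype.card_coe]

lemma measure_iInter_compl_eq {Ω : Type*} [MeasurableSpace Ω]
    (P : Measure Ω) [IsProbabilityMeasure P] (k : ℕ)
    (B : Fin k → Set Ω) (hB : ∀ i, MeasurableSet (B i)) :
    (P (⋂ i, (B i)ᶜ)).toReal
      = ∑ s : Finset (Fin k), (-1 : ℝ) ^ s.card *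
          (P (⋂ i : {i // i ∈ s}, B i)).toReal := by
  classical
  have hmeas : ∀ t : Finset (Fin k), MeasurableSet (⋂ i : {i // i ∈ t}, B i) :=
    fun t => MeasurableSet.iInter fun i => hB i
  have hprod : ∀ (t : Finset (Fin k)) (ω : Ω),
      ∏ i ∈ t, Set.indicator (B i) (1 : Ω → ℝ) ω
        = Set.indicator (⋂ i : {i // i ∈ t}, B i) (1 : Ω → ℝ) ω := by
    intro t ω
    by_cases h : ω ∈ ⋂ i : {i // i ∈ t}, B i
    · rw [Set.indicator_of_mem h]
      refine Finset.prod_eq_one fun i hi => ?_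
      rw [Set.indicator_of_mem (Set.mem_iInter.mp h ⟨i, hi⟩)]
      rfl
    · rw [Set.indicator_of_notMem h]
      simp only [Set.mem_iInter] at h
      push_neg at h
      obtain ⟨i, hi⟩ := h
      exact Finset.prod_eq_zero i.2 (by rw [Set.indicator_of_notMem hi])
  have hfun : ∀ ω : Ω, Set.indicator (⋂ i, (B i)ᶜ) (1 : Ω → ℝ) ω
      = ∑ t : Finset (Fin k), (-1 : ℝ) ^ t.card *
          Set.indicator (⋂ i : {i // i ∈ t}, B i) (1 : Ω → ℝ) ω := by
    intro ω
    have h1 : Set.indicator (⋂ i, (B i)ᶜ) (1 : Ω → ℝ) ω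
        = ∏ i : Fin k, ((- Set.indicator (B i) (1 : Ω → ℝ) ω) + 1) := by
      by_cases h : ω ∈ ⋂ i, (B i)ᶜ
      · rw [Set.indicator_of_mem h]
        refine Eq.symm (Finset.prod_eq_one fun i _ => ?_)
        rw [Set.indicator_of_notMem (Set.mem_iInter.mp h i)]
        ring
      · rw [Set.indicator_of_notMem h]
        simp only [Set.mem_iInter, Set.mem_compl_iff] at h
        push_neg at h
        obtain ⟨i, hi⟩ := h
        refine Eq.symm (Finset.prod_eq_zero (Finset.mem_univ i) ?_)
        rw [Set.indicator_of_mem hi]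
        norm_num
    rw [h1, Finset.prod_add]
    rw [Finset.powerset_univ]
    refine Finset.sum_congr rfl fun t _ => ?_
    rw [Finset.prod_const_one, mul_one, ← hprod t ω]
    rw [show (fun i => - Set.indicator (B i) (1 : Ω → ℝ) ω)
        = (fun i => (-1 : ℝ) * Set.indicator (B i) (1 : Ω → ℝ) ω) from by funext i; ring]
    rw [Finset.prod_mul_distrib, Finset.prod_const]
  have hIcompl : MeasurableSet (⋂ i, (B i)ᶜ) := MeasurableSet.iInter fun i => (hB i).compl
  have hL : (P (⋂ i, (B i)ᶜ)).toReal
      = ∫ ω, Set.indicator (⋂ i, (B i)ᶜ) (1 : Ω → ℝ) ω ∂P :=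
    (integral_indicator_one hIcompl).symm
  rw [hL]
  have hInt : ∀ t : Finset (Fin k),
      Integrable (fun ω => (-1 : ℝ) ^ t.card *
        Set.indicator (⋂ i : {i // i ∈ t}, B i) (1 : Ω → ℝ) ω) P := by
    intro t
    exact ((integrable_const (1 : ℝ)).indicator (hmeas t)).const_mul _
  calc ∫ ω, Set.indicator (⋂ i, (B i)ᶜ) (1 : Ω → ℝ) ω ∂P
      = ∫ ω, ∑ t : Finset (Fin k), (-1 : ℝ) ^ t.card *
          Set.indicator (⋂ i : {i // i ∈ t}, B i) (1 : Ω → ℝ) ω ∂P := by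
        refine integral_congr_ae (Filter.Eventually.of_forall fun ω => ?_)
        exact hfun ω
    _ = ∑ t : Finset (Fin k), ∫ ω, (-1 : ℝ) ^ t.card *
          Set.indicator (⋂ i : {i // i ∈ t}, B i) (1 : Ω → ℝ) ω ∂P :=
        integral_finset_sum _ fun t _ => hInt t
    _ = ∑ t : Finset (Fin k), (-1 : ℝ) ^ t.card *
          (P (⋂ i : {i // i ∈ t}, B i)).toReal := by
        refine Finset.sum_congr rfl fun t _ => ?_
        rw [integral_const_mul, integral_indicator_one (hmeas t), measureReal_def]

end Aux


theorem stmt_4 {S : Type*} {Ω : Type*} [MeasurableSpace Ω]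
    (P : Measure Ω) [IsProbabilityMeasure P]
    (A : S → Set Ω) (hA : ∀ s, MeasurableSet (A s)) (K : S → S → ℂ)
    (hdet : ∀ (k : ℕ), 1 ≤ k → ∀ x : Fin k → S, Function.Injective x →
      ((P (⋂ i, A (x i))).toReal : ℂ)
        = Matrix.det (Matrix.of fun i j : Fin k => K (x i) (x j))) :
    ∀ (k : ℕ), 1 ≤ k → ∀ x : Fin k → S, Function.Injective x →
      ((P (⋂ i, (A (x i))ᶜ)).toReal : ℂ)
        = Matrix.det ((1 : Matrix (Fin k) (Fin k) ℂ)
            - Matrix.of fun i j : Fin k => K (x i) (x j)) := by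
  classical
  intro k hk x hx
  set M : Matrix (Fin k) (Fin k) ℂ := Matrix.of fun i j : Fin k => K (x i) (x j) with hM
  rw [det_one_sub_eq_sum k M]
  have hmeasure := measure_iInter_compl_eq P k (fun i => A (x i)) (fun i => hA (x i))
  have hcast : ((P (⋂ i, (A (x i))ᶜ)).toReal : ℂ)
      = ∑ s : Finset (Fin k), (-1 : ℂ) ^ s.card *
          ((P (⋂ i : {i // i ∈ s}, A (x i))).toReal : ℂ) := by
    rw [hmeasure]
    push_cast
    ring
  rw [hcast]
  refine Finset.sum_congr rfl fun s _ => ?_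
  congr 1
  rcases s.eq_empty_or_nonempty with rfl | hs
  · have h1 : (⋂ i : {i // i ∈ (∅ : Finset (Fin k))}, A (x i)) = Set.univ :=
      Set.iInter_of_empty _
    rw [h1, measure_univ]
    simp [Matrix.det_isEmpty]
  · have hcard : 1 ≤ s.card := Finset.card_pos.mpr hs
    let e : Fin s.card ≃o {i // i ∈ s} := s.orderIsoOfFin rfl
    let y : Fin s.card → S := fun j => x (e j)
    have hy : Function.Injective y := by
      intro a b hab
      exact e.injective (Subtype.ext (hx hab))
    have hd := hdet s.card hcard y hy
    have hset : (⋂ j, A (y j)) = ⋂ i : {i // i ∈ s}, A (x i) := by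
      ext ω
      simp only [Set.mem_iInter]
      constructor
      · intro h i
        have := h (e.symm i)
        simpa [y, OrderIso.apply_symm_apply] using this
      · intro h j
        exact h (e j)
    have hmat : (Matrix.of fun i j : Fin s.card => K (y i) (y j))
        = (M.submatrix (Subtype.val : {i // i ∈ s} → Fin k) Subtype.val).submatrix
            e.toEquiv e.toEquiv := rfl
    rw [hset] at hd
    rw [hd, hmat, Matrix.det_submatrix_equiv_self]
end

section
/- Let G = (V, E) be a finite connected simple graph with V = {1, …, n}, and fix an arbitrary orientation of the edges, i.e. for each edge e ∈ E an ordered pair (tail(e), head(e)) of its endpoints. Let A_G be the n × |E| matrix with A_G(v, e) = +1 if e starts at v (v = tail(e)), −1 if e ends at v (v = head(e)), and 0 if e is not incident to v. Let Ã_G be the (n−1) × |E| matrix obtained from A_G by deleting the last row. Then the number N(G) of spanning trees of G (spanning subgraphs which are trees) satisfies N(G) = det(Ã_G · Ã_G^T). -/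
open Finset Matrix

set_option linter.unusedSectionVars false

namespace MTT

variable {κ : Type*} [Fintype κ] [DecidableEq κ] {n : ℕ}

lemma det_expand (M : Matrix (Fin n) κ ℝ) :
    (M * Mᵀ).det = ∑ f : Fin n → κ, (∏ i, M i (f i)) * (M.submatrix id f).det := by
  rw [Matrix.det_apply']
  have h1 : ∀ σ : Equiv.Perm (Fin n),
      (∏ i, (M * Mᵀ) (σ i) i) = ∑ f : Fin n → κ, ∏ i, M (σ i) (f i) * M i (f i) := by
    intro σ
    simp only [Matrix.mul_apply, Matrix.transpose_apply]
    rw [Finset.prod_univ_sum, Fintype.piFinset_univ]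
  simp only [h1, Finset.mul_sum]
  rw [Finset.sum_comm]
  refine Finset.sum_congr rfl fun f _ => ?_
  rw [Matrix.det_apply', Finset.mul_sum]
  refine Finset.sum_congr rfl fun σ _ => ?_
  simp only [Finset.prod_mul_distrib, Matrix.submatrix_apply, id_eq]
  ring

lemma det_submatrix_noninj (M : Matrix (Fin n) κ ℝ) {f : Fin n → κ}
    (hf : ¬ Function.Injective f) : (M.submatrix id f).det = 0 := by
  simp only [Function.Injective, not_forall] at hf
  obtain ⟨i, j, hfij, hij⟩ := hf
  exact Matrix.det_zero_of_column_eq hij (fun k => by simp [Matrix.submatrix_apply, hfij])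

variable [LinearOrder κ]

/-- enumeration of a finset of card n -/
noncomputable def enum (S : Finset κ) (h : S.card = n) : Fin n → κ :=
  fun i => (S.orderIsoOfFin h i : κ)

lemma enum_injective (S : Finset κ) (h : S.card = n) : Function.Injective (enum S h) :=
  fun _ _ hij => (S.orderIsoOfFin h).injective (Subtype.val_injective hij)

lemma enum_mem (S : Finset κ) (h : S.card = n) (i : Fin n) : enum S h i ∈ S :=
  (S.orderIsoOfFin h i).2

lemma image_enum (S : Finset κ) (h : S.card = n) : Finset.image (enum S h) univ = S := by
  apply Finset.eq_of_subset_of_card_le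
  · intro x hx
    simp only [Finset.mem_image] at hx
    obtain ⟨i, _, rfl⟩ := hx
    exact enum_mem S h i
  · rw [h, Finset.card_image_of_injective _ (enum_injective S h)]
    simp

/-- the permutation relating an injective `f` into `S` to the canonical enumeration -/
noncomputable def toPerm (S : Finset κ) (h : S.card = n) (f : Fin n → κ)
    (hf : Function.Injective f) (hm : ∀ i, f i ∈ S) : Equiv.Perm (Fin n) :=
  Equiv.ofBijective (fun i => (S.orderIsoOfFin h).symm ⟨f i, hm i⟩)
    (Finite.injective_iff_bijective.1 (fun a b hab =>
      hf (congrArg Subtype.val ((S.orderIsoOfFin h).symm.injective hab))))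

lemma enum_comp_toPerm (S : Finset κ) (h : S.card = n) (f : Fin n → κ)
    (hf : Function.Injective f) (hm : ∀ i, f i ∈ S) :
    enum S h ∘ (toPerm S h f hf hm) = f := by
  funext i
  simp [toPerm, enum, Equiv.ofBijective]

lemma sum_perm_eq (S : Finset κ) (h : S.card = n) (M : Matrix (Fin n) κ ℝ) :
    ∑ σ : Equiv.Perm (Fin n), (↑↑(Equiv.Perm.sign σ) : ℝ) * ∏ i, M i (enum S h (σ i))
      = (M.submatrix id (enum S h)).det := by
  rw [Matrix.det_apply']
  rw [← Equiv.sum_comp (Equiv.inv (Equiv.Perm (Fin n)))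
    (fun σ => (↑↑(Equiv.Perm.sign σ) : ℝ) * ∏ i, (M.submatrix id (enum S h)) (σ i) i)]
  refine Finset.sum_congr rfl fun σ _ => ?_
  simp only [Equiv.inv_apply, Equiv.Perm.sign_inv]
  congr 1
  rw [← Equiv.prod_comp σ (fun i => (M.submatrix id (enum S h)) (σ⁻¹ i) i)]
  refine Finset.prod_congr rfl fun i _ => ?_
  simp [Matrix.submatrix_apply]

lemma fiber_sum (S : Finset κ) (h : S.card = n) (M : Matrix (Fin n) κ ℝ) :
    ∑ f ∈ (univ.filter fun f : Fin n → κ => Function.Injective f).filter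
        (fun f => Finset.image f univ = S),
      (∏ i, M i (f i)) * (M.submatrix id f).det
      = (M.submatrix id (enum S h)).det ^ 2 := by
  classical
  have hmem : ∀ (f : Fin n → κ), f ∈ (univ.filter fun f : Fin n → κ => Function.Injective f).filter
        (fun f => Finset.image f univ = S) → ∀ i, f i ∈ S := by
    intro f hf i
    simp only [Finset.mem_filter, Finset.mem_univ, true_and] at hf
    rw [← hf.2]
    exact Finset.mem_image_of_mem f (Finset.mem_univ i)
  have hinj : ∀ (f : Fin n → κ), f ∈ (univ.filter fun f : Fin n → κ => Function.Injective f).filter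
        (fun f => Finset.image f univ = S) → Function.Injective f := by
    intro f hf
    simp only [Finset.mem_filter, Finset.mem_univ, true_and] at hf
    exact hf.1
  have key : ∑ f ∈ (univ.filter fun f : Fin n → κ => Function.Injective f).filter
        (fun f => Finset.image f univ = S),
      (∏ i, M i (f i)) * (M.submatrix id f).det
      = ∑ σ : Equiv.Perm (Fin n),
        (∏ i, M i (enum S h (σ i))) * (M.submatrix id (enum S h ∘ σ)).det := by
    refine Finset.sum_bij' (i := fun f hf => toPerm S h f (hinj f hf) (hmem f hf))
        (j := fun σ _ => enum S h ∘ σ) (fun f hf => Finset.mem_univ _) ?_ ?_ ?_ ?_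
    · intro σ _
      simp only [Finset.mem_filter, Finset.mem_univ, true_and]
      refine ⟨(enum_injective S h).comp σ.injective, ?_⟩
      have h2 : Finset.image (⇑σ) univ = univ := by
        ext x
        simp only [Finset.mem_image, Finset.mem_univ, iff_true, true_and]
        exact ⟨σ.symm x, by simp⟩
      rw [← Finset.image_image, h2]
      exact image_enum S h
    · intro f hf
      exact enum_comp_toPerm S h f (hinj f hf) (hmem f hf)
    · intro σ _
      refine Equiv.ext fun i => ?_
      exact enum_injective S h (congrFun (enum_comp_toPerm S h (enum S h ∘ σ)
        ((enum_injective S h).comp σ.injective) (fun i => enum_mem S h (σ i))) i)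
    · intro f hf
      have hc := enum_comp_toPerm S h f (hinj f hf) (hmem f hf)
      rw [hc]
      congr 1
      refine Finset.prod_congr rfl fun i _ => ?_
      rw [← congrFun hc i]
      rfl
  rw [key]
  have hp : ∀ σ : Equiv.Perm (Fin n), (M.submatrix id (enum S h ∘ σ)).det
      = (↑↑(Equiv.Perm.sign σ) : ℝ) * (M.submatrix id (enum S h)).det := by
    intro σ
    rw [show M.submatrix id (enum S h ∘ σ) = (M.submatrix id (enum S h)).submatrix id σ by
      rw [Matrix.submatrix_submatrix]; rfl]
    exact Matrix.det_permute' σ _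
  simp only [hp]
  rw [sq, ← sum_perm_eq S h M, Finset.sum_mul]
  refine Finset.sum_congr rfl fun σ _ => ?_
  ring

lemma cauchy_binet (M : Matrix (Fin n) κ ℝ) :
    (M * Mᵀ).det = ∑ S : Finset κ,
      if h : S.card = n then (M.submatrix id (enum S h)).det ^ 2 else 0 := by
  classical
  rw [det_expand]
  have step1 : ∑ f : Fin n → κ, (∏ i, M i (f i)) * (M.submatrix id f).det
      = ∑ f ∈ univ.filter (fun f : Fin n → κ => Function.Injective f),
          (∏ i, M i (f i)) * (M.submatrix id f).det := by
    refine (Finset.sum_filter_of_ne fun f _ hne => ?_).symm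
    by_contra hinj
    exact hne (by simp [det_submatrix_noninj M hinj])
  rw [step1, ← Finset.sum_fiberwise (univ.filter fun f : Fin n → κ => Function.Injective f)
      (fun f => Finset.image f univ) (fun f => (∏ i, M i (f i)) * (M.submatrix id f).det)]
  refine Finset.sum_congr rfl fun S _ => ?_
  by_cases h : S.card = n
  · rw [dif_pos h, ← fiber_sum S h M]
  · rw [dif_neg h]
    apply Finset.sum_eq_zero
    intro f hf
    simp only [Finset.mem_filter, Finset.mem_univ, true_and] at hf
    exfalso
    apply h
    rw [← hf.2, Finset.card_image_of_injective univ hf.1, Finset.card_fin]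

end MTT

section Part2

open SimpleGraph

variable {n : ℕ} {G : SimpleGraph (Fin (n + 1))} [DecidableRel G.Adj] [Fintype G.edgeSet]
  {tail head : G.edgeSet → Fin (n + 1)}
  {A : Matrix (Fin (n + 1)) G.edgeSet ℝ}
  {Atil : Matrix (Fin n) G.edgeSet ℝ}

/-- telescoping sum along a walk -/
lemma walk_telescope {V : Type*} {H : SimpleGraph V} [DecidableEq V] {a b : V}
    (p : H.Walk a b) (v : V) :
    ((p.darts).map fun d => ((if v = d.toProd.1 then (1:ℝ) else 0)
        - (if v = d.toProd.2 then 1 else 0))).sum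
      = (if v = a then 1 else 0) - (if v = b then 1 else 0) := by
  induction p with
  | nil => simp
  | cons h q ih =>
    rw [SimpleGraph.Walk.darts_cons, List.map_cons, List.sum_cons, ih]
    ring

lemma tail_ne_head (hor : ∀ e : G.edgeSet, (e : Sym2 (Fin (n + 1))) = s(tail e, head e))
    (e : G.edgeSet) : tail e ≠ head e := by
  intro h
  have := e.2
  rw [hor e, h] at this
  exact G.not_isDiag_of_mem_edgeSet this (by simp)

lemma hA_sub (hor : ∀ e : G.edgeSet, (e : Sym2 (Fin (n + 1))) = s(tail e, head e))
    (hA : ∀ v e, A v e = if v = tail e then 1 else if v = head e then -1 else 0)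
    (v : Fin (n + 1)) (e : G.edgeSet) :
    A v e = (if v = tail e then 1 else 0) - (if v = head e then 1 else 0) := by
  rw [hA]
  by_cases h1 : v = tail e
  · have h2 : v ≠ head e := h1 ▸ tail_ne_head hor e
    simp [h1, h2, tail_ne_head hor e]
  · have h3 : head e ≠ tail e := fun h => (tail_ne_head hor e) h.symm
    by_cases h2 : v = head e <;> simp [h1, h2, h3]

/-- Case: the subgraph is disconnected. -/
lemma det_zero_of_not_connected
    (hor : ∀ e : G.edgeSet, (e : Sym2 (Fin (n + 1))) = s(tail e, head e))
    (hA : ∀ v e, A v e = if v = tail e then 1 else if v = head e then -1 else 0)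
    (hAtil : ∀ i e, Atil i e = A (Fin.castSucc i) e)
    (g : Fin n → G.edgeSet)
    {T : Set (Sym2 (Fin (n + 1)))} (hT : T = Set.range fun i => (g i : Sym2 (Fin (n + 1))))
    (hnc : ¬ (SimpleGraph.fromEdgeSet T).Connected) :
    (Atil.submatrix id g).det = 0 := by
  classical
  set H := SimpleGraph.fromEdgeSet T with hH
  have hpre : ¬ H.Preconnected := fun hp => hnc ((SimpleGraph.connected_iff H).2 ⟨hp, ⟨0⟩⟩)
  simp only [SimpleGraph.Preconnected, not_forall] at hpre
  obtain ⟨u, w, huw⟩ := hpre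
  have hex : ∃ u₀, ¬ H.Reachable u₀ (Fin.last n) := by
    by_contra hc
    push_neg at hc
    exact huw ((hc u).trans (hc w).symm)
  obtain ⟨u₀, hu₀⟩ := hex
  set c : Fin (n + 1) → ℝ := fun v => if H.Reachable v u₀ then 1 else 0 with hc
  have hclast : c (Fin.last n) = 0 := if_neg (fun hr => hu₀ hr.symm)
  have hadjr : ∀ j : Fin n, c (tail (g j)) = c (head (g j)) := by
    intro j
    have hmem : (↑(g j) : Sym2 (Fin (n + 1))) ∈ T := by rw [hT]; exact ⟨j, rfl⟩
    have hadj : H.Adj (tail (g j)) (head (g j)) := by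
      rw [hH, SimpleGraph.fromEdgeSet_adj]
      exact ⟨by rw [← hor (g j)]; exact hmem, tail_ne_head hor (g j)⟩
    have : H.Reachable (tail (g j)) u₀ ↔ H.Reachable (head (g j)) u₀ :=
      ⟨fun h => hadj.symm.reachable.trans h, fun h => hadj.reachable.trans h⟩
    simp only [hc]
    by_cases hr : H.Reachable (tail (g j)) u₀
    · rw [if_pos hr, if_pos (this.1 hr)]
    · rw [if_neg hr, if_neg (fun h => hr (this.2 h))]
  have hune : u₀ ≠ Fin.last n := fun h => hu₀ (h ▸ SimpleGraph.Reachable.refl u₀)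
  obtain ⟨i₀, hi₀⟩ := Fin.exists_castSucc_eq.2 hune
  rw [← Matrix.exists_vecMul_eq_zero_iff]
  refine ⟨fun i => c (Fin.castSucc i), ?_, ?_⟩
  · intro h0
    have := congrFun h0 i₀
    rw [hi₀] at this
    simp only [hc, if_pos (SimpleGraph.Reachable.refl u₀)] at this
    exact one_ne_zero this
  · funext j
    have hsum : ∀ e : G.edgeSet, (∃ i, g i = e) →
        ∑ v : Fin (n + 1), c v * A v e = 0 := by
      intro e ⟨i, hi⟩
      have : ∀ v, c v * A v e
          = (if v = tail e then c v else 0) - (if v = head e then c v else 0) := by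
        intro v
        rw [hA_sub hor hA]
        have h3 := tail_ne_head hor e
        by_cases h1 : v = tail e
        · have h2 : v ≠ head e := h1 ▸ h3
          simp [h1, h2, h3]
        · by_cases h2 : v = head e
          · have h4 : head e ≠ tail e := fun h => h3 h.symm
            simp [h1, h2, h4]
          · simp [h1, h2]
      simp only [this, Finset.sum_sub_distrib, Finset.sum_ite_eq', Finset.mem_univ, if_pos]
      rw [← hi, hadjr i, sub_self]
    have : (fun i => c (Fin.castSucc i)) ᵥ* (Atil.submatrix id g)
        = fun j => ∑ i : Fin n, c (Fin.castSucc i) * A (Fin.castSucc i) (g j) := by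
      funext j
      simp [Matrix.vecMul, dotProduct, hAtil]
    rw [this]
    have := hsum (g j) ⟨j, rfl⟩
    rw [Fin.sum_univ_castSucc, hclast, zero_mul, add_zero] at this
    simpa using this

/-- Case: the subgraph has a cycle. -/
lemma det_zero_of_cycle
    (hor : ∀ e : G.edgeSet, (e : Sym2 (Fin (n + 1))) = s(tail e, head e))
    (hA : ∀ v e, A v e = if v = tail e then 1 else if v = head e then -1 else 0)
    (hAtil : ∀ i e, Atil i e = A (Fin.castSucc i) e)
    (g : Fin n → G.edgeSet) (hg : Function.Injective g)
    {T : Set (Sym2 (Fin (n + 1)))} (hT : T = Set.range fun i => (g i : Sym2 (Fin (n + 1))))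
    {u : Fin (n + 1)} {p : (SimpleGraph.fromEdgeSet T).Walk u u} (hp : p.IsCycle) :
    (Atil.submatrix id g).det = 0 := by
  classical
  have hdnodup : p.darts.Nodup := by
    have he : p.edges.Nodup := hp.edges_nodup
    exact List.Nodup.of_map SimpleGraph.Dart.edge he
  -- every dart's edge comes from a unique index
  have hexists : ∀ d : (SimpleGraph.fromEdgeSet T).Dart, d ∈ p.darts →
      ∃ j, (↑(g j) : Sym2 (Fin (n + 1))) = d.edge := by
    intro d hd
    have h1 : d.edge ∈ p.edges := List.mem_map_of_mem hd
    have h2 := p.edges_subset_edgeSet h1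
    rw [SimpleGraph.edgeSet_fromEdgeSet] at h2
    have h3 : d.edge ∈ T := h2.1
    exact (Set.ext_iff.mp hT d.edge).mp h3
  choose jd hjd using hexists
  set y : Fin n → ℝ := fun j => ∑ d ∈ p.darts.toFinset,
    if d.edge = ↑(g j) then (if d.toProd.1 = tail (g j) then 1 else -1) else 0 with hy
  rw [← Matrix.exists_mulVec_eq_zero_iff]
  have huniq : ∀ (d : (SimpleGraph.fromEdgeSet T).Dart) (hd : d ∈ p.darts) (j : Fin n),
      d.edge = ↑(g j) → j = jd d hd := by
    intro d hd j hj
    apply hg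
    apply Subtype.val_injective
    rw [hjd d hd, ← hj]
  refine ⟨y, ?_, ?_⟩
  · -- y is nonzero
    intro h0
    have hnonnil : p.darts ≠ [] := by
      intro hnil
      have := hp.not_nil
      rw [SimpleGraph.Walk.nil_iff_length_eq] at this
      have hlen := p.length_darts
      rw [hnil] at hlen
      simp at hlen
      omega
    obtain ⟨d₀, hd₀⟩ := List.exists_mem_of_ne_nil _ hnonnil
    have hj₀ := hjd d₀ hd₀
    have hy0 := congrFun h0 (jd d₀ hd₀)
    rw [hy] at hy0
    simp only at hy0
    rw [Finset.sum_eq_single d₀] at hy0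
    · rw [if_pos hj₀.symm] at hy0
      by_cases hh : d₀.toProd.1 = tail (g (jd d₀ hd₀)) <;> simp [hh] at hy0
    · intro d hd hne
      rw [List.mem_toFinset] at hd
      rw [if_neg]
      intro he
      apply hne
      exact List.inj_on_of_nodup_map hp.edges_nodup hd hd₀ (by rw [he, hj₀])
    · intro hd
      exact absurd (List.mem_toFinset.2 hd₀) hd
  · -- (N) *ᵥ y = 0
    funext i
    have key : ∀ v : Fin (n + 1), ∑ j : Fin n, A v (g j) * y j = 0 := by
      intro v
      have swap : ∑ j : Fin n, A v (g j) * y j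
          = ∑ d ∈ p.darts.toFinset, ∑ j : Fin n,
              (if d.edge = ↑(g j) then (if d.toProd.1 = tail (g j) then 1 else -1)
                * A v (g j) else 0) := by
        rw [hy]
        simp only [Finset.mul_sum]
        rw [Finset.sum_comm]
        refine Finset.sum_congr rfl fun d _ => Finset.sum_congr rfl fun j _ => ?_
        by_cases hc : d.edge = ↑(g j) <;> simp [hc] <;> ring
      rw [swap]
      have inner : ∀ d ∈ p.darts.toFinset, ∑ j : Fin n,
          (if d.edge = ↑(g j) then (if d.toProd.1 = tail (g j) then 1 else -1)
            * A v (g j) else 0)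
          = (if v = d.toProd.1 then (1:ℝ) else 0) - (if v = d.toProd.2 then 1 else 0) := by
        intro d hd
        rw [List.mem_toFinset] at hd
        rw [Finset.sum_eq_single (jd d hd)]
        · rw [if_pos (hjd d hd).symm]
          set e := g (jd d hd) with he
          have hsym : s(tail e, head e) = s(d.toProd.1, d.toProd.2) := by
            rw [← hor e, hjd d hd]; rfl
          have hne : d.toProd.1 ≠ d.toProd.2 := d.adj.ne
          rw [hA_sub hor hA]
          rcases Sym2.eq_iff.1 hsym with ⟨h1, h2⟩ | ⟨h1, h2⟩
          · rw [if_pos h1.symm, h1, h2]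
            ring
          · rw [if_neg (fun hh => hne (hh.trans h1)), h1, h2]
            ring
        · intro j _ hne
          rw [if_neg (fun he => hne (huniq d hd j he))]
        · intro hj; exact absurd (Finset.mem_univ _) hj
      rw [Finset.sum_congr rfl inner]
      rw [List.sum_toFinset _ hdnodup]
      rw [walk_telescope p v]
      ring
    have : ((Atil.submatrix id g) *ᵥ y) i
        = ∑ j : Fin n, A (Fin.castSucc i) (g j) * y j := by
      simp [Matrix.mulVec, dotProduct, hAtil]
    rw [this, key]
    rfl

end Part2

section TreeCase

open SimpleGraph

variable {n : ℕ} {G : SimpleGraph (Fin (n + 1))} [DecidableRel G.Adj] [Fintype G.edgeSet]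
  {tail head : G.edgeSet → Fin (n + 1)}
  {A : Matrix (Fin (n + 1)) G.edgeSet ℝ}
  {Atil : Matrix (Fin n) G.edgeSet ℝ}

lemma det_sq_one_of_tree
    (hor : ∀ e : G.edgeSet, (e : Sym2 (Fin (n + 1))) = s(tail e, head e))
    (hA : ∀ v e, A v e = if v = tail e then 1 else if v = head e then -1 else 0)
    (hAtil : ∀ i e, Atil i e = A (Fin.castSucc i) e)
    (g : Fin n → G.edgeSet)
    {T : Set (Sym2 (Fin (n + 1)))} (hT : T = Set.range fun i => (g i : Sym2 (Fin (n + 1))))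
    (htree : (SimpleGraph.fromEdgeSet T).IsTree) :
    (Atil.submatrix id g).det ^ 2 = 1 := by
  classical
  set r : Fin (n + 1) := Fin.last n with hr
  set H := SimpleGraph.fromEdgeSet T with hH
  have hconn : H.Connected := htree.isConnected
  -- find parents
  have key : ∀ v : Fin n, ∃ w : Fin (n + 1), H.Adj (Fin.castSucc v) w ∧
      H.dist w r < H.dist (Fin.castSucc v) r := by
    intro v
    have hne : Fin.castSucc v ≠ r := (Fin.castSucc_lt_last v).ne
    obtain ⟨p, hp⟩ := (hconn.preconnected (Fin.castSucc v) r).exists_walk_length_eq_dist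
    have hlpos : 0 < p.length := by
      rw [hp]
      exact hconn.pos_dist_of_ne hne
    have hnn : ¬ p.Nil := by
      rw [SimpleGraph.Walk.nil_iff_length_eq]
      omega
    obtain ⟨w, h, q, rfl⟩ := SimpleGraph.Walk.not_nil_iff.mp hnn
    refine ⟨w, h, ?_⟩
    have h1 : H.dist w r ≤ q.length := SimpleGraph.dist_le q
    have h2 : (SimpleGraph.Walk.cons h q).length = q.length + 1 :=
      SimpleGraph.Walk.length_cons h q
    omega
  choose pa hpa1 hpa2 using key
  -- edges to parents
  have key2 : ∀ v : Fin n, ∃ j : Fin n,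
      (↑(g j) : Sym2 (Fin (n + 1))) = s(Fin.castSucc v, pa v) := by
    intro v
    have hmem : s(Fin.castSucc v, pa v) ∈ H.edgeSet := (SimpleGraph.mem_edgeSet H).2 (hpa1 v)
    rw [hH, SimpleGraph.edgeSet_fromEdgeSet] at hmem
    exact (Set.ext_iff.mp hT _).mp hmem.1
  choose ψ hψ using key2
  have hψinj : Function.Injective ψ := by
    intro v1 v2 h12
    by_contra hne
    have hs : s(Fin.castSucc v1, pa v1) = s(Fin.castSucc v2, pa v2) := by
      rw [← hψ v1, ← hψ v2, h12]
    have hcs : Fin.castSucc v1 ≠ Fin.castSucc v2 :=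
      fun h => hne (Fin.castSucc_injective n h)
    rcases Sym2.eq_iff.1 hs with ⟨h1, _⟩ | ⟨h1, h2⟩
    · exact hcs h1
    · have d1 := hpa2 v1
      have d2 := hpa2 v2
      rw [h2] at d1
      rw [← h1] at d2
      omega
  have hψbij : Function.Bijective ψ := Finite.injective_iff_bijective.1 hψinj
  set ψe : Equiv.Perm (Fin n) := Equiv.ofBijective ψ hψbij with hψe
  set N := Atil.submatrix id g with hN
  set N' := N.submatrix id ψe with hN'
  have happ : ∀ i j, N' i j = A (Fin.castSucc i) (g (ψ j)) := by
    intro i j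
    simp [hN', hN, Matrix.submatrix_apply, hAtil, hψe, Equiv.ofBijective]
  -- diagonal entries
  have hdiag : ∀ j, N' j j = 1 ∨ N' j j = -1 := by
    intro j
    rw [happ]
    set e := g (ψ j) with he
    have hsym : s(tail e, head e) = s(Fin.castSucc j, pa j) := by rw [← hor e, hψ j]
    rcases Sym2.eq_iff.1 hsym with ⟨h1, _⟩ | ⟨h1, h2⟩
    · left; rw [hA]; rw [if_pos h1.symm]
    · right; rw [hA]
      have hne : Fin.castSucc j ≠ tail e := fun hcs => (hpa1 j).ne (hcs.trans h1)
      rw [if_neg hne, if_pos h2.symm]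
  -- off-diagonal structure
  have hzero : ∀ i j, N' i j ≠ 0 → i = j ∨
      H.dist (Fin.castSucc i) r < H.dist (Fin.castSucc j) r := by
    intro i j hne
    rw [happ] at hne
    set e := g (ψ j) with he
    have hsym : s(tail e, head e) = s(Fin.castSucc j, pa j) := by rw [← hor e, hψ j]
    have hmem : Fin.castSucc i = tail e ∨ Fin.castSucc i = head e := by
      by_contra hc
      push_neg at hc
      rw [hA, if_neg hc.1, if_neg hc.2] at hne
      exact hne rfl
    have : Fin.castSucc i = Fin.castSucc j ∨ Fin.castSucc i = pa j := by
      rcases Sym2.eq_iff.1 hsym with ⟨h1, h2⟩ | ⟨h1, h2⟩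
      · rcases hmem with h | h
        · left; rw [h, h1]
        · right; rw [h, h2]
      · rcases hmem with h | h
        · right; rw [h, h1]
        · left; rw [h, h2]
    rcases this with h | h
    · exact Or.inl (Fin.castSucc_injective n h)
    · right; rw [h]; exact hpa2 j
  have hBT : N'.BlockTriangular (fun i => H.dist (Fin.castSucc i) r) := by
    intro i j hlt
    by_contra hne
    beta_reduce at hlt
    rcases hzero i j hne with h | h
    · rw [h] at hlt; exact lt_irrefl _ hlt
    · omega
  have hblocks : ∀ a : ℕ,
      (N'.toSquareBlock (fun i => H.dist (Fin.castSucc i) r) a).det ^ 2 = 1 := by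
    intro a
    have hdm : N'.toSquareBlock (fun i => H.dist (Fin.castSucc i) r) a
        = Matrix.diagonal
            (fun i : {i : Fin n // H.dist (Fin.castSucc i) r = a} => N' i.1 i.1) := by
      ext ⟨i, hi⟩ ⟨j, hj⟩
      by_cases hij : i = j
      · subst hij
        simp [Matrix.toSquareBlock_def, Matrix.diagonal]
      · have hne : N' i j = 0 := by
          by_contra hc
          beta_reduce at hi hj
          rcases hzero i j hc with h | h
          · exact hij h
          · omega
        have : (⟨i, hi⟩ : {i : Fin n // H.dist (Fin.castSucc i) r = a}) ≠ ⟨j, hj⟩ :=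
          fun h => hij (congrArg Subtype.val h)
        simp [Matrix.toSquareBlock_def, Matrix.diagonal, this, hne]
    rw [hdm, Matrix.det_diagonal, ← Finset.prod_pow]
    apply Finset.prod_eq_one
    intro i _
    rcases hdiag i.1 with h | h <;> rw [h] <;> norm_num
  have hdetN' : N'.det ^ 2 = 1 := by
    rw [hBT.det, ← Finset.prod_pow]
    apply Finset.prod_eq_one
    intro a _
    exact hblocks a
  have : N'.det = (↑↑(Equiv.Perm.sign ψe) : ℝ) * N.det := Matrix.det_permute' ψe N
  rw [this] at hdetN'
  rcases Int.units_eq_one_or (Equiv.Perm.sign ψe) with h | h <;>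
    rw [h] at hdetN' <;> push_cast at hdetN' <;> nlinarith [hdetN', sq_nonneg N.det]

end TreeCase

section Glue

open SimpleGraph

variable {n : ℕ} {G : SimpleGraph (Fin (n + 1))} [DecidableRel G.Adj] [Fintype G.edgeSet]
  {tail head : G.edgeSet → Fin (n + 1)}
  {A : Matrix (Fin (n + 1)) G.edgeSet ℝ}
  {Atil : Matrix (Fin n) G.edgeSet ℝ}

open scoped Classical in
lemma det_sq_eq
    (hor : ∀ e : G.edgeSet, (e : Sym2 (Fin (n + 1))) = s(tail e, head e))
    (hA : ∀ v e, A v e = if v = tail e then 1 else if v = head e then -1 else 0)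
    (hAtil : ∀ i e, Atil i e = A (Fin.castSucc i) e)
    (g : Fin n → G.edgeSet) (hg : Function.Injective g)
    {T : Set (Sym2 (Fin (n + 1)))} (hT : T = Set.range fun i => (g i : Sym2 (Fin (n + 1)))) :
    (Atil.submatrix id g).det ^ 2
      = if (SimpleGraph.fromEdgeSet T).IsTree then (1:ℝ) else 0 := by
  classical
  by_cases ht : (SimpleGraph.fromEdgeSet T).IsTree
  · rw [if_pos ht]
    exact det_sq_one_of_tree hor hA hAtil g hT ht
  · rw [if_neg ht]
    by_cases hc : (SimpleGraph.fromEdgeSet T).Connected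
    · have hac : ¬ (SimpleGraph.fromEdgeSet T).IsAcyclic :=
        fun ha => ht ((SimpleGraph.isTree_iff _).2 ⟨hc, ha⟩)
      rw [SimpleGraph.IsAcyclic] at hac
      push_neg at hac
      obtain ⟨u, p, hp⟩ := hac
      rw [det_zero_of_cycle hor hA hAtil g hg hT hp]
      norm_num
    · rw [det_zero_of_not_connected hor hA hAtil g hT hc]
      norm_num

open scoped Classical in
lemma filter_card_eq {T : Set (Sym2 (Fin (n + 1)))} (hsub : T ⊆ G.edgeSet)
    (htree : (SimpleGraph.fromEdgeSet T).IsTree) :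
    (Finset.univ.filter fun e : G.edgeSet => (↑e : Sym2 (Fin (n + 1))) ∈ T).card = n := by
  classical
  set Q := SimpleGraph.fromEdgeSet T with hQ
  letI : Fintype Q.edgeSet := Fintype.ofFinite _
  have hQT : Q.edgeSet = T := by
    rw [hQ, SimpleGraph.edgeSet_fromEdgeSet]
    ext x
    constructor
    · exact fun hx => hx.1
    · exact fun hx => ⟨hx, G.not_isDiag_of_mem_edgeSet (hsub hx)⟩
  have hcard := htree.card_edgeFinset
  rw [Fintype.card_fin] at hcard
  have hbij : (Finset.univ.filter fun e : G.edgeSet => (↑e : Sym2 (Fin (n + 1))) ∈ T).card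
      = Q.edgeFinset.card := by
    refine Finset.card_bij (fun e _ => (↑e : Sym2 (Fin (n + 1)))) ?_ ?_ ?_
    · intro e he
      rw [SimpleGraph.mem_edgeFinset, hQT]
      exact (Finset.mem_filter.1 he).2
    · intro e1 _ e2 _ h
      exact Subtype.val_injective h
    · intro x hx
      rw [SimpleGraph.mem_edgeFinset, hQT] at hx
      exact ⟨⟨x, hsub hx⟩, Finset.mem_filter.2 ⟨Finset.mem_univ _, hx⟩, rfl⟩
  omega

open scoped Classical in
lemma image_filter_eq {T : Set (Sym2 (Fin (n + 1)))} (hsub : T ⊆ G.edgeSet) :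
    Subtype.val '' ((Finset.univ.filter
        fun e : G.edgeSet => (↑e : Sym2 (Fin (n + 1))) ∈ T : Finset G.edgeSet) : Set G.edgeSet)
      = T := by
  classical
  ext x
  simp only [Set.mem_image, Finset.coe_filter, Set.mem_setOf_eq, Finset.mem_univ, true_and]
  constructor
  · rintro ⟨e, he, rfl⟩
    exact he
  · intro hx
    exact ⟨⟨x, hsub hx⟩, hx, rfl⟩

open scoped Classical in
lemma filter_image_eq (S : Finset G.edgeSet) :
    (Finset.univ.filter fun e : G.edgeSet =>
        (↑e : Sym2 (Fin (n + 1))) ∈ Subtype.val '' ((S : Set G.edgeSet))) = S := by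
  classical
  ext e
  simp only [Finset.mem_filter, Finset.mem_univ, true_and, Set.mem_image, Finset.mem_coe]
  constructor
  · rintro ⟨e', he', hee⟩
    rwa [Subtype.val_injective hee] at he'
  · intro he
    exact ⟨e, he, rfl⟩

end Glue

theorem stmt_5 (n : ℕ) (G : SimpleGraph (Fin (n + 1))) [DecidableRel G.Adj]
    [Fintype G.edgeSet] (hconn : G.Connected)
    (tail head : G.edgeSet → Fin (n + 1))
    (hor : ∀ e : G.edgeSet, (e : Sym2 (Fin (n + 1))) = s(tail e, head e))
    (A : Matrix (Fin (n + 1)) G.edgeSet ℝ)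
    (hA : ∀ v e, A v e = if v = tail e then 1 else if v = head e then -1 else 0)
    (Atil : Matrix (Fin n) G.edgeSet ℝ)
    (hAtil : ∀ i e, Atil i e = A (Fin.castSucc i) e) :
    (Nat.card {T : Set (Sym2 (Fin (n + 1))) //
        T ⊆ G.edgeSet ∧ (SimpleGraph.fromEdgeSet T).IsTree} : ℝ)
      = Matrix.det (Atil * Atil.transpose) := by
  classical
  letI : LinearOrder G.edgeSet :=
    LinearOrder.lift' (Fintype.equivFin ↥G.edgeSet) (Equiv.injective _)
  rw [MTT.cauchy_binet Atil]
  have hterm : ∀ S : Finset G.edgeSet,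
      (if h : S.card = n then (Atil.submatrix id (MTT.enum S h)).det ^ 2 else 0)
      = if (S.card = n ∧ (SimpleGraph.fromEdgeSet
            (Subtype.val '' (S : Set G.edgeSet))).IsTree) then (1:ℝ) else 0 := by
    intro S
    by_cases h : S.card = n
    · rw [dif_pos h]
      have hT : Subtype.val '' (S : Set G.edgeSet)
          = Set.range fun i => (↑(MTT.enum S h i) : Sym2 (Fin (n + 1))) := by
        ext x
        simp only [Set.mem_image, Set.mem_range, Finset.mem_coe]
        constructor
        · rintro ⟨e, he, rfl⟩
          rw [← MTT.image_enum S h] at he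
          obtain ⟨i, _, hi⟩ := Finset.mem_image.1 he
          exact ⟨i, by rw [hi]⟩
        · rintro ⟨i, rfl⟩
          exact ⟨MTT.enum S h i, MTT.enum_mem S h i, rfl⟩
      rw [det_sq_eq hor hA hAtil (MTT.enum S h) (MTT.enum_injective S h) hT]
      by_cases ht : (SimpleGraph.fromEdgeSet
          (Subtype.val '' (S : Set G.edgeSet))).IsTree <;> simp [h, ht]
    · rw [dif_neg h, if_neg (fun hcon => h hcon.1)]
  rw [Finset.sum_congr rfl (fun S _ => hterm S), Finset.sum_boole]
  congr 1
  -- counting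
  have hequiv : {S : Finset G.edgeSet // S ∈ Finset.univ.filter
        (fun S : Finset G.edgeSet => S.card = n ∧ (SimpleGraph.fromEdgeSet
          (Subtype.val '' (S : Set G.edgeSet))).IsTree)}
      ≃ {T : Set (Sym2 (Fin (n + 1))) //
        T ⊆ G.edgeSet ∧ (SimpleGraph.fromEdgeSet T).IsTree} := by
    refine ⟨fun S => ⟨Subtype.val '' (S.1 : Set G.edgeSet), ?_, ?_⟩,
      fun T => ⟨Finset.univ.filter fun e : G.edgeSet => (↑e : Sym2 (Fin (n + 1))) ∈ T.1, ?_⟩,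
      ?_, ?_⟩
    · rintro x ⟨e, _, rfl⟩
      exact e.2
    · exact ((Finset.mem_filter.1 S.2).2).2
    · have hsub := T.2.1
      have htree := T.2.2
      rw [Finset.mem_filter]
      refine ⟨Finset.mem_univ _, filter_card_eq hsub htree, ?_⟩
      rw [image_filter_eq hsub]
      exact htree
    · intro S
      apply Subtype.ext
      exact filter_image_eq S.1
    · intro T
      apply Subtype.ext
      exact image_filter_eq T.2.1
  rw [← Nat.card_congr hequiv, Nat.card_eq_finsetCard]
end

section
/- Let φ_1, …, φ_{n+1} : ℕ → ℂ be orthonormal in ℓ²(ℕ), i.e. Σ_{x ∈ ℕ} φ_i(x) · conj(φ_j(x)) = δ_{ij}. For a finite subset B ⊂ ℕ with elements listed in increasing order, let M_B = (φ_i(b_j)) with rows i = 1, …, n+1 and let Q_B = (φ_i(b_j)) with rows i = 1, …, n. For a finite A ⊂ ℕ and x ∈ ℕ, set r(A, x) = |{a ∈ A : a > x}|. Then for every n-element subset A ⊂ ℕ, Σ_{x ∈ ℕ ∖ A} (−1)^{r(A,x)} · conj(φ_{n+1}(x)) · det(M_{A ∪ {x}}) = det(Q_A), the sum converging absolutely.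 -/
open Finset

lemma stmt9_aux_pos (n : ℕ) (A : Finset ℕ) (x : ℕ) (hx : x ∉ A) (hA : A.card = n)
    (hI : (insert x A).card = n + 1) :
    ∃ p : Fin (n + 1), (insert x A).orderEmbOfFin hI p = x ∧
      (∀ j : Fin n, (insert x A).orderEmbOfFin hI (p.succAbove j) = A.orderEmbOfFin hA j) ∧
      (p : ℕ) + (A.filter fun a => x < a).card = n := by
  classical
  set e := (insert x A).orderEmbOfFin hI with he
  set p := ((insert x A).orderIsoOfFin hI).symm ⟨x, Finset.mem_insert_self x A⟩ with hp
  have hpx : e p = x := by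
    have h := ((insert x A).orderIsoOfFin hI).apply_symm_apply ⟨x, Finset.mem_insert_self x A⟩
    exact congrArg Subtype.val h
  refine ⟨p, hpx, ?_, ?_⟩
  · have hmono : StrictMono (fun j : Fin n => e (p.succAbove j)) :=
      e.strictMono.comp (Fin.strictMono_succAbove p)
    have hmem : ∀ j, e (p.succAbove j) ∈ A := by
      intro j
      have h1 : e (p.succAbove j) ∈ insert x A := Finset.orderEmbOfFin_mem _ _ _
      have h2 : e (p.succAbove j) ≠ x := fun h =>
        Fin.succAbove_ne p j (e.injective (by rw [h, hpx]))
      exact (Finset.mem_insert.1 h1).resolve_left h2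
    have h := Finset.orderEmbOfFin_unique hA hmem hmono
    exact fun j => congrFun h j
  · have hlt : (A.filter fun a => a < x).card = (p : ℕ) := by
      have himg : (A.filter fun a => a < x) = (Finset.Iio p).image (fun j => e j) := by
        ext y
        simp only [Finset.mem_filter, Finset.mem_image, Finset.mem_Iio]
        constructor
        · rintro ⟨hyA, hyx⟩
          have hy' : y ∈ insert x A := Finset.mem_insert_of_mem hyA
          have : y ∈ Set.range e := by
            rw [he, Finset.range_orderEmbOfFin]
            exact_mod_cast hy'
          obtain ⟨j, hj⟩ := this
          refine ⟨j, ?_, hj⟩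
          rw [← e.lt_iff_lt, hj, hpx]
          exact hyx
        · rintro ⟨j, hjp, rfl⟩
          have h1 : e j ∈ insert x A := Finset.orderEmbOfFin_mem _ _ _
          have h2 : e j < x := by rw [← hpx]; exact e.strictMono hjp
          have h3 : e j ≠ x := ne_of_lt h2
          exact ⟨(Finset.mem_insert.1 h1).resolve_left h3, h2⟩
      rw [himg, Finset.card_image_of_injective _ e.injective, Fin.card_Iio]
    have hsplit : (A.filter fun a => a < x).card + (A.filter fun a => x < a).card = n := by
      have hcongr : (A.filter fun a => x < a) = A.filter fun a => ¬ a < x := by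
        apply Finset.filter_congr
        intro a ha
        have : a ≠ x := fun h => hx (h ▸ ha)
        omega
      rw [hcongr, Finset.card_filter_add_card_filter_not, hA]
    omega

theorem stmt_9 (n : ℕ) (φ : Fin (n + 1) → ℕ → ℂ)
    (hl2 : ∀ i, Summable fun x => ‖φ i x‖ ^ 2)
    (horth : ∀ i j, ∑' x : ℕ, φ i x * (starRingEnd ℂ) (φ j x) = if i = j then 1 else 0)
    (A : Finset ℕ) (hA : A.card = n) :
    HasSum (fun x : {x : ℕ // x ∉ A} =>
        (-1 : ℂ) ^ ((A.filter fun a => (x : ℕ) < a).card) *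
          (starRingEnd ℂ) (φ (Fin.last n) (x : ℕ)) *
          Matrix.det (Matrix.of fun i j : Fin (n + 1) =>
            φ i (((insert (x : ℕ) A).orderIsoOfFin
              (by rw [Finset.card_insert_of_notMem x.2, hA]) j : ℕ))))
      (Matrix.det (Matrix.of fun i j : Fin n =>
        φ (Fin.castSucc i) ((A.orderIsoOfFin hA j : ℕ)))) := by
  classical
  set aS : Fin n → ℕ := fun j => A.orderEmbOfFin hA j with haS
  set d : Fin (n + 1) → ℂ := fun i =>
    Matrix.det (Matrix.of fun i' j' : Fin n => φ (i.succAbove i') (aS j')) with hd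
  set g : Fin (n + 1) → ℕ → ℂ := fun i x =>
    (-1 : ℂ) ^ (n + (i : ℕ)) * d i * (φ i x * (starRingEnd ℂ) (φ (Fin.last n) x)) with hg
  -- summability of the products
  have hsummable : ∀ i : Fin (n + 1),
      Summable fun x => φ i x * (starRingEnd ℂ) (φ (Fin.last n) x) := by
    intro i
    apply Summable.of_norm
    refine Summable.of_nonneg_of_le (fun x => norm_nonneg _) (fun x => ?_)
      ((hl2 i).add (hl2 (Fin.last n)))
    rw [norm_mul, RCLike.norm_conj]
    nlinarith [sq_nonneg (‖φ i x‖ - ‖φ (Fin.last n) x‖), norm_nonneg (φ i x),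
      norm_nonneg (φ (Fin.last n) x)]
  -- per-row HasSum over the complement of A
  have hGi : ∀ i : Fin (n + 1), HasSum (fun x : {x : ℕ // x ∉ A} => g i (x : ℕ))
      ((-1 : ℂ) ^ (n + (i : ℕ)) * d i *
        ((if i = Fin.last n then (1 : ℂ) else 0) -
          ∑ a ∈ A, φ i a * (starRingEnd ℂ) (φ (Fin.last n) a))) := by
    intro i
    have h1 : HasSum (fun x => φ i x * (starRingEnd ℂ) (φ (Fin.last n) x))
        (if i = Fin.last n then (1 : ℂ) else 0) := by
      have h := (hsummable i).hasSum
      rwa [horth i (Fin.last n)] at h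
    have h2 : HasSum
        (fun x : {x : ℕ // x ∉ A} => φ i (x : ℕ) * (starRingEnd ℂ) (φ (Fin.last n) (x : ℕ)))
        ((if i = Fin.last n then (1 : ℂ) else 0) -
          ∑ a ∈ A, φ i a * (starRingEnd ℂ) (φ (Fin.last n) a)) := by
      refine (Finset.hasSum_compl_iff
        (f := fun x : ℕ => φ i x * (starRingEnd ℂ) (φ (Fin.last n) x)) A).mpr ?_
      rw [sub_add_cancel]
      exact h1
    exact h2.mul_left _
  have final := hasSum_sum (fun i (_ : i ∈ (univ : Finset (Fin (n + 1)))) => hGi i)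
  -- the value of the total sum
  have hW : ∀ a ∈ A, (∑ i : Fin (n + 1), (-1 : ℂ) ^ ((i : ℕ) + n) * φ i a * d i) = 0 := by
    intro a ha
    have hrange : a ∈ Set.range aS := by
      rw [haS]
      show a ∈ Set.range (A.orderEmbOfFin hA)
      rw [Finset.range_orderEmbOfFin]
      exact_mod_cast ha
    obtain ⟨j₀, hj₀⟩ := hrange
    set W : Matrix (Fin (n + 1)) (Fin (n + 1)) ℂ :=
      Matrix.of fun i j => Fin.lastCases (φ i a) (fun j' => φ i (aS j')) j with hWdef
    have hdet0 : W.det = 0 := by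
      apply Matrix.det_zero_of_column_eq (i := Fin.castSucc j₀) (j := Fin.last n)
        (Fin.castSucc_lt_last j₀).ne
      intro k
      show (Fin.lastCases (φ k a) (fun j' => φ k (aS j')) (Fin.castSucc j₀) : ℂ) =
        Fin.lastCases (φ k a) (fun j' => φ k (aS j')) (Fin.last n)
      rw [Fin.lastCases_castSucc, Fin.lastCases_last, hj₀]
    have hexp : W.det = ∑ i : Fin (n + 1), (-1 : ℂ) ^ ((i : ℕ) + n) * φ i a * d i := by
      rw [Matrix.det_succ_column W (Fin.last n)]
      apply Finset.sum_congr rfl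
      intro i _
      have e1 : W i (Fin.last n) = φ i a := by
        show (Fin.lastCases (φ i a) (fun j' => φ i (aS j')) (Fin.last n) : ℂ) = φ i a
        rw [Fin.lastCases_last]
      have e2 : (W.submatrix i.succAbove (Fin.last n).succAbove) =
          Matrix.of fun i' j' : Fin n => φ (i.succAbove i') (aS j') := by
        ext i' j'
        simp only [Matrix.submatrix_apply, Fin.succAbove_last, Matrix.of_apply]
        show (Fin.lastCases (φ (i.succAbove i') a) (fun j'' => φ (i.succAbove i') (aS j''))
          (Fin.castSucc j') : ℂ) = _
        rw [Fin.lastCases_castSucc]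
      rw [e1, e2, Fin.val_last, hd]
    rw [← hexp, hdet0]
  have hval : (∑ i : Fin (n + 1), (-1 : ℂ) ^ (n + (i : ℕ)) * d i *
      ((if i = Fin.last n then (1 : ℂ) else 0) -
        ∑ a ∈ A, φ i a * (starRingEnd ℂ) (φ (Fin.last n) a))) = d (Fin.last n) := by
    have hsplit : ∀ i : Fin (n + 1), (-1 : ℂ) ^ (n + (i : ℕ)) * d i *
        ((if i = Fin.last n then (1 : ℂ) else 0) -
          ∑ a ∈ A, φ i a * (starRingEnd ℂ) (φ (Fin.last n) a)) =
        (if i = Fin.last n then (-1 : ℂ) ^ (n + (i : ℕ)) * d i else 0) -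
          ∑ a ∈ A, (starRingEnd ℂ) (φ (Fin.last n) a) *
            ((-1 : ℂ) ^ ((i : ℕ) + n) * φ i a * d i) := by
      intro i
      rw [mul_sub, Finset.mul_sum]
      congr 1
      · split <;> simp
      · apply Finset.sum_congr rfl
        intro a _
        ring
    rw [Finset.sum_congr rfl fun i _ => hsplit i, Finset.sum_sub_distrib,
      Finset.sum_ite_eq' univ (Fin.last n)]
    have hz : (∑ i : Fin (n + 1), ∑ a ∈ A, (starRingEnd ℂ) (φ (Fin.last n) a) *
        ((-1 : ℂ) ^ ((i : ℕ) + n) * φ i a * d i)) = 0 := by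
      rw [Finset.sum_comm]
      apply Finset.sum_eq_zero
      intro a ha
      rw [← Finset.mul_sum, hW a ha, mul_zero]
    rw [hz, sub_zero, if_pos (Finset.mem_univ _), Fin.val_last]
    have : (-1 : ℂ) ^ (n + n) = 1 := by
      rw [← two_mul]
      exact Even.neg_one_pow ⟨n, (two_mul n).symm ▸ rfl⟩
    rw [this, one_mul]
  rw [hval] at final
  have hdlast : d (Fin.last n) = Matrix.det (Matrix.of fun i j : Fin n =>
      φ (Fin.castSucc i) ((A.orderIsoOfFin hA j : ℕ))) := by
    rw [hd]
    refine congrArg Matrix.det ?_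
    ext i j
    simp [Fin.succAbove_last, haS]
  rw [hdlast] at final
  have hfe : (fun x : {x : ℕ // x ∉ A} => ∑ i : Fin (n + 1), g i (x : ℕ)) =
      (fun x : {x : ℕ // x ∉ A} =>
        (-1 : ℂ) ^ ((A.filter fun a => (x : ℕ) < a).card) *
          (starRingEnd ℂ) (φ (Fin.last n) (x : ℕ)) *
          Matrix.det (Matrix.of fun i j : Fin (n + 1) =>
            φ i (((insert (x : ℕ) A).orderIsoOfFin
              (by rw [Finset.card_insert_of_notMem x.2, hA]) j : ℕ)))) := by
    funext x
    symm
    obtain ⟨x, hx⟩ := x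
    have hI : (insert x A).card = n + 1 := by rw [Finset.card_insert_of_notMem hx, hA]
    obtain ⟨p, hpx, hpj, hpr⟩ := stmt9_aux_pos n A x hx hA hI
    have hM : Matrix.det (Matrix.of fun i j : Fin (n + 1) =>
        φ i (((insert x A).orderIsoOfFin hI j : ℕ))) =
        ∑ i : Fin (n + 1), (-1 : ℂ) ^ ((i : ℕ) + (p : ℕ)) * φ i x * d i := by
      rw [Matrix.det_succ_column _ p]
      apply Finset.sum_congr rfl
      intro i _
      have h1 : (Matrix.of fun i j : Fin (n + 1) =>
          φ i (((insert x A).orderIsoOfFin hI j : ℕ))) i p = φ i x := by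
        show φ i (((insert x A).orderIsoOfFin hI p : ℕ)) = φ i x
        rw [Finset.coe_orderIsoOfFin_apply, hpx]
      have h2 : ((Matrix.of fun i j : Fin (n + 1) =>
          φ i (((insert x A).orderIsoOfFin hI j : ℕ))).submatrix i.succAbove p.succAbove) =
          Matrix.of fun i' j' : Fin n => φ (i.succAbove i') (aS j') := by
        ext i' j'
        simp only [Matrix.submatrix_apply, Matrix.of_apply]
        rw [Finset.coe_orderIsoOfFin_apply, hpj j']
      rw [h1, h2, hd]
    show (-1 : ℂ) ^ ((A.filter fun a => x < a).card) * (starRingEnd ℂ) (φ (Fin.last n) x) *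
        Matrix.det (Matrix.of fun i j : Fin (n + 1) =>
          φ i (((insert x A).orderIsoOfFin hI j : ℕ))) = ∑ i : Fin (n + 1), g i x
    rw [hM, Finset.mul_sum]
    apply Finset.sum_congr rfl
    intro i _
    have hsign : ((-1 : ℂ) ^ ((A.filter fun a => x < a).card)) * (-1 : ℂ) ^ ((i : ℕ) + (p : ℕ)) =
        (-1 : ℂ) ^ (n + (i : ℕ)) := by
      rw [← pow_add]
      congr 1
      omega
    rw [hg]
    have : (-1 : ℂ) ^ ((A.filter fun a => x < a).card) * (starRingEnd ℂ) (φ (Fin.last n) x) *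
        ((-1 : ℂ) ^ ((i : ℕ) + (p : ℕ)) * φ i x * d i) =
        ((-1 : ℂ) ^ ((A.filter fun a => x < a).card) * (-1 : ℂ) ^ ((i : ℕ) + (p : ℕ))) * d i *
          (φ i x * (starRingEnd ℂ) (φ (Fin.last n) x)) := by ring
    rw [this, hsign]
  rw [hfe] at final
  exact final
end

section
/- Let E be a countable set, n ≥ 1, let φ : E → ℂ be any function, and let ε : E × 𝒫_n(E) → {+1, −1} be any function, where 𝒫_n(E) is the collection of n-element subsets of E. Let 𝒜 ⊆ 𝒫_n(E) and define the Hermitian matrix 𝓜 with rows and columns indexed by 𝒜 by: 𝓜(A, A) = Σ_{x ∈ A} |φ(x)|²; 𝓜(A, C) = ε(x, A) · ε(y, C) · φ(x) · conj(φ(y)) when |A ∩ C| = n−1, where x is the unique element of A ∖ C and y is the unique element of C ∖ A; and 𝓜(A, C) = 0 otherwise. Then 𝓜 is positive semidefinite: for every finitely supported F : 𝒜 → ℂ, Σ_{A, C ∈ 𝒜} conj(F(A)) · 𝓜(A, C) · F(C) is real and nonnegative. -/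
theorem stmt_10 {E : Type*} [Countable E] [DecidableEq E] (n : ℕ) (hn : 1 ≤ n)
    (φ : E → ℂ) (ε : E → Finset E → ℝ) (hε : ∀ x A, ε x A = 1 ∨ ε x A = -1)
    (𝒜 : Set (Finset E)) (h𝒜 : ∀ A ∈ 𝒜, A.card = n)
    (M : Finset E → Finset E → ℂ)
    (hM : ∀ A ∈ 𝒜, ∀ C ∈ 𝒜, M A C =
      if A = C then (∑ x ∈ A, (‖φ x‖ ^ 2 : ℂ))
      else if (A ∩ C).card = n - 1 then
        ∑ x ∈ A \ C, ∑ y ∈ C \ A,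
          (ε x A : ℂ) * (ε y C : ℂ) * φ x * (starRingEnd ℂ) (φ y)
      else 0)
    (F : Finset E → ℂ) (hF0 : ∀ A ∉ 𝒜, F A = 0)
    (s : Finset (Finset E)) (hs : {A | F A ≠ 0} ⊆ ↑s) :
    0 ≤ (∑ A ∈ s, ∑ C ∈ s, (starRingEnd ℂ) (F A) * M A C * F C).re ∧
      (∑ A ∈ s, ∑ C ∈ s, (starRingEnd ℂ) (F A) * M A C * F C).im = 0 := by
  classical
  set s' : Finset (Finset E) := s.filter (fun A => F A ≠ 0) with hs'def
  have hmem : ∀ A ∈ s', A ∈ 𝒜 := by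
    intro A hA
    rw [hs'def, Finset.mem_filter] at hA
    by_contra h
    exact hA.2 (hF0 A h)
  have hcard : ∀ A ∈ s', A.card = n := fun A hA => h𝒜 A (hmem A hA)
  have hFz : ∀ A ∈ s, A ∉ s' → F A = 0 := by
    intro A hA hA'
    by_contra h
    exact hA' (by rw [hs'def, Finset.mem_filter]; exact ⟨hA, h⟩)
  have hred : (∑ A ∈ s, ∑ C ∈ s, (starRingEnd ℂ) (F A) * M A C * F C)
      = ∑ A ∈ s', ∑ C ∈ s', (starRingEnd ℂ) (F A) * M A C * F C := by
    have hss : s' ⊆ s := Finset.filter_subset _ s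
    rw [← Finset.sum_subset hss (fun A hA hA' => by simp [hFz A hA hA'])]
    refine Finset.sum_congr rfl fun A hA => ?_
    exact (Finset.sum_subset hss (fun C hC hC' => by simp [hFz C hC hC'])).symm
  set X : Finset E → Finset E → ℂ := fun B C =>
    if B ⊆ C ∧ B.card + 1 = C.card then
      ∑ y ∈ C \ B, (ε y C : ℂ) * (starRingEnd ℂ) (φ y) else 0 with hX
  set T : Finset (Finset E) := s'.biUnion (fun A => A.image A.erase) with hT
  -- generic vanishing lemma
  have hXz : ∀ B C, ¬ (B ⊆ C ∧ B.card + 1 = C.card) → X B C = 0 := by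
    intro B C h
    rw [hX]
    simp only [h, if_false]
  -- key lemma : M = X* X on s'
  have hkey : ∀ A ∈ s', ∀ C ∈ s', M A C
      = ∑ B ∈ T, (starRingEnd ℂ) (X B A) * X B C := by
    intro A hAs C hCs
    have hA : A.card = n := hcard A hAs
    have hC : C.card = n := hcard C hCs
    rw [hM A (hmem A hAs) C (hmem C hCs)]
    by_cases hAC : A = C
    · subst hAC
      rw [if_pos rfl]
      have hsub : A.image A.erase ⊆ T := fun B hB => Finset.mem_biUnion.2 ⟨A, hAs, hB⟩
      rw [← Finset.sum_subset hsub (by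
        intro B hBT hBI
        have hXzz : X B A = 0 := by
          by_cases hc : B ⊆ A ∧ B.card + 1 = A.card
          · exfalso
            obtain ⟨x, hx⟩ : (A \ B).Nonempty := by
              rw [← Finset.card_pos, Finset.card_sdiff_of_subset hc.1]
              omega
            rw [Finset.mem_sdiff] at hx
            have hBe : B = A.erase x := by
              apply Finset.eq_of_subset_of_card_le
              · intro b hb
                rw [Finset.mem_erase]
                exact ⟨fun hbx => hx.2 (hbx ▸ hb), hc.1 hb⟩
              · rw [Finset.card_erase_of_mem hx.1]
                omega
            exact hBI (Finset.mem_image.2 ⟨x, hx.1, hBe.symm⟩)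
          · exact hXz B A hc
        simp [hXzz])]
      rw [Finset.sum_image (fun x hx y hy hxy => Finset.erase_injOn A hx hy hxy)]
      refine Finset.sum_congr rfl fun x hx => ?_
      have h1 : X (A.erase x) A = (ε x A : ℂ) * (starRingEnd ℂ) (φ x) := by
        rw [hX]
        simp only
        rw [if_pos ⟨Finset.erase_subset _ _, by rw [Finset.card_erase_of_mem hx]; omega⟩,
          Finset.sdiff_erase_self hx, Finset.sum_singleton]
      rw [h1, map_mul, Complex.conj_ofReal, Complex.conj_conj]
      have h2 : (↑(ε x A) * φ x) * ((↑(ε x A) : ℂ) * (starRingEnd ℂ) (φ x))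
          = ((ε x A : ℂ))^2 * (φ x * (starRingEnd ℂ) (φ x)) := by ring
      rw [h2, Complex.mul_conj']
      rcases hε x A with h | h <;> rw [h] <;> norm_num
    · rw [if_neg hAC]
      have hsmall : ∀ B, B ⊆ A → B ⊆ C → B.card + 1 = n → B = A ∩ C ∧ (A ∩ C).card = n - 1 := by
        intro B h1 h2 h3
        have hBI : B ⊆ A ∩ C := Finset.subset_inter h1 h2
        have hle : (A ∩ C).card ≤ n := hA ▸ Finset.card_le_card Finset.inter_subset_left
        have hne : (A ∩ C).card ≠ n := by
          intro h
          apply hAC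
          have h4 : A ∩ C = A :=
            Finset.eq_of_subset_of_card_le Finset.inter_subset_left (by omega)
          exact Finset.eq_of_subset_of_card_le (h4 ▸ Finset.inter_subset_right) (by omega)
        have hge : n - 1 ≤ (A ∩ C).card := by
          have := Finset.card_le_card hBI
          omega
        have hcc : (A ∩ C).card = n - 1 := by omega
        exact ⟨Finset.eq_of_subset_of_card_le hBI (by omega), hcc⟩
      by_cases hI : (A ∩ C).card = n - 1
      · rw [if_pos hI]
        obtain ⟨x, hxx⟩ : ∃ x, A \ C = {x} := by
          rw [← Finset.card_eq_one]
          have h1 : A \ C = A \ (A ∩ C) := by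
            rw [Finset.sdiff_inter_self_left]
          rw [h1, Finset.card_sdiff_of_subset Finset.inter_subset_left, hA, hI]
          omega
        have hxA : x ∈ A ∧ x ∉ C := by
          have : x ∈ A \ C := hxx ▸ Finset.mem_singleton_self x
          simpa [Finset.mem_sdiff] using this
        have hB0 : A ∩ C = A.erase x := by
          rw [← Finset.sdiff_sdiff_self_left A C, hxx, Finset.sdiff_singleton_eq_erase]
        have hB0T : A ∩ C ∈ T := by
          rw [hT]
          exact Finset.mem_biUnion.2 ⟨A, hAs,
            Finset.mem_image.2 ⟨x, hxA.1, hB0.symm⟩⟩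
        rw [Finset.sum_eq_single_of_mem (A ∩ C) hB0T (by
          intro B hBT hBne
          by_cases h1 : B ⊆ A ∧ B.card + 1 = A.card
          · by_cases h2 : B ⊆ C ∧ B.card + 1 = C.card
            · exact absurd ((hsmall B h1.1 h2.1 (hA ▸ h1.2)).1) hBne
            · simp [hXz B C h2]
          · simp [hXz B A h1])]
        have hXA : X (A ∩ C) A = ∑ y ∈ A \ C, (ε y A : ℂ) * (starRingEnd ℂ) (φ y) := by
          rw [hX]
          simp only
          rw [if_pos ⟨Finset.inter_subset_left, by rw [hI, hA]; omega⟩,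
            Finset.sdiff_inter_self_left]
        have hXC : X (A ∩ C) C = ∑ y ∈ C \ A, (ε y C : ℂ) * (starRingEnd ℂ) (φ y) := by
          rw [hX]
          simp only
          rw [if_pos ⟨Finset.inter_subset_right, by rw [hI, hC]; omega⟩,
            Finset.sdiff_inter_self_right]
        rw [hXA, hXC, map_sum, Finset.sum_mul]
        refine Finset.sum_congr rfl fun a ha => ?_
        rw [Finset.mul_sum]
        refine Finset.sum_congr rfl fun b hb => ?_
        rw [map_mul, Complex.conj_conj, Complex.conj_ofReal]
        ring
      · rw [if_neg hI]
        refine (Finset.sum_eq_zero fun B hBT => ?_).symm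
        by_cases h1 : B ⊆ A ∧ B.card + 1 = A.card
        · by_cases h2 : B ⊆ C ∧ B.card + 1 = C.card
          · exact absurd (hsmall B h1.1 h2.1 (hA ▸ h1.2)).2 hI
          · simp [hXz B C h2]
        · simp [hXz B A h1]
  -- assemble
  rw [hred]
  have hmain : (∑ A ∈ s', ∑ C ∈ s', (starRingEnd ℂ) (F A) * M A C * F C)
      = ∑ B ∈ T, (Complex.normSq (∑ C ∈ s', X B C * F C) : ℂ) := by
    calc (∑ A ∈ s', ∑ C ∈ s', (starRingEnd ℂ) (F A) * M A C * F C)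
        = ∑ A ∈ s', ∑ C ∈ s', ∑ B ∈ T,
            (starRingEnd ℂ) (X B A * F A) * (X B C * F C) := by
          refine Finset.sum_congr rfl fun A hA => Finset.sum_congr rfl fun C hC => ?_
          rw [hkey A hA C hC, Finset.mul_sum, Finset.sum_mul]
          refine Finset.sum_congr rfl fun B hB => ?_
          rw [map_mul]
          ring
      _ = ∑ A ∈ s', ∑ B ∈ T, ∑ C ∈ s',
            (starRingEnd ℂ) (X B A * F A) * (X B C * F C) := by
          exact Finset.sum_congr rfl fun A hA => Finset.sum_comm
      _ = ∑ B ∈ T, ∑ A ∈ s', ∑ C ∈ s',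
            (starRingEnd ℂ) (X B A * F A) * (X B C * F C) := Finset.sum_comm
      _ = ∑ B ∈ T, (starRingEnd ℂ) (∑ A ∈ s', X B A * F A) * (∑ C ∈ s', X B C * F C) := by
          refine Finset.sum_congr rfl fun B hB => ?_
          rw [map_sum, Finset.sum_mul]
          exact Finset.sum_congr rfl fun A hA => (Finset.mul_sum _ _ _).symm
      _ = ∑ B ∈ T, (Complex.normSq (∑ C ∈ s', X B C * F C) : ℂ) := by
          refine Finset.sum_congr rfl fun B hB => ?_
          rw [mul_comm, Complex.mul_conj]
  rw [hmain]
  constructor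
  · rw [Complex.re_sum]
    refine Finset.sum_nonneg fun B hB => ?_
    simp [Complex.normSq_nonneg]
  · rw [Complex.im_sum]
    refine Finset.sum_eq_zero fun B hB => ?_
    simp
end

section
/- Let (E, ℱ, μ) be a measure space and let φ_1, …, φ_{n+1} : E → ℂ be measurable functions that are orthonormal, i.e. ∫_E φ_i(x) · conj(φ_j(x)) dμ(x) = δ_{ij} for all 1 ≤ i, j ≤ n+1. Then for every (x_1, …, x_n) ∈ E^n, ∫_E conj(φ_{n+1}(t)) · det((φ_i(z_j))_{1 ≤ i,j ≤ n+1}) dμ(t) = det((φ_i(x_j))_{1 ≤ i,j ≤ n}), where (z_1, …, z_{n+1}) = (x_1, …, x_n, t). -/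
open MeasureTheory ENNReal

theorem stmt_11 {E : Type*} [MeasurableSpace E] (μ : Measure E) [SigmaFinite μ]
    (n : ℕ) (φ : Fin (n + 1) → E → ℂ) (hmeas : ∀ i, Measurable (φ i))
    (horth : ∀ i j, ∫ x, φ i x * (starRingEnd ℂ) (φ j x) ∂μ = if i = j then 1 else 0)
    (x : Fin n → E) :
    ∫ t, (starRingEnd ℂ) (φ (Fin.last n) t) *
        Matrix.det (Matrix.of fun i j : Fin (n + 1) =>
          φ i ((Fin.snoc x t : Fin (n + 1) → E) j)) ∂μ
      = Matrix.det (Matrix.of fun i j : Fin n => φ (Fin.castSucc i) (x j)) := by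
  have hae : ∀ i, AEStronglyMeasurable (φ i) μ := fun i => (hmeas i).aestronglyMeasurable
  have hL2 : ∀ i, MemLp (φ i) 2 μ := by
    intro i
    rw [memLp_two_iff_integrable_sq_norm (hae i)]
    have hInt : Integrable (fun x => φ i x * (starRingEnd ℂ) (φ i x)) μ := by
      by_contra h
      have h1 := horth i i
      rw [if_pos rfl, integral_undef h] at h1
      exact one_ne_zero h1.symm
    have h2 := hInt.re
    refine h2.congr (Filter.Eventually.of_forall fun y => ?_)
    simp [Complex.mul_conj, Complex.normSq_eq_norm_sq, sq]
  have hconj : ∀ j, MemLp (fun y => (starRingEnd ℂ) (φ j y)) 2 μ := by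
    intro j
    refine ⟨(Complex.continuous_conj).comp_aestronglyMeasurable (hae j), ?_⟩
    rw [show (fun y => (starRingEnd ℂ) (φ j y)) = (starRingEnd (E → ℂ)) (φ j) from rfl,
      eLpNorm_conj]
    exact (hL2 j).2
  have hint : ∀ i j, Integrable (fun y => φ i y * (starRingEnd ℂ) (φ j y)) μ := by
    intro i j
    have h12 : (1 : ENNReal) / 1 = 1 / 2 + 1 / 2 := by
      rw [ENNReal.div_add_div_same, one_div, inv_one, one_add_one_eq_two,
        ENNReal.div_self two_ne_zero ENNReal.ofNat_ne_top]
    have := memLp_one_iff_integrable.mp ((hconj j).smul (hL2 i) (p := 2) (q := 2) (r := 1))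
    exact this.congr (Filter.Eventually.of_forall fun y => by simp [smul_eq_mul, mul_comm])
  -- expand determinant along last column
  have hdet : ∀ t : E,
      Matrix.det (Matrix.of fun i j : Fin (n + 1) =>
          φ i ((Fin.snoc x t : Fin (n + 1) → E) j))
        = ∑ i : Fin (n + 1), ((-1 : ℂ)) ^ ((i : ℕ) + n) *
            Matrix.det (Matrix.of fun k l : Fin n => φ (i.succAbove k) (x l)) * φ i t := by
    intro t
    rw [Matrix.det_succ_column _ (Fin.last n)]
    refine Finset.sum_congr rfl fun i _ => ?_
    have h1 : (Fin.last n).succAbove = Fin.castSucc := Fin.succAbove_last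
    have h2 : ((Matrix.of fun i j : Fin (n+1) => φ i ((Fin.snoc x t : Fin (n+1) → E) j)).submatrix
        i.succAbove Fin.castSucc) = Matrix.of fun k l : Fin n => φ (i.succAbove k) (x l) := by
      ext k l
      simp [Fin.snoc_castSucc]
    rw [h1, h2]
    simp only [Matrix.of_apply, Fin.snoc_last, Fin.val_last]
    ring
  calc ∫ t, (starRingEnd ℂ) (φ (Fin.last n) t) *
        Matrix.det (Matrix.of fun i j : Fin (n + 1) =>
          φ i ((Fin.snoc x t : Fin (n + 1) → E) j)) ∂μ
      = ∫ t, ∑ i : Fin (n + 1), ((-1 : ℂ)) ^ ((i : ℕ) + n) *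
            Matrix.det (Matrix.of fun k l : Fin n => φ (i.succAbove k) (x l)) *
            (φ i t * (starRingEnd ℂ) (φ (Fin.last n) t)) ∂μ := by
        refine integral_congr_ae (Filter.Eventually.of_forall fun t => ?_)
        dsimp only
        rw [hdet t, Finset.mul_sum]
        exact Finset.sum_congr rfl fun i _ => by ring
    _ = ∑ i : Fin (n + 1), ((-1 : ℂ)) ^ ((i : ℕ) + n) *
            Matrix.det (Matrix.of fun k l : Fin n => φ (i.succAbove k) (x l)) *
            ∫ t, φ i t * (starRingEnd ℂ) (φ (Fin.last n) t) ∂μ := by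
        rw [integral_finset_sum]
        · exact Finset.sum_congr rfl fun i _ => integral_const_mul _ _
        · exact fun i _ => (hint i (Fin.last n)).const_mul _
    _ = Matrix.det (Matrix.of fun i j : Fin n => φ (Fin.castSucc i) (x j)) := by
        rw [Finset.sum_eq_single (Fin.last n)]
        · rw [horth, if_pos rfl, mul_one, Fin.val_last, ← two_mul, pow_mul]
          simp [Fin.succAbove_last]
        · intro i _ hi
          rw [horth, if_neg hi, mul_zero]
        · simp
end

section
/- Let (E, ℱ, μ) be a measure space and let φ_1, …, φ_{n+1} : E → ℂ be measurable functions that are orthonormal, i.e. ∫_E φ_i(x) · conj(φ_j(x)) dμ(x) = δ_{ij}. For x ∈ E^n write K_n(x) for the matrix (φ_i(x_j))_{1 ≤ i,j ≤ n}, and for y ∈ E^{n+1} and 1 ≤ k ≤ n+1 write ŷ_k ∈ E^n for the vector obtained by deleting the k-th coordinate of y. Let 𝒜 ⊆ E^n be a measurable set invariant under all permutations of coordinates. Then (1/n!) ∫_𝒜 |det(K_n(x))|² dμ^{⊗n}(x) ≥ (1/(n+1)!) ∫_{E^{n+1}} | Σ_{k : ŷ_k ∈ 𝒜} (−1)^k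 · φ_{n+1}(y_k) · det(K_n(ŷ_k)) |² dμ^{⊗(n+1)}(y). -/
set_option maxHeartbeats 1000000

open MeasureTheory

section Stmt12Aux

open Fin


lemma stmt12_ins_eq_cons {α : Type*} {n : ℕ} (c : Fin (n+1)) (u : α) (z : Fin n → α) :
    Fin.insertNth c u z = Fin.cons u z ∘ c.cycleRange := by
  funext m
  induction m using c.succAboveCases with
  | x => simp [Fin.insertNth_apply_same, Fin.cycleRange_self]
  | p j =>
      have h1 : c.cycleRange (c.succAbove j) = j.succ := by
        rw [← Fin.cycleRange_symm_succ c j]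
        exact Equiv.apply_symm_apply _ _
      simp [Fin.insertNth_apply_succAbove, Function.comp, h1]

lemma stmt12_succAbove_comp {n : ℕ} {k l : Fin (n+2)} {mI b : Fin (n+1)}
    (hm : k.succAbove mI = l) (hb : l.succAbove b = k) :
    l.succAbove ∘ b.succAbove = k.succAbove ∘ mI.succAbove := by
  have inst : WellFoundedLT (Fin n) := inferInstance
  refine @Set.range_injOn_strictMono (Fin n) (Fin (n+2)) _ _ inst _
    (Set.mem_setOf.mpr ((Fin.strictMono_succAbove l).comp (Fin.strictMono_succAbove b))) _
    (Set.mem_setOf.mpr ((Fin.strictMono_succAbove k).comp (Fin.strictMono_succAbove mI))) ?_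
  have h1 : Set.range (l.succAbove ∘ b.succAbove) = {l, k}ᶜ := by
    ext x
    simp only [Set.range_comp, Fin.range_succAbove, Set.mem_image, Set.mem_compl_iff,
      Set.mem_singleton_iff, Set.mem_insert_iff]
    constructor
    · rintro ⟨j, hj, rfl⟩
      push_neg
      refine ⟨Fin.succAbove_ne l j, ?_⟩
      rw [← hb]
      exact fun h => hj (Fin.succAbove_right_injective h)
    · rintro h
      push_neg at h
      obtain ⟨j, rfl⟩ := Fin.exists_succAbove_eq (Ne.symm h.1 : l ≠ x).symm
      exact ⟨j, fun hj => h.2 (by rw [hj, hb]), rfl⟩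
  have h2 : Set.range (k.succAbove ∘ mI.succAbove) = {k, l}ᶜ := by
    ext x
    simp only [Set.range_comp, Fin.range_succAbove, Set.mem_image, Set.mem_compl_iff,
      Set.mem_singleton_iff, Set.mem_insert_iff]
    constructor
    · rintro ⟨j, hj, rfl⟩
      push_neg
      refine ⟨Fin.succAbove_ne k j, ?_⟩
      rw [← hm]
      exact fun h => hj (Fin.succAbove_right_injective h)
    · rintro h
      push_neg at h
      obtain ⟨j, rfl⟩ := Fin.exists_succAbove_eq (Ne.symm h.1 : k ≠ x).symm
      exact ⟨j, fun hj => h.2 (by rw [hj, hm]), rfl⟩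
  rw [h1, h2, Set.pair_comm]

lemma stmt12_parity_odd {n : ℕ} {k l : Fin (n+2)} {mI b : Fin (n+1)}
    (hkl : k ≠ l) (hm : k.succAbove mI = l) (hb : l.succAbove b = k) :
    Odd ((k : ℕ) + l + mI + b) := by
  have hkl' : (k : ℕ) ≠ (l : ℕ) := fun h => hkl (Fin.val_injective h)
  have f1 : ∀ (p : Fin (n+2)) (i : Fin (n+1)), ((p.succAbove i : ℕ) = i ∧ (i:ℕ) < (p:ℕ)) ∨
      ((p.succAbove i : ℕ) = (i:ℕ) + 1 ∧ (p:ℕ) ≤ (i:ℕ)) := by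
    intro p i
    rcases lt_or_ge (Fin.castSucc i) p with h | h
    · left
      rw [Fin.succAbove_of_castSucc_lt _ _ h]
      exact ⟨rfl, h⟩
    · right
      rw [Fin.succAbove_of_le_castSucc _ _ h]
      exact ⟨rfl, h⟩
  rw [Nat.odd_iff]
  rcases f1 k mI with ⟨h1, h2⟩ | ⟨h1, h2⟩ <;> rcases f1 l b with ⟨h3, h4⟩ | ⟨h3, h4⟩ <;>
    rw [hm] at h1 <;> rw [hb] at h3 <;> omega


variable {E : Type*} [MeasurableSpace E] {μ : Measure E} [SigmaFinite μ]


lemma stmt12_det_perm {n : ℕ} (v : Fin n → E → ℂ) (x : Fin n → E) (σ : Equiv.Perm (Fin n)) :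
    (Matrix.of fun i j : Fin n => v i (x (σ j))).det
      = ((Equiv.Perm.sign σ : ℤ) : ℂ) * (Matrix.of fun i j : Fin n => v i (x j)).det := by
  have h := Matrix.det_permute' σ (Matrix.of fun i j : Fin n => v i (x j))
  exact h

lemma stmt12_mul_conj_int {α : Type*} [MeasurableSpace α] {ν : Measure α} {f g : α → ℂ}
    (hf : Measurable f) (hg : Measurable g) (hf2 : Integrable (fun a => ‖f a‖^2) ν)
    (hg2 : Integrable (fun a => ‖g a‖^2) ν) :
    Integrable (fun a => f a * (starRingEnd ℂ) (g a)) ν := by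
  refine Integrable.mono' (((hf2.add hg2).div_const 2)) ?_ ?_
  · exact (hf.mul (continuous_star.measurable.comp hg)).aestronglyMeasurable
  · filter_upwards with a
    simp only [Pi.add_apply]
    rw [norm_mul, RCLike.norm_conj]
    nlinarith [sq_nonneg (‖f a‖ - ‖g a‖), norm_nonneg (f a), norm_nonneg (g a)]

lemma stmt12_det_measurable {n : ℕ} (v : Fin n → E → ℂ) (hv : ∀ i, Measurable (v i)) :
    Measurable fun x : Fin n → E => (Matrix.of fun i j : Fin n => v i (x j)).det := by
  simp_rw [Matrix.det_apply']
  refine Finset.measurable_sum _ fun σ _ => Measurable.const_mul ?_ _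
  exact Finset.measurable_prod _ fun j _ => (hv _).comp (measurable_pi_apply j)

lemma stmt12_det_sq_int {n : ℕ} (v : Fin n → E → ℂ) (hv : ∀ i, Measurable (v i))
    (hv2 : ∀ i, Integrable (fun a => ‖v i a‖^2) μ) :
    Integrable (fun x : Fin n → E => ‖(Matrix.of fun i j : Fin n => v i (x j)).det‖^2)
      (Measure.pi fun _ : Fin n => μ) := by
  letI : MeasureSpace E := ⟨μ⟩
  set D : (Fin n → E) → ℂ := fun x => (Matrix.of fun i j : Fin n => v i (x j)).det with hD
  have key : Integrable (fun x : Fin n → E => D x * (starRingEnd ℂ) (D x))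
      (Measure.pi fun _ : Fin n => μ) := by
    have e1 : ∀ x : Fin n → E, D x * (starRingEnd ℂ) (D x)
        = ∑ σ : Equiv.Perm (Fin n), ∑ τ : Equiv.Perm (Fin n),
          (((Equiv.Perm.sign σ : ℤ) : ℂ) * (starRingEnd ℂ) ((Equiv.Perm.sign τ : ℤ) : ℂ)) *
            ∏ j : Fin n, (v (σ j) (x j) * (starRingEnd ℂ) (v (τ j) (x j))) := by
      intro x
      rw [hD]
      simp only [Matrix.det_apply', Matrix.of_apply, map_sum, Finset.sum_mul_sum, map_mul,
        map_prod]
      refine Finset.sum_congr rfl fun σ _ => Finset.sum_congr rfl fun τ _ => ?_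
      rw [Finset.prod_mul_distrib]
      ring
    rw [show (Measure.pi fun _ : Fin n => μ) = (volume : Measure (Fin n → E)) from rfl]
    refine (integrable_finset_sum _ fun σ _ => integrable_finset_sum _ fun τ _ => ?_).congr
      (Filter.Eventually.of_forall fun x => (e1 x).symm) |>.congr ?_
    · refine (Integrable.fin_nat_prod (f := fun j a => v (σ j) a * (starRingEnd ℂ) (v (τ j) a))
        fun j => ?_).const_mul _
      exact stmt12_mul_conj_int (hv _) (hv _) (hv2 _) (hv2 _)
    · exact Filter.Eventually.of_forall fun x => rfl
  have hre := key.re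
  refine hre.congr (Filter.Eventually.of_forall fun x => ?_)
  show RCLike.re (D x * (starRingEnd ℂ) (D x)) = ‖(Matrix.of fun i j : Fin n => v i (x j)).det‖^2
  rw [Complex.mul_conj]
  simp [Complex.normSq_eq_norm_sq, ← Complex.ofReal_pow]
  rfl


lemma stmt12_diag {n : ℕ} (ψ : E → ℂ) (Di : (Fin n → E) → ℂ)
    (hψ1 : ∫ a, ‖ψ a‖^2 ∂μ = 1) (k : Fin (n+1)) :
    ∫ y : Fin (n+1) → E, ‖(-1 : ℂ) ^ ((k : ℕ) + 1) * ψ (y k) * Di (fun i => y (k.succAbove i))‖^2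
        ∂(Measure.pi fun _ : Fin (n+1) => μ)
      = ∫ w : Fin n → E, ‖Di w‖^2 ∂(Measure.pi fun _ : Fin n => μ) := by
  have mp := measurePreserving_piFinSuccAbove (fun _ : Fin (n+1) => μ) k
  have h2 := mp.integral_comp' (g := fun p : E × (Fin n → E) => ‖ψ p.1‖^2 * ‖Di p.2‖^2)
  calc ∫ y : Fin (n+1) → E,
        ‖(-1 : ℂ) ^ ((k : ℕ) + 1) * ψ (y k) * Di (fun i => y (k.succAbove i))‖^2
        ∂(Measure.pi fun _ : Fin (n+1) => μ)
      = ∫ y : Fin (n+1) → E, ‖ψ (y k)‖^2 * ‖Di (fun i => y (k.succAbove i))‖^2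
        ∂(Measure.pi fun _ : Fin (n+1) => μ) := by
        congr 1
        funext y
        rw [norm_mul, norm_mul, norm_pow, norm_neg, norm_one, one_pow, one_mul, mul_pow]
    _ = ∫ p : E × (Fin n → E), ‖ψ p.1‖^2 * ‖Di p.2‖^2
        ∂(μ.prod (Measure.pi fun _ : Fin n => μ)) := h2
    _ = (∫ a, ‖ψ a‖^2 ∂μ) * ∫ w : Fin n → E, ‖Di w‖^2 ∂(Measure.pi fun _ : Fin n => μ) :=
        integral_prod_mul (fun a => ‖ψ a‖^2) (fun w => ‖Di w‖^2)
    _ = ∫ w : Fin n → E, ‖Di w‖^2 ∂(Measure.pi fun _ : Fin n => μ) := by rw [hψ1, one_mul]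


lemma stmt12_A_meas {n : ℕ} (ψ : E → ℂ) (Di : (Fin n → E) → ℂ)
    (hψm : Measurable ψ) (hDim : Measurable Di) (k : Fin (n+1)) :
    Measurable (fun y : Fin (n+1) → E =>
      (-1 : ℂ) ^ ((k : ℕ) + 1) * ψ (y k) * Di (fun i => y (k.succAbove i))) := by
  refine ((measurable_const.mul (hψm.comp (measurable_pi_apply k))).mul (hDim.comp ?_))
  exact measurable_pi_lambda _ fun i => measurable_pi_apply _

lemma stmt12_B_int {n : ℕ} (ψ : E → ℂ) (Di : (Fin n → E) → ℂ)
    (hψm : Measurable ψ) (hψ2 : Integrable (fun a => ‖ψ a‖^2) μ)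
    (hDim : Measurable Di)
    (hDi2 : Integrable (fun x => ‖Di x‖^2) (Measure.pi fun _ : Fin n => μ))
    (k : Fin (n+1)) :
    Integrable (fun y : Fin (n+1) → E => ‖ψ (y k)‖^2 * ‖Di (fun i => y (k.succAbove i))‖^2)
      (Measure.pi fun _ : Fin (n+1) => μ) := by
  have mp := measurePreserving_piFinSuccAbove (fun _ : Fin (n+1) => μ) k
  have hprod : Integrable (fun p : E × (Fin n → E) => ‖ψ p.1‖^2 * ‖Di p.2‖^2)
      (μ.prod (Measure.pi fun _ : Fin n => μ)) := hψ2.mul_prod hDi2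
  exact (mp.integrable_comp_emb (MeasurableEquiv.measurableEmbedding _)).mpr hprod

lemma stmt12_cross_int {n : ℕ} (ψ : E → ℂ) (Di : (Fin n → E) → ℂ)
    (hψm : Measurable ψ) (hψ2 : Integrable (fun a => ‖ψ a‖^2) μ)
    (hDim : Measurable Di)
    (hDi2 : Integrable (fun x => ‖Di x‖^2) (Measure.pi fun _ : Fin n => μ))
    (k l : Fin (n+1)) :
    Integrable (fun y : Fin (n+1) → E =>
        ((-1 : ℂ) ^ ((k : ℕ) + 1) * ψ (y k) * Di (fun i => y (k.succAbove i))) *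
          (starRingEnd ℂ) ((-1 : ℂ) ^ ((l : ℕ) + 1) * ψ (y l) * Di (fun i => y (l.succAbove i))))
      (Measure.pi fun _ : Fin (n+1) => μ) := by
  refine Integrable.mono'
    (((stmt12_B_int ψ Di hψm hψ2 hDim hDi2 k).add
      (stmt12_B_int ψ Di hψm hψ2 hDim hDi2 l)).div_const 2) ?_ ?_
  · exact ((stmt12_A_meas ψ Di hψm hDim k).mul
      (continuous_star.measurable.comp (stmt12_A_meas ψ Di hψm hDim l))).aestronglyMeasurable
  · filter_upwards with y
    simp only [Pi.add_apply]
    rw [norm_mul, RCLike.norm_conj, norm_mul, norm_mul, norm_mul, norm_mul, norm_pow, norm_pow,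
      norm_neg, norm_one, one_pow, one_pow, one_mul, one_mul]
    set a := ‖ψ (y k)‖; set b := ‖Di fun i => y (k.succAbove i)‖
    set c := ‖ψ (y l)‖; set d := ‖Di fun i => y (l.succAbove i)‖
    have ha : 0 ≤ a := norm_nonneg _
    have hb : 0 ≤ b := norm_nonneg _
    have hc : 0 ≤ c := norm_nonneg _
    have hd : 0 ≤ d := norm_nonneg _
    nlinarith [sq_nonneg (a*b - c*d)]


lemma stmt12_integral_ofReal {α : Type*} [MeasurableSpace α] {ν : Measure α} (f : α → ℝ) :
    ∫ a, ((f a : ℝ) : ℂ) ∂ν = ((∫ a, f a ∂ν : ℝ) : ℂ) := integral_ofReal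

lemma stmt12_cross {m : ℕ} (ψ : E → ℂ) (Di : (Fin (m+1) → E) → ℂ)
    (hψm : Measurable ψ) (hψ2 : Integrable (fun a => ‖ψ a‖^2) μ)
    (hDim : Measurable Di)
    (hDi2 : Integrable (fun x => ‖Di x‖^2) (Measure.pi fun _ : Fin (m+1) => μ))
    (hDins : ∀ (c : Fin (m+1)) (u : E) (z : Fin m → E),
      Di (Fin.insertNth c u z) = (-1 : ℂ)^(c : ℕ) * Di (Fin.cons u z))
    (k l : Fin (m+2)) (hkl : k ≠ l) :
    ∫ y : Fin (m+2) → E,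
        ((-1 : ℂ) ^ ((k : ℕ) + 1) * ψ (y k) * Di (fun i => y (k.succAbove i))) *
          (starRingEnd ℂ) ((-1 : ℂ) ^ ((l : ℕ) + 1) * ψ (y l) * Di (fun i => y (l.succAbove i)))
        ∂(Measure.pi fun _ : Fin (m+2) => μ)
      = -((∫ z : Fin m → E, ‖∫ u : E, ψ u * (starRingEnd ℂ) (Di (Fin.cons u z)) ∂μ‖^2
          ∂(Measure.pi fun _ : Fin m => μ) : ℝ) : ℂ) := by
  obtain ⟨mI, hmI⟩ := Fin.exists_succAbove_eq hkl.symm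
  obtain ⟨b, hb⟩ := Fin.exists_succAbove_eq hkl
  set π0 : Measure (Fin m → E) := Measure.pi fun _ => μ with hπ0
  set P : E × (Fin m → E) → ℂ := fun q => ψ q.1 * (starRingEnd ℂ) (Di (Fin.cons q.1 q.2))
    with hP
  set Q : E × (Fin m → E) → ℂ := fun q => (starRingEnd ℂ) (ψ q.1) * Di (Fin.cons q.1 q.2)
    with hQ
  set H : (Fin m → E) → ℂ := fun z => ∫ u, ψ u * (starRingEnd ℂ) (Di (Fin.cons u z)) ∂μ with hH
  set R : E × (E × (Fin m → E)) → ℂ := fun p => -(P (p.1, p.2.2) * Q (p.2.1, p.2.2)) with hR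
  set E3 : (Fin (m+2) → E) ≃ᵐ E × (E × (Fin m → E)) :=
    (MeasurableEquiv.piFinSuccAbove (fun _ : Fin (m+2) => E) k).trans
      ((MeasurableEquiv.refl E).prodCongr
        (MeasurableEquiv.piFinSuccAbove (fun _ : Fin (m+1) => E) mI)) with hE3
  have mp3 : MeasurePreserving E3 (Measure.pi fun _ : Fin (m+2) => μ) (μ.prod (μ.prod π0)) :=
    ((MeasurePreserving.id μ).prod
        (measurePreserving_piFinSuccAbove (fun _ : Fin (m+1) => μ) mI)).comp
      (measurePreserving_piFinSuccAbove (fun _ : Fin (m+2) => μ) k)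
  -- the pointwise identity
  have hsign : ((-1:ℂ))^(((k:ℕ)+1) + (((l:ℕ)+1) + ((mI:ℕ) + (b:ℕ)))) = -1 := by
    refine Odd.neg_one_pow ?_
    obtain ⟨t, ht⟩ := stmt12_parity_odd hkl hmI hb
    exact ⟨t + 1, by omega⟩
  have hpt : ∀ y : Fin (m+2) → E,
      ((-1 : ℂ) ^ ((k : ℕ) + 1) * ψ (y k) * Di (fun i => y (k.succAbove i))) *
        (starRingEnd ℂ) ((-1 : ℂ) ^ ((l : ℕ) + 1) * ψ (y l) * Di (fun i => y (l.succAbove i)))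
      = R (E3 y) := by
    intro y
    set u : E := y k with hu
    set w : Fin (m+1) → E := fun i => y (k.succAbove i) with hw
    set v : E := w mI with hv
    set z : Fin m → E := fun i => w (mI.succAbove i) with hz
    have hyl : y l = v := by rw [← hmI]
    have hw0 : Fin.insertNth mI v z = w := Fin.insertNth_self_removeNth mI w
    have hw' : Di w = (-1:ℂ)^(mI:ℕ) * Di (Fin.cons v z) := by
      rw [← hw0, hDins]
    have hel : (fun i => y (l.succAbove i)) = Fin.insertNth b u z := by
      funext i
      induction i using b.succAboveCases with
      | x => rw [Fin.insertNth_apply_same, hb]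
      | p j =>
          rw [Fin.insertNth_apply_succAbove]
          have := congrFun (stmt12_succAbove_comp hmI hb) j
          simp only [Function.comp_apply] at this
          rw [this]
    have hbl : Di (fun i => y (l.succAbove i)) = (-1:ℂ)^(b:ℕ) * Di (Fin.cons u z) := by
      rw [hel]; exact hDins b u z
    show ((-1 : ℂ) ^ ((k : ℕ) + 1) * ψ u * Di w) *
        (starRingEnd ℂ) ((-1 : ℂ) ^ ((l : ℕ) + 1) * ψ (y l) * Di (fun i => y (l.succAbove i)))
      = -(P (u, z) * Q (v, z))
    rw [hyl, hw', hbl, hP, hQ]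
    simp only [map_mul, map_pow, map_neg, map_one]
    linear_combination (ψ u * (starRingEnd ℂ) (Di (Fin.cons u z)) * ((starRingEnd ℂ) (ψ v)) *
      Di (Fin.cons v z)) * hsign
  -- integrability
  have hint := stmt12_cross_int ψ Di hψm hψ2 hDim hDi2 k l
  have hRE3 : Integrable (fun y => R (E3 y)) (Measure.pi fun _ : Fin (m+2) => μ) :=
    hint.congr (Filter.Eventually.of_forall hpt)
  have hRint : Integrable R (μ.prod (μ.prod π0)) :=
    (mp3.integrable_comp_emb E3.measurableEmbedding).mp hRE3
  have hPQ : Integrable (fun p : E × (E × (Fin m → E)) => P (p.1, p.2.2) * Q (p.2.1, p.2.2))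
      (μ.prod (μ.prod π0)) := by
    refine hRint.neg.congr (Filter.Eventually.of_forall fun p => ?_)
    show -(R p) = P (p.1, p.2.2) * Q (p.2.1, p.2.2)
    rw [hR]
    ring
  -- the computation
  calc ∫ y : Fin (m+2) → E,
        ((-1 : ℂ) ^ ((k : ℕ) + 1) * ψ (y k) * Di (fun i => y (k.succAbove i))) *
          (starRingEnd ℂ) ((-1 : ℂ) ^ ((l : ℕ) + 1) * ψ (y l) * Di (fun i => y (l.succAbove i)))
        ∂(Measure.pi fun _ : Fin (m+2) => μ)
      = ∫ y, R (E3 y) ∂(Measure.pi fun _ : Fin (m+2) => μ) := by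
        exact integral_congr_ae (Filter.Eventually.of_forall hpt)
    _ = ∫ p, R p ∂(μ.prod (μ.prod π0)) := mp3.integral_comp' R
    _ = -∫ p : E × (E × (Fin m → E)), P (p.1, p.2.2) * Q (p.2.1, p.2.2) ∂(μ.prod (μ.prod π0)) := by
        rw [← integral_neg]
    _ = -∫ q : E × (Fin m → E), ∫ u : E, P (u, q.2) * Q (q.1, q.2) ∂μ ∂(μ.prod π0) := by
        rw [integral_prod_symm _ hPQ]
    _ = -∫ q : E × (Fin m → E), H q.2 * Q q ∂(μ.prod π0) := by
        congr 1
        refine integral_congr_ae (Filter.Eventually.of_forall fun q => ?_)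
        show (∫ u : E, P (u, q.2) * Q (q.1, q.2) ∂μ) = H q.2 * Q q
        rw [integral_mul_const]
    _ = -∫ z : Fin m → E, ∫ v : E, H z * Q (v, z) ∂μ ∂π0 := by
        congr 1
        have hQH : Integrable (fun q : E × (Fin m → E) => H q.2 * Q q) (μ.prod π0) := by
          have h1 := hPQ.integral_prod_right
          refine h1.congr (Filter.Eventually.of_forall fun q => ?_)
          show (∫ u : E, P (u, q.2) * Q (q.1, q.2) ∂μ) = H q.2 * Q q
          rw [integral_mul_const]
        rw [integral_prod_symm _ hQH]
    _ = -∫ z : Fin m → E, H z * (starRingEnd ℂ) (H z) ∂π0 := by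
        congr 1
        refine integral_congr_ae (Filter.Eventually.of_forall fun z => ?_)
        show (∫ v : E, H z * Q (v, z) ∂μ) = H z * (starRingEnd ℂ) (H z)
        rw [integral_const_mul]
        congr 1
        rw [hH, ← integral_conj]
        refine integral_congr_ae (Filter.Eventually.of_forall fun v => ?_)
        rw [hQ]
        simp only [map_mul, RingHomCompTriple.comp_apply, RingHom.id_apply, Complex.conj_conj]
    _ = -((∫ z : Fin m → E, ‖H z‖^2 ∂π0 : ℝ) : ℂ) := by
        rw [← stmt12_integral_ofReal]
        congr 1
        refine integral_congr_ae (Filter.Eventually.of_forall fun z => ?_)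
        show H z * (starRingEnd ℂ) (H z) = ((‖H z‖^2 : ℝ) : ℂ)
        rw [Complex.mul_conj]
        simp [Complex.normSq_eq_norm_sq]


lemma stmt12_cross_all {n : ℕ} (ψ : E → ℂ) (Di : (Fin n → E) → ℂ)
    (hψm : Measurable ψ) (hψ2 : Integrable (fun a => ‖ψ a‖^2) μ)
    (hDim : Measurable Di)
    (hDi2 : Integrable (fun x => ‖Di x‖^2) (Measure.pi fun _ : Fin n => μ))
    (hDperm : ∀ (σ : Equiv.Perm (Fin n)) (x : Fin n → E),
      Di (x ∘ σ) = ((Equiv.Perm.sign σ : ℤ) : ℂ) * Di x) :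
    ∃ J : ℝ, 0 ≤ J ∧ ∀ k l : Fin (n+1), k ≠ l →
      ∫ y : Fin (n+1) → E,
          ((-1 : ℂ) ^ ((k : ℕ) + 1) * ψ (y k) * Di (fun i => y (k.succAbove i))) *
            (starRingEnd ℂ) ((-1 : ℂ) ^ ((l : ℕ) + 1) * ψ (y l) * Di (fun i => y (l.succAbove i)))
          ∂(Measure.pi fun _ : Fin (n+1) => μ) = -(J : ℂ) := by
  match n, Di, hDim, hDi2, hDperm with
  | 0, Di, hDim, hDi2, hDperm =>
      exact ⟨0, le_refl 0, fun k l hkl => (hkl (Fin.ext (by omega))).elim⟩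
  | (m+1), Di, hDim, hDi2, hDperm =>
      have hDins : ∀ (c : Fin (m+1)) (u : E) (z : Fin m → E),
          Di (Fin.insertNth c u z) = (-1 : ℂ)^(c : ℕ) * Di (Fin.cons u z) := by
        intro c u z
        rw [stmt12_ins_eq_cons c u z, hDperm (c.cycleRange) (Fin.cons u z),
          Fin.sign_cycleRange]
        norm_cast
      refine ⟨∫ z : Fin m → E, ‖∫ u : E, ψ u * (starRingEnd ℂ) (Di (Fin.cons u z)) ∂μ‖^2
          ∂(Measure.pi fun _ : Fin m => μ), ?_, ?_⟩
      · exact integral_nonneg fun z => by positivity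
      · intro k l hkl
        rw [stmt12_cross ψ Di hψm hψ2 hDim hDi2 hDins k l hkl]


end Stmt12Aux

theorem stmt_12 {E : Type*} [MeasurableSpace E] (μ : Measure E) [SigmaFinite μ]
    (n : ℕ) (φ : Fin (n + 1) → E → ℂ) (hmeas : ∀ i, Measurable (φ i))
    (horth : ∀ i j, ∫ x, φ i x * (starRingEnd ℂ) (φ j x) ∂μ = if i = j then 1 else 0)
    (𝒜 : Set (Fin n → E)) (h𝒜m : MeasurableSet 𝒜)
    (h𝒜sym : ∀ (σ : Equiv.Perm (Fin n)) (x : Fin n → E), x ∈ 𝒜 → x ∘ σ ∈ 𝒜) :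
    (1 / ((n + 1).factorial : ℝ)) *
        ∫ y : Fin (n + 1) → E,
          ‖∑ k : Fin (n + 1), Set.indicator 𝒜
              (fun x => (-1 : ℂ) ^ ((k : ℕ) + 1) * φ (Fin.last n) (y k) *
                Matrix.det (Matrix.of fun i j : Fin n => φ (Fin.castSucc i) (x j)))
              (fun i => y (k.succAbove i))‖ ^ 2
          ∂(Measure.pi fun _ : Fin (n + 1) => μ)
      ≤ (1 / (n.factorial : ℝ)) *
          ∫ x in 𝒜, ‖Matrix.det (Matrix.of fun i j : Fin n =>
            φ (Fin.castSucc i) (x j))‖ ^ 2 ∂(Measure.pi fun _ : Fin n => μ) := by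
  -- basic objects
  set ψ : E → ℂ := φ (Fin.last n) with hψdef
  set D : (Fin n → E) → ℂ := fun x => (Matrix.of fun i j : Fin n => φ (Fin.castSucc i) (x j)).det
    with hDdef
  set Di : (Fin n → E) → ℂ := 𝒜.indicator D with hDidef
  set A : Fin (n+1) → (Fin (n+1) → E) → ℂ :=
    fun k y => (-1 : ℂ) ^ ((k : ℕ) + 1) * ψ (y k) * Di (fun i => y (k.succAbove i)) with hAdef
  -- facts about φ
  have hφ2 : ∀ i, Integrable (fun a => ‖φ i a‖^2) μ := by
    intro i
    have h := horth i i
    rw [if_pos rfl] at h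
    have hni : Integrable (fun a => φ i a * (starRingEnd ℂ) (φ i a)) μ := by
      by_contra hc
      rw [integral_undef hc] at h
      exact one_ne_zero h.symm
    refine hni.norm.congr (Filter.Eventually.of_forall fun a => ?_)
    show ‖φ i a * (starRingEnd ℂ) (φ i a)‖ = ‖φ i a‖^2
    rw [norm_mul, RCLike.norm_conj, sq]
  have hψ1 : ∫ a, ‖ψ a‖^2 ∂μ = 1 := by
    have h := horth (Fin.last n) (Fin.last n)
    rw [if_pos rfl] at h
    have h2 : ∫ a, ((‖ψ a‖^2 : ℝ) : ℂ) ∂μ = 1 := by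
      rw [← h]
      refine integral_congr_ae (Filter.Eventually.of_forall fun a => ?_)
      show ((‖ψ a‖^2 : ℝ) : ℂ) = φ (Fin.last n) a * (starRingEnd ℂ) (φ (Fin.last n) a)
      rw [Complex.mul_conj]
      simp [Complex.normSq_eq_norm_sq]
      rfl
    rw [stmt12_integral_ofReal] at h2
    exact_mod_cast h2
  have hψm : Measurable ψ := hmeas _
  -- facts about D and Di
  have hDm : Measurable D := stmt12_det_measurable _ (fun i => hmeas _)
  have hD2 : Integrable (fun x => ‖D x‖^2) (Measure.pi fun _ : Fin n => μ) :=
    stmt12_det_sq_int _ (fun i => hmeas _) (fun i => hφ2 _)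
  have hDim : Measurable Di := hDm.indicator h𝒜m
  have hDi2 : Integrable (fun x => ‖Di x‖^2) (Measure.pi fun _ : Fin n => μ) := by
    refine hD2.mono' ((hDim.norm.pow_const 2).aestronglyMeasurable)
      (Filter.Eventually.of_forall fun x => ?_)
    have hle : ‖Di x‖ ≤ ‖D x‖ := by
      have : Di x = 𝒜.indicator D x := rfl
      rw [this]
      by_cases h : x ∈ 𝒜
      · rw [Set.indicator_of_mem h]
      · rw [Set.indicator_of_notMem h, norm_zero]
        exact norm_nonneg _
    show ‖(‖Di x‖^2 : ℝ)‖ ≤ ‖D x‖^2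
    rw [Real.norm_eq_abs, abs_of_nonneg (by positivity)]
    exact pow_le_pow_left₀ (norm_nonneg _) hle 2
  have hDperm : ∀ (σ : Equiv.Perm (Fin n)) (x : Fin n → E),
      Di (x ∘ σ) = ((Equiv.Perm.sign σ : ℤ) : ℂ) * Di x := by
    intro σ x
    have hmem : x ∘ σ ∈ 𝒜 ↔ x ∈ 𝒜 := by
      constructor
      · intro h
        have := h𝒜sym σ.symm _ h
        have he : (x ∘ σ) ∘ ⇑σ.symm = x := by
          funext i; simp
        rwa [he] at this
      · exact h𝒜sym σ x
    by_cases h : x ∈ 𝒜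
    · rw [hDidef, Set.indicator_of_mem (hmem.mpr h), Set.indicator_of_mem h]
      exact stmt12_det_perm _ x σ
    · rw [hDidef, Set.indicator_of_notMem (fun hc => h (hmem.mp hc)),
        Set.indicator_of_notMem h, mul_zero]
  -- rewrite the summands
  have hsummand : ∀ (k : Fin (n+1)) (y : Fin (n+1) → E),
      Set.indicator 𝒜
        (fun x => (-1 : ℂ) ^ ((k : ℕ) + 1) * φ (Fin.last n) (y k) *
          Matrix.det (Matrix.of fun i j : Fin n => φ (Fin.castSucc i) (x j)))
        (fun i => y (k.succAbove i)) = A k y := by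
    intro k y
    have hAk : A k y = (-1 : ℂ)^((k:ℕ)+1) * ψ (y k) *
        𝒜.indicator D (fun i => y (k.succAbove i)) := rfl
    rw [hAk]
    by_cases h : (fun i => y (k.succAbove i)) ∈ 𝒜
    · rw [Set.indicator_of_mem h, Set.indicator_of_mem h]
    · rw [Set.indicator_of_notMem h, Set.indicator_of_notMem h, mul_zero]
  -- S'
  set S : ℝ := ∫ w : Fin n → E, ‖Di w‖^2 ∂(Measure.pi fun _ : Fin n => μ) with hSdef
  have hSind : S = ∫ x in 𝒜, ‖D x‖^2 ∂(Measure.pi fun _ : Fin n => μ) := by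
    rw [hSdef, ← integral_indicator h𝒜m]
    refine integral_congr_ae (Filter.Eventually.of_forall fun w => ?_)
    show ‖Di w‖^2 = 𝒜.indicator (fun x => ‖D x‖^2) w
    have hDw : Di w = 𝒜.indicator D w := rfl
    rw [hDw]
    rcases Classical.em (w ∈ 𝒜) with h | h
    · rw [Set.indicator_of_mem h, Set.indicator_of_mem h]
    · rw [Set.indicator_of_notMem h, Set.indicator_of_notMem h, norm_zero]
      simp
  -- integrability of products
  have hint : ∀ k l : Fin (n+1), Integrable
      (fun y : Fin (n+1) → E => A k y * (starRingEnd ℂ) (A l y))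
      (Measure.pi fun _ : Fin (n+1) => μ) :=
    fun k l => stmt12_cross_int ψ Di hψm (hφ2 _) hDim hDi2 k l
  -- diagonal value
  have hdiag : ∀ k : Fin (n+1),
      ∫ y : Fin (n+1) → E, A k y * (starRingEnd ℂ) (A k y)
        ∂(Measure.pi fun _ : Fin (n+1) => μ) = (S : ℂ) := by
    intro k
    have h1 : ∫ y : Fin (n+1) → E, A k y * (starRingEnd ℂ) (A k y)
        ∂(Measure.pi fun _ : Fin (n+1) => μ)
        = ∫ y : Fin (n+1) → E, ((‖A k y‖^2 : ℝ) : ℂ) ∂(Measure.pi fun _ : Fin (n+1) => μ) := by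
      refine integral_congr_ae (Filter.Eventually.of_forall fun y => ?_)
      show A k y * (starRingEnd ℂ) (A k y) = ((‖A k y‖^2 : ℝ) : ℂ)
      rw [Complex.mul_conj]
      simp [Complex.normSq_eq_norm_sq]
    rw [h1, stmt12_integral_ofReal, hSdef]
    exact congrArg (fun r : ℝ => (r : ℂ)) (stmt12_diag ψ Di hψ1 k)
  -- off-diagonal value
  obtain ⟨J, hJ0, hoff0⟩ := stmt12_cross_all ψ Di hψm (hφ2 _) hDim hDi2 hDperm
  have hoff : ∀ k l : Fin (n+1), k ≠ l →
      ∫ y : Fin (n+1) → E, A k y * (starRingEnd ℂ) (A l y)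
        ∂(Measure.pi fun _ : Fin (n+1) => μ) = -(J : ℂ) := fun k l h => hoff0 k l h
  -- the key identity
  set I : ℝ := ∫ y : Fin (n+1) → E, ‖∑ k : Fin (n+1), A k y‖^2
      ∂(Measure.pi fun _ : Fin (n+1) => μ) with hIdef
  have key : (I : ℂ) = (n+1 : ℂ) * S + ((n+1 : ℂ) * n) * (-(J:ℂ)) := by
    have e1 : (I : ℂ) = ∫ y : Fin (n+1) → E,
        (∑ k : Fin (n+1), A k y) * (starRingEnd ℂ) (∑ l : Fin (n+1), A l y)
        ∂(Measure.pi fun _ : Fin (n+1) => μ) := by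
      rw [hIdef, ← stmt12_integral_ofReal]
      refine (integral_congr_ae (Filter.Eventually.of_forall fun y => ?_)).symm
      show (∑ k : Fin (n+1), A k y) * (starRingEnd ℂ) (∑ l : Fin (n+1), A l y)
        = ((‖∑ k : Fin (n+1), A k y‖^2 : ℝ) : ℂ)
      rw [Complex.mul_conj]
      simp [Complex.normSq_eq_norm_sq]
    have e2 : ∀ y : Fin (n+1) → E,
        (∑ k : Fin (n+1), A k y) * (starRingEnd ℂ) (∑ l : Fin (n+1), A l y)
        = ∑ k : Fin (n+1), ∑ l : Fin (n+1), A k y * (starRingEnd ℂ) (A l y) := by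
      intro y
      rw [map_sum, Finset.sum_mul_sum]
    have e3 : (I : ℂ) = ∑ k : Fin (n+1), ∑ l : Fin (n+1),
        ∫ y : Fin (n+1) → E, A k y * (starRingEnd ℂ) (A l y)
        ∂(Measure.pi fun _ : Fin (n+1) => μ) := by
      rw [e1]
      rw [integral_congr_ae (Filter.Eventually.of_forall e2)]
      rw [integral_finset_sum _ (fun k _ => integrable_finset_sum _ fun l _ => hint k l)]
      exact Finset.sum_congr rfl fun k _ => integral_finset_sum _ fun l _ => hint k l
    have e4 : ∀ k : Fin (n+1), ∑ l : Fin (n+1),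
        (∫ y : Fin (n+1) → E, A k y * (starRingEnd ℂ) (A l y)
          ∂(Measure.pi fun _ : Fin (n+1) => μ))
        = (S : ℂ) + (n : ℂ) * (-(J:ℂ)) := by
      intro k
      have : ∀ l : Fin (n+1), (∫ y : Fin (n+1) → E, A k y * (starRingEnd ℂ) (A l y)
          ∂(Measure.pi fun _ : Fin (n+1) => μ))
          = (-(J:ℂ)) + (if k = l then ((S:ℂ) - (-(J:ℂ))) else 0) := by
        intro l
        by_cases h : k = l
        · rw [if_pos h, ← h, hdiag k]; ring
        · rw [if_neg h, hoff k l h]; ring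
      rw [Finset.sum_congr rfl fun l _ => this l, Finset.sum_add_distrib,
        Finset.sum_const, Finset.sum_ite_eq, if_pos (Finset.mem_univ k)]
      simp only [Finset.card_univ, Fintype.card_fin, nsmul_eq_mul]
      push_cast
      ring
    rw [e3, Finset.sum_congr rfl fun k _ => e4 k, Finset.sum_const, Finset.card_univ,
      Fintype.card_fin, nsmul_eq_mul]
    push_cast
    ring
  -- extract the real identity
  have keyR : I = (n+1 : ℝ) * S - ((n+1 : ℝ) * n) * J := by
    have := key
    have h2 : (I : ℂ) = (((n+1 : ℝ) * S - ((n+1 : ℝ) * n) * J : ℝ) : ℂ) := by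
      rw [this]; push_cast; ring
    exact_mod_cast h2
  -- finish
  have hLHS : (∫ y : Fin (n + 1) → E,
      ‖∑ k : Fin (n + 1), Set.indicator 𝒜
          (fun x => (-1 : ℂ) ^ ((k : ℕ) + 1) * φ (Fin.last n) (y k) *
            Matrix.det (Matrix.of fun i j : Fin n => φ (Fin.castSucc i) (x j)))
          (fun i => y (k.succAbove i))‖ ^ 2
      ∂(Measure.pi fun _ : Fin (n + 1) => μ)) = I := by
    rw [hIdef]
    refine integral_congr_ae (Filter.Eventually.of_forall fun y => ?_)
    beta_reduce
    rw [Finset.sum_congr rfl fun k _ => hsummand k y]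
  rw [hLHS, ← hSind, keyR]
  have hfac : ((n+1).factorial : ℝ) = (n+1) * n.factorial := by
    exact_mod_cast Nat.factorial_succ n
  have hnfac : (0:ℝ) < n.factorial := by exact_mod_cast n.factorial_pos
  have hn1 : (0:ℝ) < n + 1 := by positivity
  rw [hfac]
  have heq : 1 / ((n+1) * (n.factorial:ℝ)) * ((n+1 : ℝ) * S - ((n+1 : ℝ) * n) * J)
      = 1 / (n.factorial:ℝ) * S - (n * J) / n.factorial := by
    field_simp
  rw [heq]
  have : 0 ≤ (n * J) / (n.factorial : ℝ) := by positivity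
  linarith
end

section
/- Let E be a set with a linear (total) order ≤ and a sigma-algebra, let μ be a probability measure on E, and let h : E → [0, ∞) be a measurable increasing function (x ≤ y implies h(x) ≤ h(y)) with ∫_E h dμ = 1. Then for every measurable increasing subset 𝒜 ⊆ E (meaning: if x ∈ 𝒜 and x ≤ y then y ∈ 𝒜), μ(𝒜) ≤ ∫_𝒜 h dμ. -/
open MeasureTheory

theorem stmt_14 {E : Type*} [MeasurableSpace E] [LinearOrder E]
    (μ : Measure E) [IsProbabilityMeasure μ]
    (h : E → ℝ) (hmeas : Measurable h) (h0 : ∀ x, 0 ≤ h x) (hmono : Monotone h)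
    (h1 : ∫ x, h x ∂μ = 1)
    (𝒜 : Set E) (h𝒜m : MeasurableSet 𝒜)
    (h𝒜inc : ∀ x ∈ 𝒜, ∀ y, x ≤ y → y ∈ 𝒜) :
    (μ 𝒜).toReal ≤ ∫ x in 𝒜, h x ∂μ := by
  have hint : Integrable h μ := by
    by_contra hc
    rw [integral_undef hc] at h1
    norm_num at h1
  by_cases hA : ∀ x ∈ 𝒜, (1 : ℝ) ≤ h x
  · calc (μ 𝒜).toReal = ∫ _ in 𝒜, (1 : ℝ) ∂μ := by
          rw [setIntegral_const, smul_eq_mul, mul_one]; rfl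
      _ ≤ ∫ x in 𝒜, h x ∂μ := by
          apply setIntegral_mono_on (integrable_const 1) hint.integrableOn h𝒜m
          exact fun x hx => hA x hx
  · push_neg at hA
    obtain ⟨x0, hx0A, hx0⟩ := hA
    have hcompl : ∀ y ∈ 𝒜ᶜ, h y ≤ 1 := by
      intro y hy
      have hy0 : y ≤ x0 := by
        by_contra hyx
        exact hy (h𝒜inc x0 hx0A y (le_of_not_ge hyx))
      exact (hmono hy0).trans hx0.le
    have hIc : ∫ x in 𝒜ᶜ, h x ∂μ ≤ (μ 𝒜ᶜ).toReal := by
      calc ∫ x in 𝒜ᶜ, h x ∂μ ≤ ∫ _ in 𝒜ᶜ, (1 : ℝ) ∂μ := by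
            apply setIntegral_mono_on hint.integrableOn (integrable_const 1) h𝒜m.compl
            exact hcompl
        _ = (μ 𝒜ᶜ).toReal := by rw [setIntegral_const, smul_eq_mul, mul_one]; rfl
    have hsplit : ∫ x in 𝒜, h x ∂μ + ∫ x in 𝒜ᶜ, h x ∂μ = 1 := by
      rw [integral_add_compl h𝒜m hint, h1]
    have hmsplit : (μ 𝒜).toReal + (μ 𝒜ᶜ).toReal = 1 := by
      rw [← ENNReal.toReal_add (measure_ne_top μ _) (measure_ne_top μ _),
        measure_add_measure_compl h𝒜m, measure_univ, ENNReal.toReal_one]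
    linarith
end

section
/- Let μ be a finite Borel measure on [0, ∞) such that there exists a function f : [0, ∞) → [0, ∞) with μ(y + A) = f(y)·μ(A) for every y ≥ 0 and every Borel set A ⊆ [0, ∞), where y + A = {y + a : a ∈ A}. Fix n ≥ 1, let X^{∧n} = {x ∈ [0,∞)^n : x_1 < x_2 < ⋯ < x_n}, and let Δ(x) = ∏_{1 ≤ i < j ≤ n} (x_j − x_i). Let H : X^{∧n} → [0, ∞) be a measurable increasing function (increasing with respect to the componentwise partial order on X^{∧n}), and suppose the normalizations ∫_{X^{∧n}} Δ(x)² dμ^{⊗n}(x) = 1 and ∫_{X^{∧n}} Δ(x)² H(x) dμ^{⊗n}(x) = 1 hold, defining probability measures P_1 and P_2 on X^{∧n} by dP_1(x) = Δ(x)² ∏_i dμ(x_i) and dP_2(x) = Δ(x)² H(x) ∏_i dμ(x_i). Then for every measurable increasing set 𝒜 ⊆ X^{∧n} (if x ∈ 𝒜 and y ∈ X^{∧n} satisfies x_i ≤ y_i for all i, then y ∈ 𝒜), P_1(𝒜) ≤ P_2(𝒜). -/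
open MeasureTheory
open scoped ENNReal NNReal

lemma enn_ad_aux (a b C D : ℝ≥0∞) (ha : a ≤ D) (hb : b ≤ D) (hab : a * b ≤ C * D) :
    a + b ≤ C + D := by
  by_cases hC : C = ⊤
  · simp [hC]
  by_cases hD : D = ⊤
  · simp [hD]
  lift C to NNReal using hC
  lift D to NNReal using hD
  lift a to NNReal using ne_top_of_le_ne_top (by exact ENNReal.coe_ne_top) ha
  lift b to NNReal using ne_top_of_le_ne_top (by exact ENNReal.coe_ne_top) hb
  rw [← ENNReal.coe_mul, ← ENNReal.coe_mul, ENNReal.coe_le_coe] at hab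
  rw [ENNReal.coe_le_coe] at ha hb
  rw [← ENNReal.coe_add, ← ENNReal.coe_add, ENNReal.coe_le_coe]
  rw [← NNReal.coe_le_coe] at *
  push_cast at *
  rcases eq_or_lt_of_le (D.coe_nonneg) with h0 | h0
  · nlinarith [a.coe_nonneg, b.coe_nonneg, C.coe_nonneg]
  · nlinarith [mul_nonneg (sub_nonneg.2 ha) (sub_nonneg.2 hb)]

lemma ad_one (μ : Measure ℝ) [SFinite μ] (f g h k : ℝ → ℝ≥0∞)
    (hf : Measurable f) (hg : Measurable g) (hh : Measurable h) (hk : Measurable k)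
    (hc : ∀ x y, f x * g y ≤ h (max x y) * k (min x y)) :
    (∫⁻ x, f x ∂μ) * (∫⁻ x, g x ∂μ) ≤ (∫⁻ x, h x ∂μ) * (∫⁻ x, k x ∂μ) := by
  set ρ := μ.prod μ with hρ
  have hSm : MeasurableSet {p : ℝ × ℝ | p.1 < p.2} :=
    measurableSet_lt measurable_fst measurable_snd
  have hTm : MeasurableSet {p : ℝ × ℝ | p.2 < p.1} :=
    measurableSet_lt measurable_snd measurable_fst
  have hDm : MeasurableSet {p : ℝ × ℝ | p.1 = p.2} :=
    measurableSet_eq_fun measurable_fst measurable_snd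
  -- decomposition of a double integral
  have decomp : ∀ (u v : ℝ → ℝ≥0∞), Measurable u → Measurable v →
      (∫⁻ x, u x ∂μ) * (∫⁻ x, v x ∂μ)
        = (∫⁻ p in {p : ℝ × ℝ | p.1 < p.2}, u p.1 * v p.2 ∂ρ)
          + (∫⁻ p in {p : ℝ × ℝ | p.1 < p.2}, u p.2 * v p.1 ∂ρ)
          + (∫⁻ p in {p : ℝ × ℝ | p.1 = p.2}, u p.1 * v p.2 ∂ρ) := by
    intro u v hu hv
    have hmeas : Measurable fun p : ℝ × ℝ => u p.1 * v p.2 :=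
      (hu.comp measurable_fst).mul (hv.comp measurable_snd)
    have swapres : ρ.restrict {p : ℝ × ℝ | p.2 < p.1}
        = Measure.map Prod.swap (ρ.restrict {p : ℝ × ℝ | p.1 < p.2}) := by
      have e1 : ρ.restrict {p : ℝ × ℝ | p.2 < p.1}
          = (Measure.map Prod.swap ρ).restrict {p : ℝ × ℝ | p.2 < p.1} := by
        rw [hρ, Measure.prod_swap]
      rw [e1, Measure.restrict_map measurable_swap hTm]
      congr 1
    have swapint : (∫⁻ p in {p : ℝ × ℝ | p.2 < p.1}, u p.1 * v p.2 ∂ρ)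
        = ∫⁻ p in {p : ℝ × ℝ | p.1 < p.2}, u p.2 * v p.1 ∂ρ := by
      rw [swapres, lintegral_map hmeas measurable_swap]
      rfl
    have cover : {p : ℝ × ℝ | p.1 < p.2} ∪ ({p : ℝ × ℝ | p.2 < p.1} ∪ {p : ℝ × ℝ | p.1 = p.2})
        = Set.univ := by
      ext p; simp only [Set.mem_union, Set.mem_setOf_eq, Set.mem_univ, iff_true]
      rcases lt_trichotomy p.1 p.2 with hlt | heq | hgt
      · exact Or.inl hlt
      · exact Or.inr (Or.inr heq)
      · exact Or.inr (Or.inl hgt)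
    have disj1 : Disjoint {p : ℝ × ℝ | p.2 < p.1} {p : ℝ × ℝ | p.1 = p.2} := by
      rw [Set.disjoint_left]; intro p hp hp'
      simp only [Set.mem_setOf_eq] at hp hp'
      exact absurd hp' (ne_of_gt hp)
    have disj2 : Disjoint {p : ℝ × ℝ | p.1 < p.2}
        ({p : ℝ × ℝ | p.2 < p.1} ∪ {p : ℝ × ℝ | p.1 = p.2}) := by
      rw [Set.disjoint_left]; intro p hp hp'
      simp only [Set.mem_setOf_eq, Set.mem_union] at hp hp'
      rcases hp' with h' | h'
      · exact absurd hp (not_lt.2 h'.le)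
      · exact absurd h' (ne_of_lt hp)
    calc (∫⁻ x, u x ∂μ) * (∫⁻ x, v x ∂μ)
        = ∫⁻ p, u p.1 * v p.2 ∂ρ := (lintegral_prod_mul hu.aemeasurable hv.aemeasurable).symm
      _ = ∫⁻ p in Set.univ, u p.1 * v p.2 ∂ρ := by rw [Measure.restrict_univ]
      _ = ∫⁻ p in {p : ℝ × ℝ | p.1 < p.2} ∪ ({p : ℝ × ℝ | p.2 < p.1} ∪ {p : ℝ × ℝ | p.1 = p.2}),
            u p.1 * v p.2 ∂ρ := by rw [cover]
      _ = (∫⁻ p in {p : ℝ × ℝ | p.1 < p.2}, u p.1 * v p.2 ∂ρ)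
            + ∫⁻ p in {p : ℝ × ℝ | p.2 < p.1} ∪ {p : ℝ × ℝ | p.1 = p.2}, u p.1 * v p.2 ∂ρ := by
          rw [lintegral_union (hTm.union hDm) disj2]
      _ = _ := by rw [lintegral_union hDm disj1, swapint]; ring
  rw [decomp f g hf hg, decomp h k hh hk]
  have measfg : Measurable fun p : ℝ × ℝ => h p.1 * k p.2 + h p.2 * k p.1 :=
    ((hh.comp measurable_fst).mul (hk.comp measurable_snd)).add
      ((hh.comp measurable_snd).mul (hk.comp measurable_fst))
  have step1 : (∫⁻ p in {p : ℝ × ℝ | p.1 < p.2}, f p.1 * g p.2 ∂ρ)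
      + (∫⁻ p in {p : ℝ × ℝ | p.1 < p.2}, f p.2 * g p.1 ∂ρ)
      ≤ (∫⁻ p in {p : ℝ × ℝ | p.1 < p.2}, h p.1 * k p.2 ∂ρ)
        + (∫⁻ p in {p : ℝ × ℝ | p.1 < p.2}, h p.2 * k p.1 ∂ρ) := by
    have hm1 : Measurable fun p : ℝ × ℝ => f p.1 * g p.2 :=
      (hf.comp measurable_fst).mul (hg.comp measurable_snd)
    have hm2 : Measurable fun p : ℝ × ℝ => h p.1 * k p.2 :=
      (hh.comp measurable_fst).mul (hk.comp measurable_snd)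
    rw [← lintegral_add_left hm1, ← lintegral_add_left hm2]
    refine setLIntegral_mono measfg ?_
    intro p hp
    have hp' : p.1 < p.2 := hp
    have h1 : f p.1 * g p.2 ≤ h p.2 * k p.1 := by
      have := hc p.1 p.2
      rwa [max_eq_right hp'.le, min_eq_left hp'.le] at this
    have h2 : f p.2 * g p.1 ≤ h p.2 * k p.1 := by
      have := hc p.2 p.1
      rwa [max_eq_left hp'.le, min_eq_right hp'.le] at this
    have h3 : (f p.1 * g p.2) * (f p.2 * g p.1) ≤ (h p.1 * k p.2) * (h p.2 * k p.1) := by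
      have ha := hc p.1 p.1
      have hb := hc p.2 p.2
      rw [max_self, min_self] at ha hb
      calc (f p.1 * g p.2) * (f p.2 * g p.1) = (f p.1 * g p.1) * (f p.2 * g p.2) := by ring
        _ ≤ (h p.1 * k p.1) * (h p.2 * k p.2) := mul_le_mul' ha hb
        _ = (h p.1 * k p.2) * (h p.2 * k p.1) := by ring
    exact enn_ad_aux _ _ _ _ h1 h2 h3
  have step2 : (∫⁻ p in {p : ℝ × ℝ | p.1 = p.2}, f p.1 * g p.2 ∂ρ)
      ≤ ∫⁻ p in {p : ℝ × ℝ | p.1 = p.2}, h p.1 * k p.2 ∂ρ := by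
    refine setLIntegral_mono ((hh.comp measurable_fst).mul (hk.comp measurable_snd)) ?_
    intro p hp
    have hp' : p.1 = p.2 := hp
    have := hc p.1 p.2
    rw [← hp', max_self, min_self] at this
    calc f p.1 * g p.2 = f p.1 * g p.1 := by rw [hp']
      _ ≤ h p.1 * k p.1 := this
      _ = h p.1 * k p.2 := by rw [hp']
  exact add_le_add step1 step2

lemma insertNth_sup {n : ℕ} (i : Fin (n + 1)) (a b : ℝ) (u v : Fin n → ℝ) :
    ((i.insertNth a u : Fin (n + 1) → ℝ) ⊔ (i.insertNth b v : Fin (n + 1) → ℝ))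
      = (i.insertNth (a ⊔ b) (u ⊔ v) : Fin (n + 1) → ℝ) := by
  ext j
  refine Fin.succAboveCases i ?_ (fun j => ?_) j
  · simp [Pi.sup_apply, Fin.insertNth_apply_same]
  · simp [Pi.sup_apply, Fin.insertNth_apply_succAbove]

lemma insertNth_inf {n : ℕ} (i : Fin (n + 1)) (a b : ℝ) (u v : Fin n → ℝ) :
    ((i.insertNth a u : Fin (n + 1) → ℝ) ⊓ (i.insertNth b v : Fin (n + 1) → ℝ))
      = (i.insertNth (a ⊓ b) (u ⊓ v) : Fin (n + 1) → ℝ) := by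
  ext j
  refine Fin.succAboveCases i ?_ (fun j => ?_) j
  · simp [Pi.inf_apply, Fin.insertNth_apply_same]
  · simp [Pi.inf_apply, Fin.insertNth_apply_succAbove]

lemma ad_pi (μ : Measure ℝ) [IsFiniteMeasure μ] : ∀ (n : ℕ)
    (f g h k : (Fin n → ℝ) → ℝ≥0∞), Measurable f → Measurable g → Measurable h → Measurable k →
    (∀ x y, f x * g y ≤ h (x ⊔ y) * k (x ⊓ y)) →
    (∫⁻ x, f x ∂(Measure.pi fun _ : Fin n => μ)) * (∫⁻ x, g x ∂(Measure.pi fun _ : Fin n => μ))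
      ≤ (∫⁻ x, h x ∂(Measure.pi fun _ : Fin n => μ))
        * (∫⁻ x, k x ∂(Measure.pi fun _ : Fin n => μ)) := by
  intro n
  induction n with
  | zero =>
    intro f g h k hf hg hh hk hc
    rw [Measure.pi_of_empty (fun _ : Fin 0 => μ) (fun i => i.elim0)]
    rw [lintegral_dirac' _ hf, lintegral_dirac' _ hg, lintegral_dirac' _ hh,
      lintegral_dirac' _ hk]
    have := hc (fun i => i.elim0) (fun i => i.elim0)
    simpa using this
  | succ m ih =>
    intro f g h k hf hg hh hk hc
    set e := MeasurableEquiv.piFinSuccAbove (fun _ : Fin (m + 1) => ℝ) 0 with he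
    have hmp := measurePreserving_piFinSuccAbove (fun _ : Fin (m + 1) => μ) 0
    set ν := Measure.pi fun _ : Fin m => μ with hν
    have hes : ∀ (a : ℝ) (w : Fin m → ℝ), e.symm (a, w) = (0 : Fin (m + 1)).insertNth a w :=
      fun a w => rfl
    have key : ∀ (u : (Fin (m + 1) → ℝ) → ℝ≥0∞), Measurable u →
        (∫⁻ x, u x ∂(Measure.pi fun _ : Fin (m + 1) => μ))
          = ∫⁻ a, (∫⁻ w, u (e.symm (a, w)) ∂ν) ∂μ := by
      intro u hu
      have h1 : (Measure.pi fun _ : Fin (m + 1) => μ) = Measure.map e.symm (μ.prod ν) :=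
        ((MeasurePreserving.symm e hmp).map_eq).symm
      rw [h1, MeasureTheory.lintegral_map_equiv]
      rw [MeasureTheory.lintegral_prod (fun z => u (e.symm z)) ((hu.comp e.symm.measurable).aemeasurable)]
    have hmF : ∀ (u : (Fin (m + 1) → ℝ) → ℝ≥0∞), Measurable u →
        Measurable fun a : ℝ => ∫⁻ w, u (e.symm (a, w)) ∂ν := by
      intro u hu
      apply Measurable.lintegral_prod_right (f := fun a w => u (e.symm (a, w)))
      exact hu.comp e.symm.measurable
    rw [key f hf, key g hg, key h hh, key k hk]
    apply ad_one μ _ _ _ _ (hmF f hf) (hmF g hg) (hmF h hh) (hmF k hk)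
    intro a b
    apply ih (fun w => f (e.symm (a, w))) (fun w => g (e.symm (b, w)))
      (fun w => h (e.symm (max a b, w))) (fun w => k (e.symm (min a b, w)))
      (hf.comp (e.symm.measurable.comp (measurable_prodMk_left)))
      (hg.comp (e.symm.measurable.comp (measurable_prodMk_left)))
      (hh.comp (e.symm.measurable.comp (measurable_prodMk_left)))
      (hk.comp (e.symm.measurable.comp (measurable_prodMk_left)))
    intro u v
    have := hc (e.symm (a, u)) (e.symm (b, v))
    rw [hes a u, hes b v, insertNth_sup, insertNth_inf] at this
    rw [hes (max a b) (u ⊔ v), hes (min a b) (u ⊓ v)]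
    have hmax : a ⊔ b = max a b := rfl
    have hmin : a ⊓ b = min a b := rfl
    rwa [hmax, hmin] at this

lemma quad_ineq (p q r s : ℝ) (hpq : p ≤ q) (hrs : r ≤ s) :
    (q - p) * (s - r) ≤ (max q s - max p r) * (min q s - min p r) := by
  rcases le_total p r with h1 | h1 <;> rcases le_total q s with h2 | h2
  · rw [max_eq_right h1, max_eq_right h2, min_eq_left h1, min_eq_left h2]; nlinarith
  · rw [max_eq_right h1, max_eq_left h2, min_eq_left h1, min_eq_right h2]; nlinarith
  · rw [max_eq_left h1, max_eq_right h2, min_eq_right h1, min_eq_left h2]; nlinarith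
  · rw [max_eq_left h1, max_eq_left h2, min_eq_right h1, min_eq_right h2]

lemma vandermonde_supermod {n : ℕ} (Δ : (Fin n → ℝ) → ℝ)
    (hΔ : ∀ x, Δ x = ∏ i : Fin n, ∏ j ∈ Finset.Ioi i, (x j - x i))
    (x y : Fin n → ℝ) (hx : Monotone x) (hy : Monotone y) :
    (Δ x) ^ 2 * (Δ y) ^ 2 ≤ (Δ (x ⊔ y)) ^ 2 * (Δ (x ⊓ y)) ^ 2 := by
  have expand : ∀ z w : Fin n → ℝ, (Δ z) ^ 2 * (Δ w) ^ 2
      = ∏ i : Fin n, ∏ j ∈ Finset.Ioi i, ((z j - z i) * (w j - w i)) ^ 2 := by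
    intro z w
    rw [hΔ, hΔ]
    rw [← Finset.prod_pow, ← Finset.prod_pow, ← Finset.prod_mul_distrib]
    refine Finset.prod_congr rfl fun i _ => ?_
    rw [← Finset.prod_pow, ← Finset.prod_pow, ← Finset.prod_mul_distrib]
    refine Finset.prod_congr rfl fun j _ => ?_
    ring
  rw [expand x y, expand (x ⊔ y) (x ⊓ y)]
  refine Finset.prod_le_prod (fun i _ => Finset.prod_nonneg fun j _ => sq_nonneg _)
    (fun i _ => ?_)
  refine Finset.prod_le_prod (fun j _ => sq_nonneg _) (fun j hj => ?_)
  have hij : i < j := Finset.mem_Ioi.1 hj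
  have h1 : 0 ≤ (x j - x i) * (y j - y i) :=
    mul_nonneg (sub_nonneg.2 (hx hij.le)) (sub_nonneg.2 (hy hij.le))
  have h2 : (x j - x i) * (y j - y i)
      ≤ ((x ⊔ y) j - (x ⊔ y) i) * ((x ⊓ y) j - (x ⊓ y) i) := by
    have := quad_ineq (x i) (x j) (y i) (y j) (hx hij.le) (hy hij.le)
    simpa [Pi.sup_apply, Pi.inf_apply] using this
  exact pow_le_pow_left₀ h1 h2 2

theorem stmt_15 (μ : Measure ℝ) [IsFiniteMeasure μ] (hsupp : μ (Set.Iio 0) = 0)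
    (f : ℝ → ℝ) (hf0 : ∀ y, 0 ≤ f y)
    (htrans : ∀ y : ℝ, 0 ≤ y → ∀ A : Set ℝ, MeasurableSet A → A ⊆ Set.Ici 0 →
      μ ((fun a => y + a) '' A) = ENNReal.ofReal (f y) * μ A)
    (n : ℕ) (hn : 1 ≤ n)
    (W : Set (Fin n → ℝ)) (hW : W = {x | (∀ i, 0 ≤ x i) ∧ StrictMono x})
    (Δ : (Fin n → ℝ) → ℝ)
    (hΔ : ∀ x, Δ x = ∏ i : Fin n, ∏ j ∈ Finset.Ioi i, (x j - x i))
    (H : (Fin n → ℝ) → ℝ) (hHmeas : Measurable H) (hH0 : ∀ x, 0 ≤ H x)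
    (hHmono : ∀ x ∈ W, ∀ y ∈ W, (∀ i, x i ≤ y i) → H x ≤ H y)
    (hnorm1 : ∫ x in W, (Δ x) ^ 2 ∂(Measure.pi fun _ : Fin n => μ) = 1)
    (hnorm2 : ∫ x in W, (Δ x) ^ 2 * H x ∂(Measure.pi fun _ : Fin n => μ) = 1)
    (𝒜 : Set (Fin n → ℝ)) (h𝒜m : MeasurableSet 𝒜) (h𝒜W : 𝒜 ⊆ W)
    (h𝒜inc : ∀ x ∈ 𝒜, ∀ y ∈ W, (∀ i, x i ≤ y i) → y ∈ 𝒜) :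
    ∫ x in 𝒜, (Δ x) ^ 2 ∂(Measure.pi fun _ : Fin n => μ)
      ≤ ∫ x in 𝒜, (Δ x) ^ 2 * H x ∂(Measure.pi fun _ : Fin n => μ) := by
  set ρ := Measure.pi fun _ : Fin n => μ with hρ
  -- measurability of W
  have hWm : MeasurableSet W := by
    have hWeq : W = (⋂ i, {x : Fin n → ℝ | 0 ≤ x i})
        ∩ ⋂ i, ⋂ j, ⋂ (_ : i < j), {x : Fin n → ℝ | x i < x j} := by
      rw [hW]; ext x
      simp only [Set.mem_inter_iff, Set.mem_iInter, Set.mem_setOf_eq]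
      constructor
      · rintro ⟨h1, h2⟩; exact ⟨h1, fun i j hij => h2 hij⟩
      · rintro ⟨h1, h2⟩; exact ⟨h1, fun i j hij => h2 i j hij⟩
    rw [hWeq]
    exact (MeasurableSet.iInter fun i =>
        measurableSet_le measurable_const (measurable_pi_apply i)).inter
      (MeasurableSet.iInter fun i => MeasurableSet.iInter fun j =>
        MeasurableSet.iInter fun _ => measurableSet_lt (measurable_pi_apply i)
          (measurable_pi_apply j))
  have hΔm : Measurable Δ := by
    have : Δ = fun x => ∏ i : Fin n, ∏ j ∈ Finset.Ioi i, (x j - x i) := funext hΔ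
    rw [this]
    exact Finset.measurable_prod _ fun i _ => Finset.measurable_prod _ fun j _ =>
      (measurable_pi_apply j).sub (measurable_pi_apply i)
  have hm1 : Measurable fun x => ENNReal.ofReal ((Δ x) ^ 2) :=
    ENNReal.measurable_ofReal.comp (hΔm.pow_const 2)
  have hm2 : Measurable fun x => ENNReal.ofReal ((Δ x) ^ 2 * H x) :=
    ENNReal.measurable_ofReal.comp ((hΔm.pow_const 2).mul hHmeas)
  -- conversion to lintegrals
  have conv1 : ∀ (S : Set (Fin n → ℝ)),
      ∫ x in S, (Δ x) ^ 2 ∂ρ = (∫⁻ x in S, ENNReal.ofReal ((Δ x) ^ 2) ∂ρ).toReal := by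
    intro S
    rw [integral_eq_lintegral_of_nonneg_ae (ae_of_all _ fun x => sq_nonneg (Δ x))
      (hΔm.pow_const 2).aestronglyMeasurable]
  have conv2 : ∀ (S : Set (Fin n → ℝ)),
      ∫ x in S, (Δ x) ^ 2 * H x ∂ρ
        = (∫⁻ x in S, ENNReal.ofReal ((Δ x) ^ 2 * H x) ∂ρ).toReal := by
    intro S
    rw [integral_eq_lintegral_of_nonneg_ae
      (ae_of_all _ fun x => mul_nonneg (sq_nonneg (Δ x)) (hH0 x))
      ((hΔm.pow_const 2).mul hHmeas).aestronglyMeasurable]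
  have hL1 : ∫⁻ x in W, ENNReal.ofReal ((Δ x) ^ 2) ∂ρ = 1 := by
    rw [conv1 W] at hnorm1
    by_cases htop : ∫⁻ x in W, ENNReal.ofReal ((Δ x) ^ 2) ∂ρ = ⊤
    · rw [htop] at hnorm1; simp at hnorm1
    · have := ENNReal.ofReal_toReal htop
      rw [hnorm1] at this; rw [← this]; simp
  have hL2 : ∫⁻ x in W, ENNReal.ofReal ((Δ x) ^ 2 * H x) ∂ρ = 1 := by
    rw [conv2 W] at hnorm2
    by_cases htop : ∫⁻ x in W, ENNReal.ofReal ((Δ x) ^ 2 * H x) ∂ρ = ⊤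
    · rw [htop] at hnorm2; simp at hnorm2
    · have := ENNReal.ofReal_toReal htop
      rw [hnorm2] at this; rw [← this]; simp
  -- lattice structure of W and 𝒜
  have hWsup : ∀ x ∈ W, ∀ y ∈ W, x ⊔ y ∈ W := by
    intro x hx y hy
    rw [hW] at hx hy ⊢
    exact ⟨fun i => le_trans (hx.1 i) le_sup_left,
      fun i j hij => max_lt_max (hx.2 hij) (hy.2 hij)⟩
  have hWinf : ∀ x ∈ W, ∀ y ∈ W, x ⊓ y ∈ W := by
    intro x hx y hy
    rw [hW] at hx hy ⊢
    exact ⟨fun i => le_inf (hx.1 i) (hy.1 i),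
      fun i j hij => min_lt_min (hx.2 hij) (hy.2 hij)⟩
  -- the four functions
  set F := 𝒜.indicator (fun x => ENNReal.ofReal ((Δ x) ^ 2)) with hF
  set G := W.indicator (fun x => ENNReal.ofReal ((Δ x) ^ 2 * H x)) with hG
  set Hh := 𝒜.indicator (fun x => ENNReal.ofReal ((Δ x) ^ 2 * H x)) with hHh
  set K := W.indicator (fun x => ENNReal.ofReal ((Δ x) ^ 2)) with hK
  have hcond : ∀ x y, F x * G y ≤ Hh (x ⊔ y) * K (x ⊓ y) := by
    intro x y
    by_cases hx𝒜 : x ∈ 𝒜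
    · by_cases hyW : y ∈ W
      · have hxW : x ∈ W := h𝒜W hx𝒜
        have hsupW : x ⊔ y ∈ W := hWsup x hxW y hyW
        have hinfW : x ⊓ y ∈ W := hWinf x hxW y hyW
        have hsup𝒜 : x ⊔ y ∈ 𝒜 := h𝒜inc x hx𝒜 (x ⊔ y) hsupW (fun i => le_sup_left)
        rw [hF, hG, hHh, hK, Set.indicator_of_mem hx𝒜, Set.indicator_of_mem hyW,
          Set.indicator_of_mem hsup𝒜, Set.indicator_of_mem hinfW]
        rw [← ENNReal.ofReal_mul (sq_nonneg _), ← ENNReal.ofReal_mul (mul_nonneg (sq_nonneg _) (hH0 _))]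
        apply ENNReal.ofReal_le_ofReal
        have hxM : Monotone x := by rw [hW] at hxW; exact hxW.2.monotone
        have hyM : Monotone y := by rw [hW] at hyW; exact hyW.2.monotone
        have hd := vandermonde_supermod Δ hΔ x y hxM hyM
        have hHy : H y ≤ H (x ⊔ y) := hHmono y hyW (x ⊔ y) hsupW (fun i => le_sup_right)
        have hcd : (0:ℝ) ≤ (Δ (x ⊔ y)) ^ 2 * (Δ (x ⊓ y)) ^ 2 :=
          mul_nonneg (sq_nonneg _) (sq_nonneg _)
        calc (Δ x) ^ 2 * ((Δ y) ^ 2 * H y) = ((Δ x) ^ 2 * (Δ y) ^ 2) * H y := by ring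
          _ ≤ ((Δ (x ⊔ y)) ^ 2 * (Δ (x ⊓ y)) ^ 2) * H y :=
              mul_le_mul_of_nonneg_right hd (hH0 y)
          _ ≤ ((Δ (x ⊔ y)) ^ 2 * (Δ (x ⊓ y)) ^ 2) * H (x ⊔ y) :=
              mul_le_mul_of_nonneg_left hHy hcd
          _ = (Δ (x ⊔ y)) ^ 2 * H (x ⊔ y) * (Δ (x ⊓ y)) ^ 2 := by ring
      · rw [hG, Set.indicator_of_notMem hyW, mul_zero]; exact zero_le
    · rw [hF, Set.indicator_of_notMem hx𝒜, zero_mul]; exact zero_le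
  have had := ad_pi μ n F G Hh K (hm1.indicator h𝒜m) (hm2.indicator hWm)
    (hm2.indicator h𝒜m) (hm1.indicator hWm) hcond
  rw [hF, hG, hHh, hK] at had
  rw [lintegral_indicator h𝒜m _, lintegral_indicator hWm _, lintegral_indicator h𝒜m _,
    lintegral_indicator hWm _] at had
  rw [← hρ] at had
  rw [hL1, hL2, mul_one, mul_one] at had
  -- conclude
  have hA2le : ∫⁻ x in 𝒜, ENNReal.ofReal ((Δ x) ^ 2 * H x) ∂ρ ≤ 1 := by
    rw [← hL2]; exact lintegral_mono_set h𝒜W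
  have hA1le : ∫⁻ x in 𝒜, ENNReal.ofReal ((Δ x) ^ 2) ∂ρ ≤ 1 := by
    rw [← hL1]; exact lintegral_mono_set h𝒜W
  rw [conv1 𝒜, conv2 𝒜]
  exact ENNReal.toReal_le_toReal (ne_top_of_le_ne_top ENNReal.one_ne_top hA1le)
    (ne_top_of_le_ne_top ENNReal.one_ne_top hA2le) |>.2 had
end
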